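/- arXiv:2307.01049 — 3 statements merged into one kernel-verified Lean document; each statement's English description precedes it below -/
import Mathlib

section
/- Exact Neyman orthogonality of the efficient score (case d ≠ d'). Define μ_{d,d',a}(t₁,t₂,t₃,t₄) := 1{D=d}·((1−t₂)/((1−t₁)t₂))·(Y_a − t₃) + (1{D=d'}/(1−t₁))·(t₃ − t₄) + t₄, and let the truth be t⁰ := (g₁⁰(X), g₂⁰(M,X), g₃⁰(d,M,X), g₄⁰(d',X)) where g₁⁰(X) := P(D=d|X), g₂⁰(M,X) := P(D=d|M,X), g₃⁰(D,M,X) := P(Y≤a|D,M,X), g₄⁰(D,X) := E[g₃⁰(d,M,X)|D,X]. Then for any bounded measurable perturbation functions h₁(X), h₂(M,X), h₃(M,X), h₄(X) taking values such that t⁰ + r·(h − t⁰) stays in the overlap bands for small r, the Gateaux derivative of the mean score at the truth vanishes: d/dr E[ μ_{d,d',a}(t⁰ + r(h − t⁰)) ] |_{r=0} = 0; equivalently, each of the four directional derivative expectations E[∂_{t_i}μ_{d,d',a}(t⁰)·(h_i − t_i⁰)] equals 0 for i = 1,2,3,4. -/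
open MeasureTheory

private lemma prod_le_prod'' {a b c d : ℝ} (ha : 0 ≤ a) (hb : 0 ≤ b) (h1 : a ≤ c)
    (h2 : b ≤ d) : a*b ≤ c*d :=
  mul_le_mul h1 h2 hb (ha.trans h1)

private lemma abs_mul_le' {a b A B : ℝ} (ha : |a| ≤ A) (hb : |b| ≤ B) : |a*b| ≤ A*B := by
  rw [abs_mul]
  exact mul_le_mul ha hb (abs_nonneg _) ((abs_nonneg a).trans ha)

private lemma abs_div_le' {x d X E : ℝ} (hx : |x| ≤ X) (hE : 0 < E) (hd : E ≤ d) :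
    |x/d| ≤ X/E := by
  rw [abs_div, abs_of_pos (hE.trans_le hd)]
  exact div_le_div₀ ((abs_nonneg x).trans hx) hx hE hd

private lemma score_hasDerivAt (p q t s u₁ u₂ u₃ u₄ y cd ce : ℝ) {r : ℝ}
    (hP : 1 - (p + r*u₁) ≠ 0) (hQ : q + r*u₂ ≠ 0) :
    HasDerivAt (fun r : ℝ =>
      cd * ((1 - (q + r*u₂))/((1 - (p + r*u₁)) * (q + r*u₂))) * (y - (t + r*u₃))
      + ce / (1 - (p + r*u₁)) * ((t + r*u₃) - (s + r*u₄)) + (s + r*u₄))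
    (cd * (u₁*(1-(q + r*u₂))/((1 - (p + r*u₁))^2*(q + r*u₂))
            - u₂/((1 - (p + r*u₁))*(q + r*u₂)^2)) * (y - (t + r*u₃))
      + cd * ((1-(q + r*u₂))/((1 - (p + r*u₁))*(q + r*u₂))) * -u₃
      + (ce*u₁/(1 - (p + r*u₁))^2*((t + r*u₃)-(s + r*u₄))
          + ce/(1 - (p + r*u₁))*(u₃-u₄))
      + u₄) r := by
  have hPd : HasDerivAt (fun r : ℝ => p + r*u₁) u₁ r := (hasDerivAt_mul_const u₁).const_add p
  have hQd : HasDerivAt (fun r : ℝ => q + r*u₂) u₂ r := (hasDerivAt_mul_const u₂).const_add q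
  have hTd : HasDerivAt (fun r : ℝ => t + r*u₃) u₃ r := (hasDerivAt_mul_const u₃).const_add t
  have hSd : HasDerivAt (fun r : ℝ => s + r*u₄) u₄ r := (hasDerivAt_mul_const u₄).const_add s
  have hNd : HasDerivAt (fun r : ℝ => 1 - (q + r*u₂)) (-u₂) r := hQd.const_sub 1
  have h1Pd : HasDerivAt (fun r : ℝ => 1 - (p + r*u₁)) (-u₁) r := hPd.const_sub 1
  have hDd := h1Pd.mul hQd
  have hfrac := hNd.div hDd (mul_ne_zero hP hQ)
  have hfrac' : HasDerivAt
      (fun r : ℝ => (1 - (q + r*u₂))/((1 - (p + r*u₁)) * (q + r*u₂)))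
      (u₁*(1-(q + r*u₂))/((1 - (p + r*u₁))^2*(q + r*u₂))
        - u₂/((1 - (p + r*u₁))*(q + r*u₂)^2)) r := by
    refine hfrac.congr_deriv ?_
    simp only [Pi.mul_apply]
    field_simp
    ring
  have hyT : HasDerivAt (fun r : ℝ => y - (t + r*u₃)) (-u₃) r := hTd.const_sub y
  have hTS := hTd.sub hSd
  have hterm1 := (hfrac'.const_mul cd).mul hyT
  have hcediv : HasDerivAt (fun r : ℝ => ce / (1 - (p + r*u₁)))
      (ce*u₁/(1 - (p + r*u₁))^2) r := by
    refine ((hasDerivAt_const r ce).div h1Pd hP).congr_deriv ?_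
    ring
  have hterm2 := hcediv.mul hTS
  exact (hterm1.add hterm2).add hSd

private lemma score_deriv_bound (e₁ e₂ A B T S u₁ u₂ u₃ u₄ y cd ce : ℝ)
    (he₁ : 0 < e₁) (he₂ : 0 < e₂) (he₁' : e₁ ≤ 1) (he₂' : e₂ ≤ 1)
    (hA : e₁ ≤ A) (hA' : A ≤ 1) (hB : e₂ ≤ B) (hB' : B ≤ 1)
    (hyT : |y - T| ≤ 3) (hTS : |T - S| ≤ 4)
    (hu₁ : |u₁| ≤ 1) (hu₂ : |u₂| ≤ 1) (hu₃ : |u₃| ≤ 1) (hu₄ : |u₄| ≤ 1)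
    (hcd : |cd| ≤ 1) (hce : |ce| ≤ 1) :
    |cd * (u₁*(1-B)/(A^2*B) - u₂/(A*B^2)) * (y - T)
      + cd * ((1-B)/(A*B)) * -u₃
      + (ce*u₁/A^2*(T-S) + ce/A*(u₃-u₄))
      + u₄| ≤ 14/(e₁^2*e₂^2) := by
  set E := e₁^2*e₂^2 with hE
  have hE0 : 0 < E := by positivity
  have he₁sq : e₁^2 ≤ 1 := pow_le_one₀ he₁.le he₁'
  have he₂sq : e₂^2 ≤ 1 := pow_le_one₀ he₂.le he₂'
  have he₁2 : e₁^2 ≤ e₁ := by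
    rw [pow_two]; simpa using mul_le_of_le_one_left he₁.le he₁'
  have he₂2 : e₂^2 ≤ e₂ := by
    rw [pow_two]; simpa using mul_le_of_le_one_left he₂.le he₂'
  have hA2 : e₁^2 ≤ A^2 := pow_le_pow_left₀ he₁.le hA 2
  have hB2 : e₂^2 ≤ B^2 := pow_le_pow_left₀ he₂.le hB 2
  have hE1 : E ≤ 1 := by
    calc E = e₁^2*e₂^2 := hE
      _ ≤ 1*1 := prod_le_prod'' (sq_nonneg _) (sq_nonneg _) he₁sq he₂sq
      _ = 1 := mul_one 1
  have h1B : |1 - B| ≤ 1 := by rw [abs_le]; constructor <;> nlinarith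
  have hden1 : E ≤ A^2*B :=
    prod_le_prod'' (sq_nonneg _) (sq_nonneg _) hA2 (he₂2.trans hB)
  have hden2 : E ≤ A*B^2 :=
    prod_le_prod'' (sq_nonneg _) (sq_nonneg _) (he₁2.trans hA) hB2
  have hden3 : E ≤ A*B :=
    prod_le_prod'' (sq_nonneg _) (sq_nonneg _) (he₁2.trans hA) (he₂2.trans hB)
  have hden4 : E ≤ A^2 := by
    have := prod_le_prod'' (sq_nonneg e₁) (sq_nonneg e₂) hA2 he₂sq
    simpa using this
  have hden5 : E ≤ A := by
    have := prod_le_prod'' (sq_nonneg e₁) (sq_nonneg e₂) (he₁2.trans hA) he₂sq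
    simpa using this
  have b1 : |u₁*(1-B)/(A^2*B)| ≤ 1/E :=
    abs_div_le' (by simpa using abs_mul_le' hu₁ h1B) hE0 hden1
  have b2 : |u₂/(A*B^2)| ≤ 1/E := abs_div_le' hu₂ hE0 hden2
  have bdiff : |u₁*(1-B)/(A^2*B) - u₂/(A*B^2)| ≤ 2/E := by
    have := (abs_sub _ _).trans (add_le_add b1 b2)
    calc |u₁*(1-B)/(A^2*B) - u₂/(A*B^2)| ≤ |u₁*(1-B)/(A^2*B)| + |u₂/(A*B^2)| := abs_sub _ _
      _ ≤ 1/E + 1/E := add_le_add b1 b2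
      _ = 2/E := by ring
  have ht1 : |cd * (u₁*(1-B)/(A^2*B) - u₂/(A*B^2)) * (y - T)| ≤ 6/E := by
    have := abs_mul_le' (abs_mul_le' hcd bdiff) hyT
    calc |cd * (u₁*(1-B)/(A^2*B) - u₂/(A*B^2)) * (y - T)| ≤ 1 * (2/E) * 3 := this
      _ = 6/E := by ring
  have ht2 : |cd * ((1-B)/(A*B)) * -u₃| ≤ 1/E := by
    have hb : |(1-B)/(A*B)| ≤ 1/E := abs_div_le' h1B hE0 hden3
    have := abs_mul_le' (abs_mul_le' hcd hb) (show |(-u₃)| ≤ 1 by simpa using hu₃)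
    calc |cd * ((1-B)/(A*B)) * -u₃| ≤ 1 * (1/E) * 1 := this
      _ = 1/E := by ring
  have ht3 : |ce*u₁/A^2*(T-S)| ≤ 4/E := by
    have hb : |ce*u₁/A^2| ≤ 1/E := abs_div_le' (by simpa using abs_mul_le' hce hu₁) hE0 hden4
    have := abs_mul_le' hb hTS
    calc |ce*u₁/A^2*(T-S)| ≤ 1/E * 4 := this
      _ = 4/E := by ring
  have ht4 : |ce/A*(u₃-u₄)| ≤ 2/E := by
    have hb : |ce/A| ≤ 1/E := abs_div_le' hce hE0 hden5
    have hd : |u₃ - u₄| ≤ 2 := (abs_sub _ _).trans (by linarith)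
    have := abs_mul_le' hb hd
    calc |ce/A*(u₃-u₄)| ≤ 1/E * 2 := this
      _ = 2/E := by ring
  have ht5 : |u₄| ≤ 1/E := hu₄.trans (by
    rw [le_div_iff₀ hE0]; nlinarith)
  have habs : ∀ x y : ℝ, |x + y| ≤ |x| + |y| := fun x y => abs_add_le x y
  have h14 : (14:ℝ)/(e₁^2*e₂^2) = 6/E + 1/E + (4/E + 2/E) + 1/E := by
    rw [← hE]; ring
  rw [h14]
  calc |cd * (u₁*(1-B)/(A^2*B) - u₂/(A*B^2)) * (y - T) + cd * ((1-B)/(A*B)) * -u₃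
        + (ce*u₁/A^2*(T-S) + ce/A*(u₃-u₄)) + u₄|
      ≤ |cd * (u₁*(1-B)/(A^2*B) - u₂/(A*B^2)) * (y - T) + cd * ((1-B)/(A*B)) * -u₃
        + (ce*u₁/A^2*(T-S) + ce/A*(u₃-u₄))| + |u₄| := habs _ _
    _ ≤ (|cd * (u₁*(1-B)/(A^2*B) - u₂/(A*B^2)) * (y - T) + cd * ((1-B)/(A*B)) * -u₃|
        + |ce*u₁/A^2*(T-S) + ce/A*(u₃-u₄)|) + |u₄| := by gcongr; exact habs _ _
    _ ≤ ((|cd * (u₁*(1-B)/(A^2*B) - u₂/(A*B^2)) * (y - T)| + |cd * ((1-B)/(A*B)) * -u₃|)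
        + (|ce*u₁/A^2*(T-S)| + |ce/A*(u₃-u₄)|)) + |u₄| := by
          gcongr <;> exact habs _ _
    _ ≤ ((6/E + 1/E) + (4/E + 2/E)) + 1/E := by
          gcongr
    _ = 6/E + 1/E + (4/E + 2/E) + 1/E := by ring

private lemma score_val_bound (e₁ e₂ A B T S y cd ce : ℝ)
    (he₁ : 0 < e₁) (he₂ : 0 < e₂) (he₁' : e₁ ≤ 1) (he₂' : e₂ ≤ 1)
    (hA : e₁ ≤ A) (hA' : A ≤ 1) (hB : e₂ ≤ B) (hB' : B ≤ 1)
    (hyT : |y - T| ≤ 3) (hTS : |T - S| ≤ 4) (hS : |S| ≤ 2)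
    (hcd : |cd| ≤ 1) (hce : |ce| ≤ 1) :
    |cd * ((1 - B)/(A * B)) * (y - T) + ce / A * (T - S) + S| ≤ 9/(e₁*e₂) := by
  set E := e₁*e₂ with hE
  have hE0 : 0 < E := by positivity
  have hE1 : E ≤ 1 := mul_le_one₀ he₁' he₂.le he₂'
  have h1B : |1 - B| ≤ 1 := by rw [abs_le]; constructor <;> nlinarith
  have hden3 : E ≤ A*B := prod_le_prod'' he₁.le he₂.le hA hB
  have hden5 : E ≤ A := (mul_le_of_le_one_right he₁.le he₂').trans hA

  have ht1 : |cd * ((1-B)/(A*B)) * (y - T)| ≤ 3/E := by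
    have hb : |(1-B)/(A*B)| ≤ 1/E := abs_div_le' h1B hE0 hden3
    have := abs_mul_le' (abs_mul_le' hcd hb) hyT
    calc |cd * ((1-B)/(A*B)) * (y - T)| ≤ 1 * (1/E) * 3 := this
      _ = 3/E := by ring
  have ht2 : |ce/A*(T-S)| ≤ 4/E := by
    have hb : |ce/A| ≤ 1/E := abs_div_le' hce hE0 hden5
    have := abs_mul_le' hb hTS
    calc |ce/A*(T-S)| ≤ 1/E * 4 := this
      _ = 4/E := by ring
  have ht3 : |S| ≤ 2/E := hS.trans (by rw [le_div_iff₀ hE0]; nlinarith)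
  have h9 : (9:ℝ)/(e₁*e₂) = 3/E + 4/E + 2/E := by rw [← hE]; ring
  rw [h9]
  calc |cd * ((1-B)/(A*B)) * (y - T) + ce/A*(T-S) + S|
      ≤ |cd * ((1-B)/(A*B)) * (y - T) + ce/A*(T-S)| + |S| := abs_add_le _ _
    _ ≤ (|cd * ((1-B)/(A*B)) * (y - T)| + |ce/A*(T-S)|) + |S| := by
        gcongr; exact abs_add_le _ _
    _ ≤ (3/E + 4/E) + 2/E := by gcongr
    _ = 3/E + 4/E + 2/E := by ring

private lemma integrable_of_bdd {Ω : Type*} {m0 : MeasurableSpace Ω} (P : Measure Ω)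
    [IsFiniteMeasure P] {f : Ω → ℝ} {C : ℝ}
    (hf : AEStronglyMeasurable f P) (hb : ∀ ω, |f ω| ≤ C) : Integrable f P :=
  ⟨hf, HasFiniteIntegral.of_bounded (C := C)
    (ae_of_all _ fun ω => by simpa [Real.norm_eq_abs] using hb ω)⟩

private lemma ortho {Ω : Type*} {m0 : MeasurableSpace Ω} (P : Measure Ω) [IsProbabilityMeasure P]
    {m : MeasurableSpace Ω} (hm : m ≤ m0) {f c v : Ω → ℝ} {Cf Cc : ℝ}
    (hfm : Measurable[m0] f) (hfb : ∀ ω, |f ω| ≤ Cf)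
    (hcm : StronglyMeasurable[m] c) (hcb : ∀ ω, |c ω| ≤ Cc)
    (hv : v =ᵐ[P] P[f|m]) :
    ∫ ω, c ω * (f ω - v ω) ∂P = 0 := by
  have hfi : Integrable f P := integrable_of_bdd P (Measurable.aestronglyMeasurable (μ := P) hfm) hfb
  have hcae : AEStronglyMeasurable[m0] c P := (hcm.mono hm).aestronglyMeasurable
  have hcbound : ∃ C, ∀ ω, ‖c ω‖ ≤ C := ⟨Cc, fun ω => by simpa [Real.norm_eq_abs] using hcb ω⟩
  have hcfi : Integrable (c * f) P := hfi.bdd_mul hcae (ae_of_all _ hcbound.choose_spec)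
  have hcE : Integrable (fun ω => c ω * (P[f|m]) ω) P :=
    integrable_condExp.bdd_mul hcae (ae_of_all _ hcbound.choose_spec)
  have h2 : P[c * f|m] =ᵐ[P] c * P[f|m] := condExp_mul_of_stronglyMeasurable_left hcm hcfi hfi
  have key : ∫ ω, c ω * (P[f|m]) ω ∂P = ∫ ω, c ω * f ω ∂P := by
    have h3 : ∫ ω, c ω * (P[f|m]) ω ∂P = ∫ ω, (P[c * f|m]) ω ∂P :=
      integral_congr_ae (by filter_upwards [h2] with ω h; exact h.symm)
    rw [h3, integral_condExp hm]
    rfl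
  calc ∫ ω, c ω * (f ω - v ω) ∂P
      = ∫ ω, c ω * (f ω - (P[f|m]) ω) ∂P := by
        refine integral_congr_ae ?_
        filter_upwards [hv] with ω h
        rw [h]
    _ = ∫ ω, (c ω * f ω - c ω * (P[f|m]) ω) ∂P := by simp only [mul_sub]
    _ = (∫ ω, c ω * f ω ∂P) - ∫ ω, c ω * (P[f|m]) ω ∂P := integral_sub hcfi hcE
    _ = 0 := by rw [key, sub_self]


set_option maxHeartbeats 1000000 in

/-- Exact Neyman orthogonality of the efficient score (case `d ≠ d'`). The
Gateaux derivative at `r = 0` of `r ↦ E[μ_{d,d',a}(t⁰ + r(h − t⁰))]` vanishes; equivalently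
each of the four directional derivative expectations is zero. -/
theorem statement_11
    {Ω 𝓜 𝓧 : Type*} [MeasurableSpace Ω]
    [MeasurableSpace 𝓜] [Countable 𝓜] [MeasurableSingletonClass 𝓜] [MeasurableSpace 𝓧]
    (P : Measure Ω) [IsProbabilityMeasure P]
    (Y : Ω → ℝ) (D : Ω → ℕ) (M : Ω → 𝓜) (X : Ω → 𝓧)
    (hY : Measurable Y) (hD : Measurable D) (hM : Measurable M) (hX : Measurable X)
    (hD01 : ∀ ω, D ω ≤ 1)
    (a : ℝ) (d d' : ℕ) (hd : d ≤ 1) (hd'def : d' = 1 - d)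
    (ε₁ ε₂ : ℝ) (hε₁ : ε₁ ∈ Set.Ioo (0:ℝ) (1/2)) (hε₂ : ε₂ ∈ Set.Ioo (0:ℝ) (1/2))
    -- true nuisance parameters
    (g₁ : 𝓧 → ℝ) (g₂ : 𝓜 → 𝓧 → ℝ) (g₃ : ℕ → 𝓜 → 𝓧 → ℝ) (g₄ : ℕ → 𝓧 → ℝ)
    (hg₁meas : Measurable g₁)
    (hg₂meas : Measurable (fun t : 𝓜 × 𝓧 => g₂ t.1 t.2))
    (hg₃meas : Measurable (fun t : ℕ × 𝓜 × 𝓧 => g₃ t.1 t.2.1 t.2.2))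
    (hg₄meas : Measurable (fun t : ℕ × 𝓧 => g₄ t.1 t.2))
    -- g₁⁰(X) = P(D = d | X)
    (hg₁ver : (fun ω => g₁ (X ω)) =ᵐ[P]
      P[(fun ω' => if D ω' = d then (1:ℝ) else 0) | MeasurableSpace.comap X inferInstance])
    -- g₂⁰(M,X) = P(D = d | M, X)
    (hg₂ver : (fun ω => g₂ (M ω) (X ω)) =ᵐ[P]
      P[(fun ω' => if D ω' = d then (1:ℝ) else 0) |
        MeasurableSpace.comap (fun ω' => (M ω', X ω')) inferInstance])
    -- g₃⁰(D,M,X) = P(Y ≤ a | D, M, X)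
    (hg₃ver : (fun ω => g₃ (D ω) (M ω) (X ω)) =ᵐ[P]
      P[(fun ω' => if Y ω' ≤ a then (1:ℝ) else 0) |
        MeasurableSpace.comap (fun ω' => (D ω', M ω', X ω')) inferInstance])
    -- g₄⁰(D,X) = E[g₃⁰(d, M, X) | D, X]
    (hg₄ver : (fun ω => g₄ (D ω) (X ω)) =ᵐ[P]
      P[(fun ω' => g₃ d (M ω') (X ω')) |
        MeasurableSpace.comap (fun ω' => (D ω', X ω')) inferInstance])
    -- overlap bands for the truth
    (hg₁band : ∀ᵐ ω ∂P, ε₁ ≤ g₁ (X ω) ∧ g₁ (X ω) ≤ 1 - ε₁)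
    (hg₂band : ∀ᵐ ω ∂P, ε₂ ≤ g₂ (M ω) (X ω) ∧ g₂ (M ω) (X ω) ≤ 1 - ε₂)
    (hg₃band : ∀ δ m x, g₃ δ m x ∈ Set.Icc (0:ℝ) 1)
    (hg₄band : ∀ δ x, g₄ δ x ∈ Set.Icc (0:ℝ) 1)
    -- bounded measurable perturbations staying in the overlap bands
    (h₁ : 𝓧 → ℝ) (h₂ : 𝓜 → 𝓧 → ℝ) (h₃ : 𝓜 → 𝓧 → ℝ) (h₄ : 𝓧 → ℝ)
    (hh₁meas : Measurable h₁)
    (hh₂meas : Measurable (fun t : 𝓜 × 𝓧 => h₂ t.1 t.2))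
    (hh₃meas : Measurable (fun t : 𝓜 × 𝓧 => h₃ t.1 t.2))
    (hh₄meas : Measurable h₄)
    (hh₁band : ∀ x, h₁ x ∈ Set.Icc ε₁ (1 - ε₁))
    (hh₂band : ∀ m x, h₂ m x ∈ Set.Icc ε₂ (1 - ε₂))
    (hh₃band : ∀ m x, h₃ m x ∈ Set.Icc (0:ℝ) 1)
    (hh₄band : ∀ x, h₄ x ∈ Set.Icc (0:ℝ) 1) :
    -- the Gateaux derivative of the mean score at the truth vanishes
    HasDerivAt (fun r : ℝ =>
      ∫ ω,
        ((if D ω = d then (1:ℝ) else 0)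
            * ((1 - (g₂ (M ω) (X ω) + r * (h₂ (M ω) (X ω) - g₂ (M ω) (X ω))))
                / ((1 - (g₁ (X ω) + r * (h₁ (X ω) - g₁ (X ω))))
                    * (g₂ (M ω) (X ω) + r * (h₂ (M ω) (X ω) - g₂ (M ω) (X ω)))))
            * ((if Y ω ≤ a then (1:ℝ) else 0)
                - (g₃ d (M ω) (X ω) + r * (h₃ (M ω) (X ω) - g₃ d (M ω) (X ω))))
          + (if D ω = d' then (1:ℝ) else 0)
              / (1 - (g₁ (X ω) + r * (h₁ (X ω) - g₁ (X ω))))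
            * ((g₃ d (M ω) (X ω) + r * (h₃ (M ω) (X ω) - g₃ d (M ω) (X ω)))
                - (g₄ d' (X ω) + r * (h₄ (X ω) - g₄ d' (X ω))))
          + (g₄ d' (X ω) + r * (h₄ (X ω) - g₄ d' (X ω)))) ∂P) 0 0
    ∧
    -- each directional derivative expectation is zero: direction t₁
    (∫ ω,
        ((if D ω = d then (1:ℝ) else 0) * (1 - g₂ (M ω) (X ω))
            / ((1 - g₁ (X ω)) ^ 2 * g₂ (M ω) (X ω))
            * ((if Y ω ≤ a then (1:ℝ) else 0) - g₃ d (M ω) (X ω))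
          + (if D ω = d' then (1:ℝ) else 0) / (1 - g₁ (X ω)) ^ 2
            * (g₃ d (M ω) (X ω) - g₄ d' (X ω)))
        * (h₁ (X ω) - g₁ (X ω)) ∂P = 0)
    ∧
    -- direction t₂
    (∫ ω,
        (-((if D ω = d then (1:ℝ) else 0)
            / ((1 - g₁ (X ω)) * g₂ (M ω) (X ω) ^ 2))
            * ((if Y ω ≤ a then (1:ℝ) else 0) - g₃ d (M ω) (X ω)))
        * (h₂ (M ω) (X ω) - g₂ (M ω) (X ω)) ∂P = 0)
    ∧
    -- direction t₃
    (∫ ω,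
        ((if D ω = d' then (1:ℝ) else 0) / (1 - g₁ (X ω))
          - (if D ω = d then (1:ℝ) else 0) * (1 - g₂ (M ω) (X ω))
              / ((1 - g₁ (X ω)) * g₂ (M ω) (X ω)))
        * (h₃ (M ω) (X ω) - g₃ d (M ω) (X ω)) ∂P = 0)
    ∧
    -- direction t₄
    (∫ ω,
        (1 - (if D ω = d' then (1:ℝ) else 0) / (1 - g₁ (X ω)))
        * (h₄ (X ω) - g₄ d' (X ω)) ∂P = 0) := by
  
  obtain ⟨he10, he1lt⟩ := hε₁
  obtain ⟨he20, he2lt⟩ := hε₂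
  have hd'd : d ≠ d' := by omega
  have hdd' : d' ≠ d := by omega
  have hDc : ∀ ω, D ω = d ∨ D ω = d' := fun ω => by have := hD01 ω; omega
  have hIe_eq : ∀ ω, (if D ω = d' then (1:ℝ) else 0) = 1 - (if D ω = d then (1:ℝ) else 0) := by
    intro ω; rcases hDc ω with h | h
    · rw [h]; simp [hd'd]
    · rw [h]; simp [hdd']
  have habs01 : ∀ x y : ℝ, 0 ≤ x → x ≤ 1 → 0 ≤ y → y ≤ 1 → |x - y| ≤ 1 := by
    intro x y h1 h2 h3 h4; rw [abs_le]; constructor <;> linarith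
  have hIdb : ∀ ω, |(if D ω = d then (1:ℝ) else 0)| ≤ 1 := by intro ω; split_ifs <;> simp
  have hIeb : ∀ ω, |(if D ω = d' then (1:ℝ) else 0)| ≤ 1 := by intro ω; split_ifs <;> simp
  have hYab : ∀ ω, |(if Y ω ≤ a then (1:ℝ) else 0)| ≤ 1 := by intro ω; split_ifs <;> simp
  have hYa01 : ∀ ω, 0 ≤ (if Y ω ≤ a then (1:ℝ) else 0) ∧ (if Y ω ≤ a then (1:ℝ) else 0) ≤ 1 := by intro ω; split_ifs <;> norm_num
  set k₁ : 𝓧 → ℝ := fun x => max ε₁ (min (g₁ x) (1 - ε₁)) with hk₁def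
  set k₂ : 𝓜 → 𝓧 → ℝ := fun m x => max ε₂ (min (g₂ m x) (1 - ε₂)) with hk₂def
  have mk₁ : Measurable k₁ := measurable_const.max (hg₁meas.min measurable_const)
  have mk₂ : Measurable (fun tt : 𝓜 × 𝓧 => k₂ tt.1 tt.2) :=
    measurable_const.max (hg₂meas.min measurable_const)
  have hk₁b : ∀ x, ε₁ ≤ k₁ x ∧ k₁ x ≤ 1 - ε₁ := fun x =>
    ⟨le_max_left _ _, max_le (by linarith) (min_le_right _ _)⟩
  have hk₂b : ∀ m x, ε₂ ≤ k₂ m x ∧ k₂ m x ≤ 1 - ε₂ := fun m x =>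
    ⟨le_max_left _ _, max_le (by linarith) (min_le_right _ _)⟩
  have hk₁ae : ∀ᵐ ω ∂P, k₁ (X ω) = g₁ (X ω) := by
    filter_upwards [hg₁band] with ω h
    simp only [hk₁def]
    rw [min_eq_left h.2, max_eq_right h.1]
  have hk₂ae : ∀ᵐ ω ∂P, k₂ (M ω) (X ω) = g₂ (M ω) (X ω) := by
    filter_upwards [hg₂band] with ω h
    simp only [hk₂def]
    rw [min_eq_left h.2, max_eq_right h.1]
  have h1k₁ : ∀ x, ε₁ ≤ 1 - k₁ x := fun x => by linarith [(hk₁b x).2]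
  have hne1 : ∀ x, (1:ℝ) - k₁ x ≠ 0 := fun x => ne_of_gt (lt_of_lt_of_le he10 (h1k₁ x))
  have hne2 : ∀ m x, k₂ m x ≠ 0 := fun m x => ne_of_gt (lt_of_lt_of_le he20 (hk₂b m x).1)
  have hu1b : ∀ ω, |h₁ (X ω) - k₁ (X ω)| ≤ 1 := fun ω =>
    habs01 _ _ (le_trans he10.le (hh₁band (X ω)).1) (by linarith [(hh₁band (X ω)).2])
      (le_trans he10.le (hk₁b (X ω)).1) (by linarith [(hk₁b (X ω)).2])
  have hu2b : ∀ ω, |h₂ (M ω) (X ω) - k₂ (M ω) (X ω)| ≤ 1 := fun ω =>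
    habs01 _ _ (le_trans he20.le (hh₂band (M ω) (X ω)).1) (by linarith [(hh₂band (M ω) (X ω)).2])
      (le_trans he20.le (hk₂b (M ω) (X ω)).1) (by linarith [(hk₂b (M ω) (X ω)).2])
  have hu3b : ∀ ω, |h₃ (M ω) (X ω) - g₃ d (M ω) (X ω)| ≤ 1 := fun ω =>
    habs01 _ _ (hh₃band (M ω) (X ω)).1 (hh₃band (M ω) (X ω)).2
      (hg₃band d (M ω) (X ω)).1 (hg₃band d (M ω) (X ω)).2
  have hu4b : ∀ ω, |h₄ (X ω) - g₄ d' (X ω)| ≤ 1 := fun ω =>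
    habs01 _ _ (hh₄band (X ω)).1 (hh₄band (X ω)).2 (hg₄band d' (X ω)).1 (hg₄band d' (X ω)).2
  have h1qb : ∀ ω, |1 - k₂ (M ω) (X ω)| ≤ 1 := fun ω =>
    habs01 _ _ zero_le_one le_rfl (le_trans he20.le (hk₂b (M ω) (X ω)).1)
      (by linarith [(hk₂b (M ω) (X ω)).2])
  -- ambient measurability atoms
  have mp : Measurable (fun ω => k₁ (X ω)) := mk₁.comp hX
  have mq : Measurable (fun ω => k₂ (M ω) (X ω)) := mk₂.comp (hM.prodMk hX)
  have mt : Measurable (fun ω => g₃ d (M ω) (X ω)) :=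
    hg₃meas.comp (measurable_const.prodMk (hM.prodMk hX))
  have mv3 : Measurable (fun ω => g₃ (D ω) (M ω) (X ω)) :=
    hg₃meas.comp (hD.prodMk (hM.prodMk hX))
  have ms : Measurable (fun ω => g₄ d' (X ω)) := hg₄meas.comp (measurable_const.prodMk hX)
  have mv4 : Measurable (fun ω => g₄ (D ω) (X ω)) := hg₄meas.comp (hD.prodMk hX)
  have mh1 : Measurable (fun ω => h₁ (X ω)) := hh₁meas.comp hX
  have mh2 : Measurable (fun ω => h₂ (M ω) (X ω)) := hh₂meas.comp (hM.prodMk hX)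
  have mh3 : Measurable (fun ω => h₃ (M ω) (X ω)) := hh₃meas.comp (hM.prodMk hX)
  have mh4 : Measurable (fun ω => h₄ (X ω)) := hh₄meas.comp hX
  have mId : Measurable (fun ω => (if D ω = d then (1:ℝ) else 0)) :=
    Measurable.ite (hD (measurableSet_singleton d)) measurable_const measurable_const
  have mIe : Measurable (fun ω => (if D ω = d' then (1:ℝ) else 0)) :=
    Measurable.ite (hD (measurableSet_singleton d')) measurable_const measurable_const
  have mYa : Measurable (fun ω => (if Y ω ≤ a then (1:ℝ) else 0)) :=
    Measurable.ite (hY measurableSet_Iic) measurable_const measurable_const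
  -- comap σ-algebras
  have hmDMX := (hD.prodMk (hM.prodMk hX)).comap_le
  have hZDMXc : Measurable[MeasurableSpace.comap (fun ω' => (D ω', M ω', X ω')) inferInstance]
      (fun ω => (D ω, M ω, X ω)) := Measurable.of_comap_le le_rfl
  have cD3 := measurable_fst.comp hZDMXc
  have cM3 := measurable_fst.comp (measurable_snd.comp hZDMXc)
  have cX3 := measurable_snd.comp (measurable_snd.comp hZDMXc)
  have hmDX := (hD.prodMk hX).comap_le
  have hZDX : Measurable[MeasurableSpace.comap (fun ω' => (D ω', X ω')) inferInstance]
      (fun ω => (D ω, X ω)) := Measurable.of_comap_le le_rfl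
  have cD4 := measurable_fst.comp hZDX
  have cX4 := measurable_snd.comp hZDX
  have hmMX := (hM.prodMk hX).comap_le
  have hZMX : Measurable[MeasurableSpace.comap (fun ω' => (M ω', X ω')) inferInstance]
      (fun ω => (M ω, X ω)) := Measurable.of_comap_le le_rfl
  have cM2 := measurable_fst.comp hZMX
  have cX2 := measurable_snd.comp hZMX
  have hmX := hX.comap_le
  have hZX : Measurable[MeasurableSpace.comap X inferInstance] X := Measurable.of_comap_le le_rfl
  -- c measurability (w.r.t. the relevant sub-σ-algebras)
  have cAm : Measurable[MeasurableSpace.comap (fun ω' => (D ω', M ω', X ω')) inferInstance]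
      (fun ω => (if D ω = d then (1:ℝ) else 0) * (1 - k₂ (M ω) (X ω)) * (h₁ (X ω) - k₁ (X ω)) / ((1 - k₁ (X ω)) ^ 2 * k₂ (M ω) (X ω))) :=
    ((( Measurable.ite (cD3 (measurableSet_singleton d)) measurable_const measurable_const).mul
        (measurable_const.sub (mk₂.comp (cM3.prodMk cX3)))).mul
      ((hh₁meas.comp cX3).sub (mk₁.comp cX3))).div
      (((measurable_const.sub (mk₁.comp cX3)).pow_const 2).mul (mk₂.comp (cM3.prodMk cX3)))
  have c2m : Measurable[MeasurableSpace.comap (fun ω' => (D ω', M ω', X ω')) inferInstance]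
      (fun ω => -((if D ω = d then (1:ℝ) else 0) * (h₂ (M ω) (X ω) - k₂ (M ω) (X ω)) / ((1 - k₁ (X ω)) * k₂ (M ω) (X ω) ^ 2))) :=
    (((Measurable.ite (cD3 (measurableSet_singleton d)) measurable_const measurable_const).mul
        ((hh₂meas.comp (cM3.prodMk cX3)).sub (mk₂.comp (cM3.prodMk cX3)))).div
      ((measurable_const.sub (mk₁.comp cX3)).mul ((mk₂.comp (cM3.prodMk cX3)).pow_const 2))).neg
  have cBm : Measurable[MeasurableSpace.comap (fun ω' => (D ω', X ω')) inferInstance]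
      (fun ω => (if D ω = d' then (1:ℝ) else 0) * (h₁ (X ω) - k₁ (X ω)) / (1 - k₁ (X ω)) ^ 2) :=
    ((Measurable.ite (cD4 (measurableSet_singleton d')) measurable_const measurable_const).mul
      ((hh₁meas.comp cX4).sub (mk₁.comp cX4))).div
      ((measurable_const.sub (mk₁.comp cX4)).pow_const 2)
  have c3m : Measurable[MeasurableSpace.comap (fun ω' => (M ω', X ω')) inferInstance]
      (fun ω => -((h₃ (M ω) (X ω) - g₃ d (M ω) (X ω)) / ((1 - k₁ (X ω)) * k₂ (M ω) (X ω)))) :=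
    (((hh₃meas.comp (cM2.prodMk cX2)).sub
        (hg₃meas.comp (measurable_const.prodMk (cM2.prodMk cX2)))).div
      ((measurable_const.sub (mk₁.comp cX2)).mul (mk₂.comp (cM2.prodMk cX2)))).neg
  have c4m : Measurable[MeasurableSpace.comap X inferInstance]
      (fun ω => (h₄ (X ω) - g₄ d' (X ω)) / (1 - k₁ (X ω))) :=
    ((hh₄meas.comp hZX).sub (hg₄meas.comp (measurable_const.prodMk hZX))).div
      (measurable_const.sub (mk₁.comp hZX))
  -- c bounds
  have he1sq : (0:ℝ) < ε₁^2*ε₂ := by positivity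
  have hcAb : ∀ ω, |(if D ω = d then (1:ℝ) else 0) * (1 - k₂ (M ω) (X ω)) * (h₁ (X ω) - k₁ (X ω)) / ((1 - k₁ (X ω)) ^ 2 * k₂ (M ω) (X ω))| ≤ 1/(ε₁^2*ε₂) := by
    intro ω
    refine abs_div_le' ?_ he1sq ?_
    · have := abs_mul_le' (abs_mul_le' (hIdb ω) (h1qb ω)) (hu1b ω)
      simpa using this
    · exact prod_le_prod'' (sq_nonneg ε₁) he20.le
        (pow_le_pow_left₀ he10.le (h1k₁ (X ω)) 2) (hk₂b (M ω) (X ω)).1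
  have hcBb : ∀ ω, |(if D ω = d' then (1:ℝ) else 0) * (h₁ (X ω) - k₁ (X ω)) / (1 - k₁ (X ω)) ^ 2| ≤ 1/ε₁^2 := by
    intro ω
    refine abs_div_le' ?_ (by positivity) (pow_le_pow_left₀ he10.le (h1k₁ (X ω)) 2)
    have := abs_mul_le' (hIeb ω) (hu1b ω)
    simpa using this
  have hc2b : ∀ ω, |-((if D ω = d then (1:ℝ) else 0) * (h₂ (M ω) (X ω) - k₂ (M ω) (X ω)) / ((1 - k₁ (X ω)) * k₂ (M ω) (X ω) ^ 2))| ≤ 1/(ε₁*ε₂^2) := by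
    intro ω
    rw [abs_neg]
    refine abs_div_le' ?_ (by positivity) ?_
    · have := abs_mul_le' (hIdb ω) (hu2b ω)
      simpa using this
    · exact prod_le_prod'' he10.le (sq_nonneg ε₂) (h1k₁ (X ω))
        (pow_le_pow_left₀ he20.le (hk₂b (M ω) (X ω)).1 2)
  have hc3b : ∀ ω, |-((h₃ (M ω) (X ω) - g₃ d (M ω) (X ω)) / ((1 - k₁ (X ω)) * k₂ (M ω) (X ω)))| ≤ 1/(ε₁*ε₂) := by
    intro ω
    rw [abs_neg]
    exact abs_div_le' (hu3b ω) (by positivity)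
      (prod_le_prod'' he10.le he20.le (h1k₁ (X ω)) (hk₂b (M ω) (X ω)).1)
  have hc4b : ∀ ω, |(h₄ (X ω) - g₄ d' (X ω)) / (1 - k₁ (X ω))| ≤ 1/ε₁ := fun ω =>
    abs_div_le' (hu4b ω) he10 (h1k₁ (X ω))
  -- orthogonality of each piece
  have horthA : ∫ ω, (fun ω => (if D ω = d then (1:ℝ) else 0) * (1 - k₂ (M ω) (X ω)) * (h₁ (X ω) - k₁ (X ω)) / ((1 - k₁ (X ω)) ^ 2 * k₂ (M ω) (X ω))) ω * ((fun ω' => if Y ω' ≤ a then (1:ℝ) else 0) ω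
      - (fun ω => g₃ (D ω) (M ω) (X ω)) ω) ∂P = 0 :=
    ortho P hmDMX mYa hYab cAm.stronglyMeasurable hcAb hg₃ver
  have horthB : ∫ ω, (fun ω => (if D ω = d' then (1:ℝ) else 0) * (h₁ (X ω) - k₁ (X ω)) / (1 - k₁ (X ω)) ^ 2) ω * ((fun ω' => g₃ d (M ω') (X ω')) ω
      - (fun ω => g₄ (D ω) (X ω)) ω) ∂P = 0 :=
    ortho P hmDX mt (fun ω => by
      rw [abs_le]; exact ⟨by linarith [(hg₃band d (M ω) (X ω)).1], (hg₃band d (M ω) (X ω)).2⟩)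
      cBm.stronglyMeasurable hcBb hg₄ver
  have horth2 : ∫ ω, (fun ω => -((if D ω = d then (1:ℝ) else 0) * (h₂ (M ω) (X ω) - k₂ (M ω) (X ω)) / ((1 - k₁ (X ω)) * k₂ (M ω) (X ω) ^ 2))) ω * ((fun ω' => if Y ω' ≤ a then (1:ℝ) else 0) ω
      - (fun ω => g₃ (D ω) (M ω) (X ω)) ω) ∂P = 0 :=
    ortho P hmDMX mYa hYab c2m.stronglyMeasurable hc2b hg₃ver
  have horth3 : ∫ ω, (fun ω => -((h₃ (M ω) (X ω) - g₃ d (M ω) (X ω)) / ((1 - k₁ (X ω)) * k₂ (M ω) (X ω)))) ω * ((fun ω' => if D ω' = d then (1:ℝ) else 0) ω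
      - (fun ω => g₂ (M ω) (X ω)) ω) ∂P = 0 :=
    ortho P hmMX mId hIdb c3m.stronglyMeasurable hc3b hg₂ver
  have horth4 : ∫ ω, (fun ω => (h₄ (X ω) - g₄ d' (X ω)) / (1 - k₁ (X ω))) ω * ((fun ω' => if D ω' = d then (1:ℝ) else 0) ω
      - (fun ω => g₁ (X ω)) ω) ∂P = 0 :=
    ortho P hmX mId hIdb c4m.stronglyMeasurable hc4b hg₁ver
  -- pointwise identifications
  have hJeq1 : ∀ ω : Ω, ((if D ω = d then (1:ℝ) else 0) * (1 - k₂ (M ω) (X ω)) / ((1 - k₁ (X ω)) ^ 2 * k₂ (M ω) (X ω)) * ((if Y ω ≤ a then (1:ℝ) else 0) - g₃ d (M ω) (X ω)) + (if D ω = d' then (1:ℝ) else 0) / (1 - k₁ (X ω)) ^ 2 * (g₃ d (M ω) (X ω) - g₄ d' (X ω))) * (h₁ (X ω) - k₁ (X ω)) =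
      ((if D ω = d then (1:ℝ) else 0) * (1 - k₂ (M ω) (X ω)) * (h₁ (X ω) - k₁ (X ω)) / ((1 - k₁ (X ω)) ^ 2 * k₂ (M ω) (X ω))) * ((if Y ω ≤ a then (1:ℝ) else 0) - g₃ (D ω) (M ω) (X ω)) + ((if D ω = d' then (1:ℝ) else 0) * (h₁ (X ω) - k₁ (X ω)) / (1 - k₁ (X ω)) ^ 2) * (g₃ d (M ω) (X ω) - g₄ (D ω) (X ω)) := by
    intro ω
    have hA := hne1 (X ω); have hB := hne2 (M ω) (X ω)
    rcases hDc ω with h | h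
    · rw [h, if_pos rfl, if_neg hd'd]
      field_simp
      ring
    · rw [h, if_neg hdd', if_pos rfl]
      field_simp
      ring
  have hJeq2 : ∀ ω : Ω, (-((if D ω = d then (1:ℝ) else 0) / ((1 - k₁ (X ω)) * k₂ (M ω) (X ω) ^ 2)) * ((if Y ω ≤ a then (1:ℝ) else 0) - g₃ d (M ω) (X ω))) * (h₂ (M ω) (X ω) - k₂ (M ω) (X ω)) = (-((if D ω = d then (1:ℝ) else 0) * (h₂ (M ω) (X ω) - k₂ (M ω) (X ω)) / ((1 - k₁ (X ω)) * k₂ (M ω) (X ω) ^ 2))) * ((if Y ω ≤ a then (1:ℝ) else 0) - g₃ (D ω) (M ω) (X ω)) := by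
    intro ω
    have hA := hne1 (X ω); have hB := hne2 (M ω) (X ω)
    rcases hDc ω with h | h
    · rw [h, if_pos rfl]
      field_simp
    · rw [h, if_neg hdd']
      simp
  have hJeq3 : ∀ᵐ ω ∂P, ((if D ω = d' then (1:ℝ) else 0) / (1 - k₁ (X ω)) - (if D ω = d then (1:ℝ) else 0) * (1 - k₂ (M ω) (X ω)) / ((1 - k₁ (X ω)) * k₂ (M ω) (X ω))) * (h₃ (M ω) (X ω) - g₃ d (M ω) (X ω)) = (-((h₃ (M ω) (X ω) - g₃ d (M ω) (X ω)) / ((1 - k₁ (X ω)) * k₂ (M ω) (X ω)))) * ((if D ω = d then (1:ℝ) else 0) - g₂ (M ω) (X ω)) := by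
    filter_upwards [hk₂ae] with ω h2
    rw [← h2]
    have hA := hne1 (X ω); have hB := hne2 (M ω) (X ω)
    rcases hDc ω with h | h
    · rw [h, if_pos rfl, if_neg hd'd]
      field_simp
      ring
    · rw [h, if_neg hdd', if_pos rfl]
      field_simp
      ring
  have hJeq4 : ∀ᵐ ω ∂P, (1 - (if D ω = d' then (1:ℝ) else 0) / (1 - k₁ (X ω))) * (h₄ (X ω) - g₄ d' (X ω)) = ((h₄ (X ω) - g₄ d' (X ω)) / (1 - k₁ (X ω))) * ((if D ω = d then (1:ℝ) else 0) - g₁ (X ω)) := by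
    filter_upwards [hk₁ae] with ω h1
    rw [← h1, hIe_eq ω]
    have hA := hne1 (X ω)
    field_simp
    ring
  -- integrability of the pieces
  have hfv3 : ∀ ω, |(if Y ω ≤ a then (1:ℝ) else 0) - g₃ (D ω) (M ω) (X ω)| ≤ 1 := fun ω =>
    habs01 _ _ (hYa01 ω).1 (hYa01 ω).2 (hg₃band (D ω) (M ω) (X ω)).1 (hg₃band (D ω) (M ω) (X ω)).2
  have hfv4 : ∀ ω, |g₃ d (M ω) (X ω) - g₄ (D ω) (X ω)| ≤ 1 := fun ω =>
    habs01 _ _ (hg₃band d (M ω) (X ω)).1 (hg₃band d (M ω) (X ω)).2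
      (hg₄band (D ω) (X ω)).1 (hg₄band (D ω) (X ω)).2
  have hintA : Integrable (fun ω => ((if D ω = d then (1:ℝ) else 0) * (1 - k₂ (M ω) (X ω)) * (h₁ (X ω) - k₁ (X ω)) / ((1 - k₁ (X ω)) ^ 2 * k₂ (M ω) (X ω))) * ((if Y ω ≤ a then (1:ℝ) else 0) - g₃ (D ω) (M ω) (X ω))) P := by
    refine integrable_of_bdd P (Measurable.aestronglyMeasurable ?_) (C := 1/(ε₁^2*ε₂) * 1)
      (fun ω => abs_mul_le' (hcAb ω) (hfv3 ω))
    exact ((cAm.mono hmDMX le_rfl).mul (mYa.sub mv3))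
  have hintB : Integrable (fun ω => ((if D ω = d' then (1:ℝ) else 0) * (h₁ (X ω) - k₁ (X ω)) / (1 - k₁ (X ω)) ^ 2) * (g₃ d (M ω) (X ω) - g₄ (D ω) (X ω))) P := by
    refine integrable_of_bdd P (Measurable.aestronglyMeasurable ?_) (C := 1/ε₁^2 * 1)
      (fun ω => abs_mul_le' (hcBb ω) (hfv4 ω))
    exact ((cBm.mono hmDX le_rfl).mul (mt.sub mv4))
  have hint2 : Integrable (fun ω => (-((if D ω = d then (1:ℝ) else 0) * (h₂ (M ω) (X ω) - k₂ (M ω) (X ω)) / ((1 - k₁ (X ω)) * k₂ (M ω) (X ω) ^ 2))) * ((if Y ω ≤ a then (1:ℝ) else 0) - g₃ (D ω) (M ω) (X ω))) P := by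
    refine integrable_of_bdd P (Measurable.aestronglyMeasurable ?_) (C := 1/(ε₁*ε₂^2) * 1)
      (fun ω => abs_mul_le' (hc2b ω) (hfv3 ω))
    exact ((c2m.mono hmDMX le_rfl).mul (mYa.sub mv3))
  have intJ1 : Integrable (fun ω => ((if D ω = d then (1:ℝ) else 0) * (1 - k₂ (M ω) (X ω)) / ((1 - k₁ (X ω)) ^ 2 * k₂ (M ω) (X ω)) * ((if Y ω ≤ a then (1:ℝ) else 0) - g₃ d (M ω) (X ω)) + (if D ω = d' then (1:ℝ) else 0) / (1 - k₁ (X ω)) ^ 2 * (g₃ d (M ω) (X ω) - g₄ d' (X ω))) * (h₁ (X ω) - k₁ (X ω))) P :=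
    (hintA.add hintB).congr (ae_of_all _ fun ω => (hJeq1 ω).symm)
  have intJ2 : Integrable (fun ω => (-((if D ω = d then (1:ℝ) else 0) / ((1 - k₁ (X ω)) * k₂ (M ω) (X ω) ^ 2)) * ((if Y ω ≤ a then (1:ℝ) else 0) - g₃ d (M ω) (X ω))) * (h₂ (M ω) (X ω) - k₂ (M ω) (X ω))) P :=
    hint2.congr (ae_of_all _ fun ω => (hJeq2 ω).symm)
  have intJ3 : Integrable (fun ω => ((if D ω = d' then (1:ℝ) else 0) / (1 - k₁ (X ω)) - (if D ω = d then (1:ℝ) else 0) * (1 - k₂ (M ω) (X ω)) / ((1 - k₁ (X ω)) * k₂ (M ω) (X ω))) * (h₃ (M ω) (X ω) - g₃ d (M ω) (X ω))) P := by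
    have hb1 : ∀ ω, |(if D ω = d' then (1:ℝ) else 0) / (1 - k₁ (X ω))| ≤ 1/ε₁ := fun ω =>
      abs_div_le' (hIeb ω) he10 (h1k₁ (X ω))
    have hb2 : ∀ ω, |(if D ω = d then (1:ℝ) else 0) * (1 - k₂ (M ω) (X ω)) / ((1 - k₁ (X ω)) * k₂ (M ω) (X ω))| ≤ 1/(ε₁*ε₂) := fun ω =>
      abs_div_le' (by simpa using abs_mul_le' (hIdb ω) (h1qb ω)) (by positivity)
        (prod_le_prod'' he10.le he20.le (h1k₁ (X ω)) (hk₂b (M ω) (X ω)).1)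
    refine integrable_of_bdd P (Measurable.aestronglyMeasurable ?_)
      (C := (1/ε₁ + 1/(ε₁*ε₂)) * 1) (fun ω => abs_mul_le' ((abs_sub _ _).trans
        (add_le_add (hb1 ω) (hb2 ω))) (hu3b ω))
    exact ((mIe.div (measurable_const.sub mp)).sub
      ((mId.mul (measurable_const.sub mq)).div ((measurable_const.sub mp).mul mq))).mul
      (mh3.sub mt)
  have intJ4 : Integrable (fun ω => (1 - (if D ω = d' then (1:ℝ) else 0) / (1 - k₁ (X ω))) * (h₄ (X ω) - g₄ d' (X ω))) P := by
    have hb1 : ∀ ω, |1 - (if D ω = d' then (1:ℝ) else 0) / (1 - k₁ (X ω))| ≤ 1 + 1/ε₁ := fun ω =>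
      (abs_sub _ _).trans (by
        have := abs_div_le' (hIeb ω) he10 (h1k₁ (X ω))
        simp only [abs_one]
        linarith)
    refine integrable_of_bdd P (Measurable.aestronglyMeasurable ?_)
      (C := (1 + 1/ε₁) * 1) (fun ω => abs_mul_le' (hb1 ω) (hu4b ω))
    exact (measurable_const.sub (mIe.div (measurable_const.sub mp))).mul (mh4.sub ms)
  -- the four zero statements for the clamped integrands
  have partJ1 : ∫ ω, ((if D ω = d then (1:ℝ) else 0) * (1 - k₂ (M ω) (X ω)) / ((1 - k₁ (X ω)) ^ 2 * k₂ (M ω) (X ω)) * ((if Y ω ≤ a then (1:ℝ) else 0) - g₃ d (M ω) (X ω)) + (if D ω = d' then (1:ℝ) else 0) / (1 - k₁ (X ω)) ^ 2 * (g₃ d (M ω) (X ω) - g₄ d' (X ω))) * (h₁ (X ω) - k₁ (X ω)) ∂P = 0 := by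
    have e0 : ∫ ω, ((if D ω = d then (1:ℝ) else 0) * (1 - k₂ (M ω) (X ω)) / ((1 - k₁ (X ω)) ^ 2 * k₂ (M ω) (X ω)) * ((if Y ω ≤ a then (1:ℝ) else 0) - g₃ d (M ω) (X ω)) + (if D ω = d' then (1:ℝ) else 0) / (1 - k₁ (X ω)) ^ 2 * (g₃ d (M ω) (X ω) - g₄ d' (X ω))) * (h₁ (X ω) - k₁ (X ω)) ∂P
        = ∫ ω, (((if D ω = d then (1:ℝ) else 0) * (1 - k₂ (M ω) (X ω)) * (h₁ (X ω) - k₁ (X ω)) / ((1 - k₁ (X ω)) ^ 2 * k₂ (M ω) (X ω))) * ((if Y ω ≤ a then (1:ℝ) else 0) - g₃ (D ω) (M ω) (X ω))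
            + ((if D ω = d' then (1:ℝ) else 0) * (h₁ (X ω) - k₁ (X ω)) / (1 - k₁ (X ω)) ^ 2) * (g₃ d (M ω) (X ω) - g₄ (D ω) (X ω))) ∂P :=
      integral_congr_ae (ae_of_all _ hJeq1)
    have e1 : ∫ ω, (((if D ω = d then (1:ℝ) else 0) * (1 - k₂ (M ω) (X ω)) * (h₁ (X ω) - k₁ (X ω)) / ((1 - k₁ (X ω)) ^ 2 * k₂ (M ω) (X ω))) * ((if Y ω ≤ a then (1:ℝ) else 0) - g₃ (D ω) (M ω) (X ω))
          + ((if D ω = d' then (1:ℝ) else 0) * (h₁ (X ω) - k₁ (X ω)) / (1 - k₁ (X ω)) ^ 2) * (g₃ d (M ω) (X ω) - g₄ (D ω) (X ω))) ∂P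
        = (∫ ω, ((if D ω = d then (1:ℝ) else 0) * (1 - k₂ (M ω) (X ω)) * (h₁ (X ω) - k₁ (X ω)) / ((1 - k₁ (X ω)) ^ 2 * k₂ (M ω) (X ω))) * ((if Y ω ≤ a then (1:ℝ) else 0) - g₃ (D ω) (M ω) (X ω)) ∂P)
          + ∫ ω, ((if D ω = d' then (1:ℝ) else 0) * (h₁ (X ω) - k₁ (X ω)) / (1 - k₁ (X ω)) ^ 2) * (g₃ d (M ω) (X ω) - g₄ (D ω) (X ω)) ∂P := integral_add hintA hintB
    rw [e0, e1]
    have hA : ∫ ω, ((if D ω = d then (1:ℝ) else 0) * (1 - k₂ (M ω) (X ω)) * (h₁ (X ω) - k₁ (X ω)) / ((1 - k₁ (X ω)) ^ 2 * k₂ (M ω) (X ω))) * ((if Y ω ≤ a then (1:ℝ) else 0) - g₃ (D ω) (M ω) (X ω)) ∂P = 0 := horthA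
    have hB : ∫ ω, ((if D ω = d' then (1:ℝ) else 0) * (h₁ (X ω) - k₁ (X ω)) / (1 - k₁ (X ω)) ^ 2) * (g₃ d (M ω) (X ω) - g₄ (D ω) (X ω)) ∂P = 0 := horthB
    rw [hA, hB, add_zero]
  have partJ2 : ∫ ω, (-((if D ω = d then (1:ℝ) else 0) / ((1 - k₁ (X ω)) * k₂ (M ω) (X ω) ^ 2)) * ((if Y ω ≤ a then (1:ℝ) else 0) - g₃ d (M ω) (X ω))) * (h₂ (M ω) (X ω) - k₂ (M ω) (X ω)) ∂P = 0 := by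
    have e0 : ∫ ω, (-((if D ω = d then (1:ℝ) else 0) / ((1 - k₁ (X ω)) * k₂ (M ω) (X ω) ^ 2)) * ((if Y ω ≤ a then (1:ℝ) else 0) - g₃ d (M ω) (X ω))) * (h₂ (M ω) (X ω) - k₂ (M ω) (X ω)) ∂P = ∫ ω, (-((if D ω = d then (1:ℝ) else 0) * (h₂ (M ω) (X ω) - k₂ (M ω) (X ω)) / ((1 - k₁ (X ω)) * k₂ (M ω) (X ω) ^ 2))) * ((if Y ω ≤ a then (1:ℝ) else 0) - g₃ (D ω) (M ω) (X ω)) ∂P :=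
      integral_congr_ae (ae_of_all _ hJeq2)
    rw [e0]
    exact horth2
  have partJ3 : ∫ ω, ((if D ω = d' then (1:ℝ) else 0) / (1 - k₁ (X ω)) - (if D ω = d then (1:ℝ) else 0) * (1 - k₂ (M ω) (X ω)) / ((1 - k₁ (X ω)) * k₂ (M ω) (X ω))) * (h₃ (M ω) (X ω) - g₃ d (M ω) (X ω)) ∂P = 0 := by
    have e0 : ∫ ω, ((if D ω = d' then (1:ℝ) else 0) / (1 - k₁ (X ω)) - (if D ω = d then (1:ℝ) else 0) * (1 - k₂ (M ω) (X ω)) / ((1 - k₁ (X ω)) * k₂ (M ω) (X ω))) * (h₃ (M ω) (X ω) - g₃ d (M ω) (X ω)) ∂P = ∫ ω, (-((h₃ (M ω) (X ω) - g₃ d (M ω) (X ω)) / ((1 - k₁ (X ω)) * k₂ (M ω) (X ω)))) * ((if D ω = d then (1:ℝ) else 0) - g₂ (M ω) (X ω)) ∂P :=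
      integral_congr_ae hJeq3
    rw [e0]
    exact horth3
  have partJ4 : ∫ ω, (1 - (if D ω = d' then (1:ℝ) else 0) / (1 - k₁ (X ω))) * (h₄ (X ω) - g₄ d' (X ω)) ∂P = 0 := by
    have e0 : ∫ ω, (1 - (if D ω = d' then (1:ℝ) else 0) / (1 - k₁ (X ω))) * (h₄ (X ω) - g₄ d' (X ω)) ∂P = ∫ ω, ((h₄ (X ω) - g₄ d' (X ω)) / (1 - k₁ (X ω))) * ((if D ω = d then (1:ℝ) else 0) - g₁ (X ω)) ∂P :=
      integral_congr_ae hJeq4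
    rw [e0]
    exact horth4
  refine ⟨?_, ?_, ?_, ?_, ?_⟩
  · -- the Gateaux derivative
    have hmin : 0 < min ε₁ ε₂ := lt_min he10 he20
    have hmin1 : min ε₁ ε₂ ≤ ε₁ := min_le_left _ _
    have hmin2 : min ε₁ ε₂ ≤ ε₂ := min_le_right _ _
    have hεr0 : 0 < min ε₁ ε₂ / 2 := by linarith
    have hball : ∀ x : ℝ, x ∈ Metric.ball (0:ℝ) (min ε₁ ε₂ / 2) → |x| ≤ min ε₁ ε₂ / 2 := by
      intro x hx
      rw [Metric.mem_ball, Real.dist_eq, sub_zero] at hx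
      exact hx.le
    have hfact : ∀ x : ℝ, |x| ≤ min ε₁ ε₂ / 2 → ∀ ω : Ω,
        ε₁/2 ≤ 1 - (k₁ (X ω) + x * (h₁ (X ω) - k₁ (X ω))) ∧ 1 - (k₁ (X ω) + x * (h₁ (X ω) - k₁ (X ω))) ≤ 1 ∧
        ε₂/2 ≤ k₂ (M ω) (X ω) + x * (h₂ (M ω) (X ω) - k₂ (M ω) (X ω)) ∧ k₂ (M ω) (X ω) + x * (h₂ (M ω) (X ω) - k₂ (M ω) (X ω)) ≤ 1 ∧
        |(if Y ω ≤ a then (1:ℝ) else 0) - (g₃ d (M ω) (X ω) + x * (h₃ (M ω) (X ω) - g₃ d (M ω) (X ω)))| ≤ 3 ∧ |(g₃ d (M ω) (X ω) + x * (h₃ (M ω) (X ω) - g₃ d (M ω) (X ω))) - (g₄ d' (X ω) + x * (h₄ (X ω) - g₄ d' (X ω)))| ≤ 4 ∧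
        |g₄ d' (X ω) + x * (h₄ (X ω) - g₄ d' (X ω))| ≤ 2 := by
      intro x hx ω
      have hx1 : |x| ≤ 1 := hx.trans (by linarith)
      have hxu1 : |x * (h₁ (X ω) - k₁ (X ω))| ≤ min ε₁ ε₂ / 2 := by
        have := abs_mul_le' hx (hu1b ω); simpa using this
      have hxu2 : |x * (h₂ (M ω) (X ω) - k₂ (M ω) (X ω))| ≤ min ε₁ ε₂ / 2 := by
        have := abs_mul_le' hx (hu2b ω); simpa using this
      have hxu3 : |x * (h₃ (M ω) (X ω) - g₃ d (M ω) (X ω))| ≤ 1 := by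
        have := abs_mul_le' hx1 (hu3b ω); simpa using this
      have hxu4 : |x * (h₄ (X ω) - g₄ d' (X ω))| ≤ 1 := by
        have := abs_mul_le' hx1 (hu4b ω); simpa using this
      have h1 := abs_le.mp hxu1
      have h2 := abs_le.mp hxu2
      have h3 := abs_le.mp hxu3
      have h4 := abs_le.mp hxu4
      have hpb := hk₁b (X ω)
      have hqb := hk₂b (M ω) (X ω)
      have htb := hg₃band d (M ω) (X ω)
      have hsb := hg₄band d' (X ω)
      have hyb := hYa01 ω
      refine ⟨by linarith [h1.1, h1.2], by linarith [h1.1, h1.2], by linarith [h2.1, h2.2],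
        by linarith [h2.1, h2.2], ?_, ?_, ?_⟩
      · rw [abs_le]; constructor <;> linarith [hyb.1, hyb.2, htb.1, htb.2, h3.1, h3.2]
      · rw [abs_le]; constructor <;> linarith [htb.1, htb.2, hsb.1, hsb.2, h3.1, h3.2, h4.1, h4.2]
      · rw [abs_le]; constructor <;> linarith [hsb.1, hsb.2, h4.1, h4.2]
    have mF : ∀ r : ℝ, Measurable (fun ω => (if D ω = d then (1:ℝ) else 0) * ((1 - (k₂ (M ω) (X ω) + r * (h₂ (M ω) (X ω) - k₂ (M ω) (X ω)))) / ((1 - (k₁ (X ω) + r * (h₁ (X ω) - k₁ (X ω)))) * (k₂ (M ω) (X ω) + r * (h₂ (M ω) (X ω) - k₂ (M ω) (X ω))))) * ((if Y ω ≤ a then (1:ℝ) else 0) - (g₃ d (M ω) (X ω) + r * (h₃ (M ω) (X ω) - g₃ d (M ω) (X ω)))) + (if D ω = d' then (1:ℝ) else 0) / (1 - (k₁ (X ω) + r * (h₁ (X ω) - k₁ (X ω)))) * ((g₃ d (M ω) (X ω) + r * (h₃ (M ω) (X ω) - g₃ d (M ω) (X ω))) - (g₄ d' (X ω) + r * (h₄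 (X ω) - g₄ d' (X ω)))) + (g₄ d' (X ω) + r * (h₄ (X ω) - g₄ d' (X ω)))) := by
      intro r
      have mP : Measurable (fun ω => k₁ (X ω) + r * (h₁ (X ω) - k₁ (X ω))) := mp.add ((mh1.sub mp).const_mul r)
      have mQ : Measurable (fun ω => k₂ (M ω) (X ω) + r * (h₂ (M ω) (X ω) - k₂ (M ω) (X ω))) := mq.add ((mh2.sub mq).const_mul r)
      have mT : Measurable (fun ω => g₃ d (M ω) (X ω) + r * (h₃ (M ω) (X ω) - g₃ d (M ω) (X ω))) := mt.add ((mh3.sub mt).const_mul r)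
      have mS : Measurable (fun ω => g₄ d' (X ω) + r * (h₄ (X ω) - g₄ d' (X ω))) := ms.add ((mh4.sub ms).const_mul r)
      exact ((mId.mul ((measurable_const.sub mQ).div ((measurable_const.sub mP).mul mQ))).mul
        (mYa.sub mT)).add ((mIe.div (measurable_const.sub mP)).mul (mT.sub mS)) |>.add mS
    have mFp0 : Measurable (fun ω => (if D ω = d then (1:ℝ) else 0) * ((h₁ (X ω) - k₁ (X ω)) * (1 - (k₂ (M ω) (X ω) + 0 * (h₂ (M ω) (X ω) - k₂ (M ω) (X ω)))) / ((1 - (k₁ (X ω) + 0 * (h₁ (X ω) - k₁ (X ω)))) ^ 2 * (k₂ (M ω) (X ω) + 0 * (h₂ (M ω) (X ω) - k₂ (M ω) (X ω)))) - (h₂ (M ω) (X ω) - k₂ (M ω) (X ω)) / ((1 - (k₁ (X ω) + 0 * (h₁ (X ω) - k₁ (X ω)))) * (k₂ (M ω) (X ω) + 0 * (h₂ (M ω) (X ω) - k₂ (M ω) (X ω))) ^ 2)) * ((if Y ω ≤ a then (1:ℝ) else 0) - (g₃ d (M ω) (X ω) + 0 * (h₃ (M ω) (X ω) - g₃ d (M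 ω) (X ω)))) + (if D ω = d then (1:ℝ) else 0) * ((1 - (k₂ (M ω) (X ω) + 0 * (h₂ (M ω) (X ω) - k₂ (M ω) (X ω)))) / ((1 - (k₁ (X ω) + 0 * (h₁ (X ω) - k₁ (X ω)))) * (k₂ (M ω) (X ω) + 0 * (h₂ (M ω) (X ω) - k₂ (M ω) (X ω))))) * -(h₃ (M ω) (X ω) - g₃ d (M ω) (X ω)) + ((if D ω = d' then (1:ℝ) else 0) * (h₁ (X ω) - k₁ (X ω)) / (1 - (k₁ (X ω) + 0 * (h₁ (X ω) - k₁ (X ω)))) ^ 2 * ((g₃ d (M ω) (X ω) + 0 * (h₃ (M ω) (X ω) - g₃ d (M ω) (X ω))) - (g₄ d' (X ω) + 0 * (h₄ (X ω) - g₄ d' (X ω)))) + (if D ω = d' then (1:ℝ) else 0) / (1 - (k₁ (X ω) + 0 * (h₁ (X ω) - k₁ (X ω)))) * ((h₃ (M ω) (X ω) - g₃ d (M ω) (X ω)) - (h₄ (X ω) - g₄ d' (X ω)))) + (h₄ (X ω) - g₄ d' (X ω))) := by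
      have mP : Measurable (fun ω => k₁ (X ω) + (0:ℝ) * (h₁ (X ω) - k₁ (X ω))) :=
        mp.add ((mh1.sub mp).const_mul 0)
      have mQ : Measurable (fun ω => k₂ (M ω) (X ω) + (0:ℝ) * (h₂ (M ω) (X ω) - k₂ (M ω) (X ω))) := mq.add ((mh2.sub mq).const_mul 0)
      have mT : Measurable (fun ω => g₃ d (M ω) (X ω) + (0:ℝ) * (h₃ (M ω) (X ω) - g₃ d (M ω) (X ω))) := mt.add ((mh3.sub mt).const_mul 0)
      have mS : Measurable (fun ω => g₄ d' (X ω) + (0:ℝ) * (h₄ (X ω) - g₄ d' (X ω))) := ms.add ((mh4.sub ms).const_mul 0)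
      have mU1 : Measurable (fun ω => (h₁ (X ω) - k₁ (X ω))) := mh1.sub mp
      have mU2 : Measurable (fun ω => (h₂ (M ω) (X ω) - k₂ (M ω) (X ω))) := mh2.sub mq
      have mU3 : Measurable (fun ω => (h₃ (M ω) (X ω) - g₃ d (M ω) (X ω))) := mh3.sub mt
      have mU4 : Measurable (fun ω => (h₄ (X ω) - g₄ d' (X ω))) := mh4.sub ms
      exact (((mId.mul (((mU1.mul (measurable_const.sub mQ)).div
          (((measurable_const.sub mP).pow_const 2).mul mQ)).sub
          (mU2.div ((measurable_const.sub mP).mul (mQ.pow_const 2))))).mul (mYa.sub mT)).add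
        ((mId.mul ((measurable_const.sub mQ).div ((measurable_const.sub mP).mul mQ))).mul
          mU3.neg)).add ((((mIe.mul mU1).div ((measurable_const.sub mP).pow_const 2)).mul
          (mT.sub mS)).add ((mIe.div (measurable_const.sub mP)).mul (mU3.sub mU4))) |>.add mU4
    have hFint : Integrable (fun ω => (if D ω = d then (1:ℝ) else 0) * ((1 - (k₂ (M ω) (X ω) + 0 * (h₂ (M ω) (X ω) - k₂ (M ω) (X ω)))) / ((1 - (k₁ (X ω) + 0 * (h₁ (X ω) - k₁ (X ω)))) * (k₂ (M ω) (X ω) + 0 * (h₂ (M ω) (X ω) - k₂ (M ω) (X ω))))) * ((if Y ω ≤ a then (1:ℝ) else 0) - (g₃ d (M ω) (X ω) + 0 * (h₃ (M ω) (X ω) - g₃ d (M ω) (X ω)))) + (if D ω = d' then (1:ℝ) else 0) / (1 - (k₁ (X ω) + 0 * (h₁ (X ω) - k₁ (X ω)))) * ((g₃ d (M ω) (X ω) + 0 * (h₃ (M ω) (X ω) - g₃ d (M ω) (X ω))) - (g₄ d' (X ω) + 0 * (h₄ (X ω) - g₄ d' (X ω)))) + (g₄ d' (X ω) + 0 * (h₄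 (X ω) - g₄ d' (X ω)))) P := by
      refine integrable_of_bdd P (mF 0).aestronglyMeasurable
        (C := 9/((ε₁/2)*(ε₂/2))) (fun ω => ?_)
      obtain ⟨f1, f2, f3, f4, f5, f6, f7⟩ := hfact 0 (by simpa using hεr0.le) ω
      exact score_val_bound (ε₁/2) (ε₂/2) _ _ _ _ _ _ _ (by linarith) (by linarith)
        (by linarith) (by linarith) f1 f2 f3 f4 f5 f6 f7 (hIdb ω) (hIeb ω)
    have hbound : ∀ ω : Ω, ∀ x ∈ Metric.ball (0:ℝ) (min ε₁ ε₂ / 2),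
        ‖(if D ω = d then (1:ℝ) else 0) * ((h₁ (X ω) - k₁ (X ω)) * (1 - (k₂ (M ω) (X ω) + x * (h₂ (M ω) (X ω) - k₂ (M ω) (X ω)))) / ((1 - (k₁ (X ω) + x * (h₁ (X ω) - k₁ (X ω)))) ^ 2 * (k₂ (M ω) (X ω) + x * (h₂ (M ω) (X ω) - k₂ (M ω) (X ω)))) - (h₂ (M ω) (X ω) - k₂ (M ω) (X ω)) / ((1 - (k₁ (X ω) + x * (h₁ (X ω) - k₁ (X ω)))) * (k₂ (M ω) (X ω) + x * (h₂ (M ω) (X ω) - k₂ (M ω) (X ω))) ^ 2)) * ((if Y ω ≤ a then (1:ℝ) else 0) - (g₃ d (M ω) (X ω) + x * (h₃ (M ω) (X ω) - g₃ d (M ω) (X ω)))) + (if D ω = d then (1:ℝ) else 0) * ((1 - (k₂ (M ω) (X ω) + x * (h₂ (M ω) (X ω) - k₂ (M ω) (X ω)))) / ((1 - (k₁ (X ω) + x * (h₁ (X ω) - k₁ (X ω)))) * (k₂ (M ω) (X ω) + x * (h₂ (M ω) (X ω) - k₂ (M ω) (X ω))))) * -(h₃ (M ω) (X ω) - g₃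 d (M ω) (X ω)) + ((if D ω = d' then (1:ℝ) else 0) * (h₁ (X ω) - k₁ (X ω)) / (1 - (k₁ (X ω) + x * (h₁ (X ω) - k₁ (X ω)))) ^ 2 * ((g₃ d (M ω) (X ω) + x * (h₃ (M ω) (X ω) - g₃ d (M ω) (X ω))) - (g₄ d' (X ω) + x * (h₄ (X ω) - g₄ d' (X ω)))) + (if D ω = d' then (1:ℝ) else 0) / (1 - (k₁ (X ω) + x * (h₁ (X ω) - k₁ (X ω)))) * ((h₃ (M ω) (X ω) - g₃ d (M ω) (X ω)) - (h₄ (X ω) - g₄ d' (X ω)))) + (h₄ (X ω) - g₄ d' (X ω))‖ ≤ (14:ℝ)/((ε₁/2)^2*(ε₂/2)^2) := by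
      intro ω x hx
      obtain ⟨f1, f2, f3, f4, f5, f6, f7⟩ := hfact x (hball x hx) ω
      rw [Real.norm_eq_abs]
      exact score_deriv_bound (ε₁/2) (ε₂/2) _ _ _ _ _ _ _ _ _ _ _ (by linarith) (by linarith)
        (by linarith) (by linarith) f1 f2 f3 f4 f5 f6 (hu1b ω) (hu2b ω) (hu3b ω) (hu4b ω)
        (hIdb ω) (hIeb ω)
    have hdiff : ∀ ω : Ω, ∀ x ∈ Metric.ball (0:ℝ) (min ε₁ ε₂ / 2),
        HasDerivAt (fun r : ℝ => (if D ω = d then (1:ℝ) else 0) * ((1 - (k₂ (M ω) (X ω) + r * (h₂ (M ω) (X ω) - k₂ (M ω) (X ω)))) / ((1 - (k₁ (X ω) + r * (h₁ (X ω) - k₁ (X ω)))) * (k₂ (M ω) (X ω) + r * (h₂ (M ω) (X ω) - k₂ (M ω) (X ω))))) * ((if Y ω ≤ a then (1:ℝ) else 0) - (g₃ d (M ω) (X ω) + r * (h₃ (M ω) (X ω) - g₃ d (M ω) (X ω)))) + (if D ω = d' then (1:ℝ) else 0) / (1 - (k₁ (X ω) + r * (h₁ (X ω) - k₁ (X ω))))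 * ((g₃ d (M ω) (X ω) + r * (h₃ (M ω) (X ω) - g₃ d (M ω) (X ω))) - (g₄ d' (X ω) + r * (h₄ (X ω) - g₄ d' (X ω)))) + (g₄ d' (X ω) + r * (h₄ (X ω) - g₄ d' (X ω)))) ((if D ω = d then (1:ℝ) else 0) * ((h₁ (X ω) - k₁ (X ω)) * (1 - (k₂ (M ω) (X ω) + x * (h₂ (M ω) (X ω) - k₂ (M ω) (X ω)))) / ((1 - (k₁ (X ω) + x * (h₁ (X ω) - k₁ (X ω)))) ^ 2 * (k₂ (M ω) (X ω) + x * (h₂ (M ω) (X ω) - k₂ (M ω) (X ω)))) - (h₂ (M ω) (X ω) - k₂ (M ω) (X ω)) / ((1 - (k₁ (X ω) + x * (h₁ (X ω) - k₁ (X ω)))) * (k₂ (M ω) (X ω) + x * (h₂ (M ω) (X ω) - k₂ (M ω) (X ω))) ^ 2)) * ((if Y ω ≤ a then (1:ℝ) else 0) - (g₃ d (M ω) (X ω) + x * (h₃ (M ω) (X ω) - g₃ d (M ω) (X ω)))) + (if D ω = d then (1:ℝ) else 0) * ((1 - (k₂ (M ω) (X ω) + x * (h₂ (M ω) (X ω)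 - k₂ (M ω) (X ω)))) / ((1 - (k₁ (X ω) + x * (h₁ (X ω) - k₁ (X ω)))) * (k₂ (M ω) (X ω) + x * (h₂ (M ω) (X ω) - k₂ (M ω) (X ω))))) * -(h₃ (M ω) (X ω) - g₃ d (M ω) (X ω)) + ((if D ω = d' then (1:ℝ) else 0) * (h₁ (X ω) - k₁ (X ω)) / (1 - (k₁ (X ω) + x * (h₁ (X ω) - k₁ (X ω)))) ^ 2 * ((g₃ d (M ω) (X ω) + x * (h₃ (M ω) (X ω) - g₃ d (M ω) (X ω))) - (g₄ d' (X ω) + x * (h₄ (X ω) - g₄ d' (X ω)))) + (if D ω = d' then (1:ℝ) else 0) / (1 - (k₁ (X ω) + x * (h₁ (X ω) - k₁ (X ω)))) * ((h₃ (M ω) (X ω) - g₃ d (M ω) (X ω)) - (h₄ (X ω) - g₄ d' (X ω)))) + (h₄ (X ω) - g₄ d' (X ω))) x := by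
      intro ω x hx
      obtain ⟨f1, f2, f3, f4, f5, f6, f7⟩ := hfact x (hball x hx) ω
      exact score_hasDerivAt _ _ _ _ _ _ _ _ _ _ _
        (ne_of_gt (lt_of_lt_of_le (by linarith) f1)) (ne_of_gt (lt_of_lt_of_le (by linarith) f3))
    have key := hasDerivAt_integral_of_dominated_loc_of_deriv_le (μ := P) (x₀ := (0:ℝ))
      (F := fun r ω => (if D ω = d then (1:ℝ) else 0) * ((1 - (k₂ (M ω) (X ω) + r * (h₂ (M ω) (X ω) - k₂ (M ω) (X ω)))) / ((1 - (k₁ (X ω) + r * (h₁ (X ω) - k₁ (X ω)))) * (k₂ (M ω) (X ω) + r * (h₂ (M ω) (X ω) - k₂ (M ω) (X ω))))) * ((if Y ω ≤ a then (1:ℝ) else 0) - (g₃ d (M ω) (X ω) + r * (h₃ (M ω) (X ω) - g₃ d (M ω) (X ω)))) + (if D ω = d' then (1:ℝ) else 0) / (1 - (k₁ (X ω) + r * (h₁ (X ω) - k₁ (X ω)))) * ((g₃ d (M ω) (X ω) + r * (h₃ (M ω) (X ω) - g₃ d (M ω) (X ω))) - (g₄ d' (X ω) + r * (h₄ (X ω)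 - g₄ d' (X ω)))) + (g₄ d' (X ω) + r * (h₄ (X ω) - g₄ d' (X ω)))) (F' := fun x ω => (if D ω = d then (1:ℝ) else 0) * ((h₁ (X ω) - k₁ (X ω)) * (1 - (k₂ (M ω) (X ω) + x * (h₂ (M ω) (X ω) - k₂ (M ω) (X ω)))) / ((1 - (k₁ (X ω) + x * (h₁ (X ω) - k₁ (X ω)))) ^ 2 * (k₂ (M ω) (X ω) + x * (h₂ (M ω) (X ω) - k₂ (M ω) (X ω)))) - (h₂ (M ω) (X ω) - k₂ (M ω) (X ω)) / ((1 - (k₁ (X ω) + x * (h₁ (X ω) - k₁ (X ω)))) * (k₂ (M ω) (X ω) + x * (h₂ (M ω) (X ω) - k₂ (M ω) (X ω))) ^ 2)) * ((if Y ω ≤ a then (1:ℝ) else 0) - (g₃ d (M ω) (X ω) + x * (h₃ (M ω) (X ω) - g₃ d (M ω) (X ω)))) + (if D ω = d then (1:ℝ) else 0) * ((1 - (k₂ (M ω) (X ω) + x * (h₂ (M ω) (X ω) - k₂ (M ω) (X ω)))) / ((1 - (k₁ (X ω) + x * (h₁ (X ω) - k₁ (X ω)))) * (k₂ (M ω) (X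 ω) + x * (h₂ (M ω) (X ω) - k₂ (M ω) (X ω))))) * -(h₃ (M ω) (X ω) - g₃ d (M ω) (X ω)) + ((if D ω = d' then (1:ℝ) else 0) * (h₁ (X ω) - k₁ (X ω)) / (1 - (k₁ (X ω) + x * (h₁ (X ω) - k₁ (X ω)))) ^ 2 * ((g₃ d (M ω) (X ω) + x * (h₃ (M ω) (X ω) - g₃ d (M ω) (X ω))) - (g₄ d' (X ω) + x * (h₄ (X ω) - g₄ d' (X ω)))) + (if D ω = d' then (1:ℝ) else 0) / (1 - (k₁ (X ω) + x * (h₁ (X ω) - k₁ (X ω)))) * ((h₃ (M ω) (X ω) - g₃ d (M ω) (X ω)) - (h₄ (X ω) - g₄ d' (X ω)))) + (h₄ (X ω) - g₄ d' (X ω)))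
      (bound := fun _ => (14:ℝ)/((ε₁/2)^2*(ε₂/2)^2)) (Metric.ball_mem_nhds 0 hεr0)
      (Filter.Eventually.of_forall fun r => (mF r).aestronglyMeasurable) hFint
      mFp0.aestronglyMeasurable
      (ae_of_all _ hbound) (integrable_const _) (ae_of_all _ hdiff)
    have hzero : ∫ ω, (if D ω = d then (1:ℝ) else 0) * ((h₁ (X ω) - k₁ (X ω)) * (1 - (k₂ (M ω) (X ω) + 0 * (h₂ (M ω) (X ω) - k₂ (M ω) (X ω)))) / ((1 - (k₁ (X ω) + 0 * (h₁ (X ω) - k₁ (X ω)))) ^ 2 * (k₂ (M ω) (X ω) + 0 * (h₂ (M ω) (X ω) - k₂ (M ω) (X ω)))) - (h₂ (M ω) (X ω) - k₂ (M ω) (X ω)) / ((1 - (k₁ (X ω) + 0 * (h₁ (X ω) - k₁ (X ω)))) * (k₂ (M ω) (X ω) + 0 * (h₂ (M ω) (X ω) - k₂ (M ω) (X ω))) ^ 2)) * ((if Y ω ≤ a then (1:ℝ) else 0) - (g₃ d (M ω) (X ω) + 0 * (h₃ (M ω) (X ω) - g₃ d (M ω) (X ω)))) + (if D ω = d then (1:ℝ)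 else 0) * ((1 - (k₂ (M ω) (X ω) + 0 * (h₂ (M ω) (X ω) - k₂ (M ω) (X ω)))) / ((1 - (k₁ (X ω) + 0 * (h₁ (X ω) - k₁ (X ω)))) * (k₂ (M ω) (X ω) + 0 * (h₂ (M ω) (X ω) - k₂ (M ω) (X ω))))) * -(h₃ (M ω) (X ω) - g₃ d (M ω) (X ω)) + ((if D ω = d' then (1:ℝ) else 0) * (h₁ (X ω) - k₁ (X ω)) / (1 - (k₁ (X ω) + 0 * (h₁ (X ω) - k₁ (X ω)))) ^ 2 * ((g₃ d (M ω) (X ω) + 0 * (h₃ (M ω) (X ω) - g₃ d (M ω) (X ω))) - (g₄ d' (X ω) + 0 * (h₄ (X ω) - g₄ d' (X ω)))) + (if D ω = d' then (1:ℝ) else 0) / (1 - (k₁ (X ω) + 0 * (h₁ (X ω) - k₁ (X ω)))) * ((h₃ (M ω) (X ω) - g₃ d (M ω) (X ω)) - (h₄ (X ω) - g₄ d' (X ω)))) + (h₄ (X ω) - g₄ d' (X ω)) ∂P = 0 := by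
      have hsum : ∀ ω : Ω, (if D ω = d then (1:ℝ) else 0) * ((h₁ (X ω) - k₁ (X ω)) * (1 - (k₂ (M ω) (X ω) + 0 * (h₂ (M ω) (X ω) - k₂ (M ω) (X ω)))) / ((1 - (k₁ (X ω) + 0 * (h₁ (X ω) - k₁ (X ω)))) ^ 2 * (k₂ (M ω) (X ω) + 0 * (h₂ (M ω) (X ω) - k₂ (M ω) (X ω)))) - (h₂ (M ω) (X ω) - k₂ (M ω) (X ω)) / ((1 - (k₁ (X ω) + 0 * (h₁ (X ω) - k₁ (X ω)))) * (k₂ (M ω) (X ω) + 0 * (h₂ (M ω) (X ω) - k₂ (M ω) (X ω))) ^ 2)) * ((if Y ω ≤ a then (1:ℝ) else 0) - (g₃ d (M ω) (X ω) + 0 * (h₃ (M ω) (X ω) - g₃ d (M ω) (X ω)))) + (if D ω = d then (1:ℝ) else 0) * ((1 - (k₂ (M ω) (X ω) + 0 * (h₂ (M ω) (X ω) - k₂ (M ω) (X ω)))) / ((1 - (k₁ (X ω) + 0 * (h₁ (X ω) - k₁ (X ω)))) * (k₂ (M ω) (X ω) + 0 * (h₂ (M ω) (X ω) - k₂ (M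 ω) (X ω))))) * -(h₃ (M ω) (X ω) - g₃ d (M ω) (X ω)) + ((if D ω = d' then (1:ℝ) else 0) * (h₁ (X ω) - k₁ (X ω)) / (1 - (k₁ (X ω) + 0 * (h₁ (X ω) - k₁ (X ω)))) ^ 2 * ((g₃ d (M ω) (X ω) + 0 * (h₃ (M ω) (X ω) - g₃ d (M ω) (X ω))) - (g₄ d' (X ω) + 0 * (h₄ (X ω) - g₄ d' (X ω)))) + (if D ω = d' then (1:ℝ) else 0) / (1 - (k₁ (X ω) + 0 * (h₁ (X ω) - k₁ (X ω)))) * ((h₃ (M ω) (X ω) - g₃ d (M ω) (X ω)) - (h₄ (X ω) - g₄ d' (X ω)))) + (h₄ (X ω) - g₄ d' (X ω)) = ((if D ω = d then (1:ℝ) else 0) * (1 - k₂ (M ω) (X ω)) / ((1 - k₁ (X ω)) ^ 2 * k₂ (M ω) (X ω)) * ((if Y ω ≤ a then (1:ℝ) else 0) - g₃ d (M ω) (X ω)) + (if D ω = d' then (1:ℝ) else 0) / (1 - k₁ (X ω)) ^ 2 * (g₃ d (M ω) (X ω) - g₄ d' (X ω))) * (h₁ (X ω) - k₁ (X ω)) +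 (-((if D ω = d then (1:ℝ) else 0) / ((1 - k₁ (X ω)) * k₂ (M ω) (X ω) ^ 2)) * ((if Y ω ≤ a then (1:ℝ) else 0) - g₃ d (M ω) (X ω))) * (h₂ (M ω) (X ω) - k₂ (M ω) (X ω)) + ((if D ω = d' then (1:ℝ) else 0) / (1 - k₁ (X ω)) - (if D ω = d then (1:ℝ) else 0) * (1 - k₂ (M ω) (X ω)) / ((1 - k₁ (X ω)) * k₂ (M ω) (X ω))) * (h₃ (M ω) (X ω) - g₃ d (M ω) (X ω)) + (1 - (if D ω = d' then (1:ℝ) else 0) / (1 - k₁ (X ω))) * (h₄ (X ω) - g₄ d' (X ω)) := by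
        intro ω
        have hA := hne1 (X ω); have hB := hne2 (M ω) (X ω)
        set pp := k₁ (X ω) with hpp
        set qq := k₂ (M ω) (X ω) with hqq
        set tt := g₃ d (M ω) (X ω) with htt
        set ss := g₄ d' (X ω) with hss
        set a1 := h₁ (X ω) with ha1
        set a2 := h₂ (M ω) (X ω) with ha2
        set a3 := h₃ (M ω) (X ω) with ha3
        set a4 := h₄ (X ω) with ha4
        set ii := (if D ω = d then (1:ℝ) else 0) with hii
        set jj := (if D ω = d' then (1:ℝ) else 0) with hjj
        set yy := (if Y ω ≤ a then (1:ℝ) else 0) with hyy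
        simp only [zero_mul, add_zero]
        field_simp
        ring
      have e0 : ∫ ω, (if D ω = d then (1:ℝ) else 0) * ((h₁ (X ω) - k₁ (X ω)) * (1 - (k₂ (M ω) (X ω) + 0 * (h₂ (M ω) (X ω) - k₂ (M ω) (X ω)))) / ((1 - (k₁ (X ω) + 0 * (h₁ (X ω) - k₁ (X ω)))) ^ 2 * (k₂ (M ω) (X ω) + 0 * (h₂ (M ω) (X ω) - k₂ (M ω) (X ω)))) - (h₂ (M ω) (X ω) - k₂ (M ω) (X ω)) / ((1 - (k₁ (X ω) + 0 * (h₁ (X ω) - k₁ (X ω)))) * (k₂ (M ω) (X ω) + 0 * (h₂ (M ω) (X ω) - k₂ (M ω) (X ω))) ^ 2)) * ((if Y ω ≤ a then (1:ℝ) else 0) - (g₃ d (M ω) (X ω) + 0 * (h₃ (M ω) (X ω) - g₃ d (M ω) (X ω)))) + (if D ω = d then (1:ℝ) else 0) * ((1 - (k₂ (M ω) (X ω) + 0 * (h₂ (M ω) (X ω) - k₂ (M ω) (X ω)))) / ((1 - (k₁ (X ω) + 0 * (h₁ (X ω) - k₁ (X ω)))) * (k₂ (M ω) (X ω) + 0 *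 (h₂ (M ω) (X ω) - k₂ (M ω) (X ω))))) * -(h₃ (M ω) (X ω) - g₃ d (M ω) (X ω)) + ((if D ω = d' then (1:ℝ) else 0) * (h₁ (X ω) - k₁ (X ω)) / (1 - (k₁ (X ω) + 0 * (h₁ (X ω) - k₁ (X ω)))) ^ 2 * ((g₃ d (M ω) (X ω) + 0 * (h₃ (M ω) (X ω) - g₃ d (M ω) (X ω))) - (g₄ d' (X ω) + 0 * (h₄ (X ω) - g₄ d' (X ω)))) + (if D ω = d' then (1:ℝ) else 0) / (1 - (k₁ (X ω) + 0 * (h₁ (X ω) - k₁ (X ω)))) * ((h₃ (M ω) (X ω) - g₃ d (M ω) (X ω)) - (h₄ (X ω) - g₄ d' (X ω)))) + (h₄ (X ω) - g₄ d' (X ω)) ∂P = ∫ ω, (((if D ω = d then (1:ℝ) else 0) * (1 - k₂ (M ω) (X ω)) / ((1 - k₁ (X ω)) ^ 2 * k₂ (M ω) (X ω)) * ((if Y ω ≤ a then (1:ℝ) else 0) - g₃ d (M ω) (X ω)) + (if D ω = d' then (1:ℝ) else 0) / (1 - k₁ (X ω)) ^ 2 * (g₃ d (M ω) (X ω) - g₄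 d' (X ω))) * (h₁ (X ω) - k₁ (X ω)) + (-((if D ω = d then (1:ℝ) else 0) / ((1 - k₁ (X ω)) * k₂ (M ω) (X ω) ^ 2)) * ((if Y ω ≤ a then (1:ℝ) else 0) - g₃ d (M ω) (X ω))) * (h₂ (M ω) (X ω) - k₂ (M ω) (X ω)) + ((if D ω = d' then (1:ℝ) else 0) / (1 - k₁ (X ω)) - (if D ω = d then (1:ℝ) else 0) * (1 - k₂ (M ω) (X ω)) / ((1 - k₁ (X ω)) * k₂ (M ω) (X ω))) * (h₃ (M ω) (X ω) - g₃ d (M ω) (X ω)) + (1 - (if D ω = d' then (1:ℝ) else 0) / (1 - k₁ (X ω))) * (h₄ (X ω) - g₄ d' (X ω))) ∂P :=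
        integral_congr_ae (ae_of_all _ hsum)
      have e1 : ∫ ω, (((if D ω = d then (1:ℝ) else 0) * (1 - k₂ (M ω) (X ω)) / ((1 - k₁ (X ω)) ^ 2 * k₂ (M ω) (X ω)) * ((if Y ω ≤ a then (1:ℝ) else 0) - g₃ d (M ω) (X ω)) + (if D ω = d' then (1:ℝ) else 0) / (1 - k₁ (X ω)) ^ 2 * (g₃ d (M ω) (X ω) - g₄ d' (X ω))) * (h₁ (X ω) - k₁ (X ω)) + (-((if D ω = d then (1:ℝ) else 0) / ((1 - k₁ (X ω)) * k₂ (M ω) (X ω) ^ 2)) * ((if Y ω ≤ a then (1:ℝ) else 0) - g₃ d (M ω) (X ω))) * (h₂ (M ω) (X ω) - k₂ (M ω) (X ω)) + ((if D ω = d' then (1:ℝ) else 0) / (1 - k₁ (X ω)) - (if D ω = d then (1:ℝ) else 0) * (1 - k₂ (M ω) (X ω)) / ((1 - k₁ (X ω)) * k₂ (M ω) (X ω))) * (h₃ (M ω) (X ω) - g₃ d (M ω) (X ω)) + (1 - (if D ω = d' then (1:ℝ) else 0) / (1 - k₁ (X ω))) * (h₄ (X ω) - g₄ d' (X ω))) 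∂P
          = (∫ ω, (((if D ω = d then (1:ℝ) else 0) * (1 - k₂ (M ω) (X ω)) / ((1 - k₁ (X ω)) ^ 2 * k₂ (M ω) (X ω)) * ((if Y ω ≤ a then (1:ℝ) else 0) - g₃ d (M ω) (X ω)) + (if D ω = d' then (1:ℝ) else 0) / (1 - k₁ (X ω)) ^ 2 * (g₃ d (M ω) (X ω) - g₄ d' (X ω))) * (h₁ (X ω) - k₁ (X ω)) + (-((if D ω = d then (1:ℝ) else 0) / ((1 - k₁ (X ω)) * k₂ (M ω) (X ω) ^ 2)) * ((if Y ω ≤ a then (1:ℝ) else 0) - g₃ d (M ω) (X ω))) * (h₂ (M ω) (X ω) - k₂ (M ω) (X ω)) + ((if D ω = d' then (1:ℝ) else 0) / (1 - k₁ (X ω)) - (if D ω = d then (1:ℝ) else 0) * (1 - k₂ (M ω) (X ω)) / ((1 - k₁ (X ω)) * k₂ (M ω) (X ω))) * (h₃ (M ω) (X ω) - g₃ d (M ω) (X ω))) ∂P) + ∫ ω, (1 - (if D ω = d' then (1:ℝ) else 0) / (1 - k₁ (X ω))) * (h₄ (X ω) - g₄ d' (X ω)) ∂P :=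
        integral_add ((intJ1.add intJ2).add intJ3) intJ4
      have e2 : ∫ ω, (((if D ω = d then (1:ℝ) else 0) * (1 - k₂ (M ω) (X ω)) / ((1 - k₁ (X ω)) ^ 2 * k₂ (M ω) (X ω)) * ((if Y ω ≤ a then (1:ℝ) else 0) - g₃ d (M ω) (X ω)) + (if D ω = d' then (1:ℝ) else 0) / (1 - k₁ (X ω)) ^ 2 * (g₃ d (M ω) (X ω) - g₄ d' (X ω))) * (h₁ (X ω) - k₁ (X ω)) + (-((if D ω = d then (1:ℝ) else 0) / ((1 - k₁ (X ω)) * k₂ (M ω) (X ω) ^ 2)) * ((if Y ω ≤ a then (1:ℝ) else 0) - g₃ d (M ω) (X ω))) * (h₂ (M ω) (X ω) - k₂ (M ω) (X ω)) + ((if D ω = d' then (1:ℝ) else 0) / (1 - k₁ (X ω)) - (if D ω = d then (1:ℝ) else 0) * (1 - k₂ (M ω) (X ω)) / ((1 - k₁ (X ω)) * k₂ (M ω) (X ω))) * (h₃ (M ω) (X ω) - g₃ d (M ω) (X ω))) ∂P = (∫ ω, (((if D ω = d then (1:ℝ) else 0) * (1 - k₂ (M ω) (X ω)) / ((1 - k₁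 (X ω)) ^ 2 * k₂ (M ω) (X ω)) * ((if Y ω ≤ a then (1:ℝ) else 0) - g₃ d (M ω) (X ω)) + (if D ω = d' then (1:ℝ) else 0) / (1 - k₁ (X ω)) ^ 2 * (g₃ d (M ω) (X ω) - g₄ d' (X ω))) * (h₁ (X ω) - k₁ (X ω)) + (-((if D ω = d then (1:ℝ) else 0) / ((1 - k₁ (X ω)) * k₂ (M ω) (X ω) ^ 2)) * ((if Y ω ≤ a then (1:ℝ) else 0) - g₃ d (M ω) (X ω))) * (h₂ (M ω) (X ω) - k₂ (M ω) (X ω))) ∂P) + ∫ ω, ((if D ω = d' then (1:ℝ) else 0) / (1 - k₁ (X ω)) - (if D ω = d then (1:ℝ) else 0) * (1 - k₂ (M ω) (X ω)) / ((1 - k₁ (X ω)) * k₂ (M ω) (X ω))) * (h₃ (M ω) (X ω) - g₃ d (M ω) (X ω)) ∂P :=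
        integral_add (intJ1.add intJ2) intJ3
      have e3 : ∫ ω, (((if D ω = d then (1:ℝ) else 0) * (1 - k₂ (M ω) (X ω)) / ((1 - k₁ (X ω)) ^ 2 * k₂ (M ω) (X ω)) * ((if Y ω ≤ a then (1:ℝ) else 0) - g₃ d (M ω) (X ω)) + (if D ω = d' then (1:ℝ) else 0) / (1 - k₁ (X ω)) ^ 2 * (g₃ d (M ω) (X ω) - g₄ d' (X ω))) * (h₁ (X ω) - k₁ (X ω)) + (-((if D ω = d then (1:ℝ) else 0) / ((1 - k₁ (X ω)) * k₂ (M ω) (X ω) ^ 2)) * ((if Y ω ≤ a then (1:ℝ) else 0) - g₃ d (M ω) (X ω))) * (h₂ (M ω) (X ω) - k₂ (M ω) (X ω))) ∂P = (∫ ω, ((if D ω = d then (1:ℝ) else 0) * (1 - k₂ (M ω) (X ω)) / ((1 - k₁ (X ω)) ^ 2 * k₂ (M ω) (X ω)) * ((if Y ω ≤ a then (1:ℝ) else 0) - g₃ d (M ω) (X ω)) + (if D ω = d' then (1:ℝ) else 0) / (1 - k₁ (X ω)) ^ 2 * (g₃ d (M ω) (X ω) - g₄ d' (X ω))) * (h₁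 (X ω) - k₁ (X ω)) ∂P) + ∫ ω, (-((if D ω = d then (1:ℝ) else 0) / ((1 - k₁ (X ω)) * k₂ (M ω) (X ω) ^ 2)) * ((if Y ω ≤ a then (1:ℝ) else 0) - g₃ d (M ω) (X ω))) * (h₂ (M ω) (X ω) - k₂ (M ω) (X ω)) ∂P :=
        integral_add intJ1 intJ2
      rw [e0, e1, e2, e3, partJ1, partJ2, partJ3, partJ4]
      norm_num
    have h2 : HasDerivAt (fun r : ℝ => ∫ ω, (if D ω = d then (1:ℝ) else 0) * ((1 - (k₂ (M ω) (X ω) + r * (h₂ (M ω) (X ω) - k₂ (M ω) (X ω)))) / ((1 - (k₁ (X ω) + r * (h₁ (X ω) - k₁ (X ω)))) * (k₂ (M ω) (X ω) + r * (h₂ (M ω) (X ω) - k₂ (M ω) (X ω))))) * ((if Y ω ≤ a then (1:ℝ) else 0) - (g₃ d (M ω) (X ω) + r * (h₃ (M ω) (X ω) - g₃ d (M ω) (X ω)))) + (if D ω = d' then (1:ℝ) else 0) / (1 - (k₁ (X ω) + r * (h₁ (X ω) - k₁ (X ω)))) * ((g₃ d (M ω) (X ω) + r * (h₃ (M ω)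 (X ω) - g₃ d (M ω) (X ω))) - (g₄ d' (X ω) + r * (h₄ (X ω) - g₄ d' (X ω)))) + (g₄ d' (X ω) + r * (h₄ (X ω) - g₄ d' (X ω))) ∂P) (∫ ω, (if D ω = d then (1:ℝ) else 0) * ((h₁ (X ω) - k₁ (X ω)) * (1 - (k₂ (M ω) (X ω) + 0 * (h₂ (M ω) (X ω) - k₂ (M ω) (X ω)))) / ((1 - (k₁ (X ω) + 0 * (h₁ (X ω) - k₁ (X ω)))) ^ 2 * (k₂ (M ω) (X ω) + 0 * (h₂ (M ω) (X ω) - k₂ (M ω) (X ω)))) - (h₂ (M ω) (X ω) - k₂ (M ω) (X ω)) / ((1 - (k₁ (X ω) + 0 * (h₁ (X ω) - k₁ (X ω)))) * (k₂ (M ω) (X ω) + 0 * (h₂ (M ω) (X ω) - k₂ (M ω) (X ω))) ^ 2)) * ((if Y ω ≤ a then (1:ℝ) else 0) - (g₃ d (M ω) (X ω) + 0 * (h₃ (M ω) (X ω) - g₃ d (M ω) (X ω)))) + (if D ω = d then (1:ℝ) else 0) * ((1 - (k₂ (M ω) (X ω) + 0 * (h₂ (M ω) (X ω) - k₂ (M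 ω) (X ω)))) / ((1 - (k₁ (X ω) + 0 * (h₁ (X ω) - k₁ (X ω)))) * (k₂ (M ω) (X ω) + 0 * (h₂ (M ω) (X ω) - k₂ (M ω) (X ω))))) * -(h₃ (M ω) (X ω) - g₃ d (M ω) (X ω)) + ((if D ω = d' then (1:ℝ) else 0) * (h₁ (X ω) - k₁ (X ω)) / (1 - (k₁ (X ω) + 0 * (h₁ (X ω) - k₁ (X ω)))) ^ 2 * ((g₃ d (M ω) (X ω) + 0 * (h₃ (M ω) (X ω) - g₃ d (M ω) (X ω))) - (g₄ d' (X ω) + 0 * (h₄ (X ω) - g₄ d' (X ω)))) + (if D ω = d' then (1:ℝ) else 0) / (1 - (k₁ (X ω) + 0 * (h₁ (X ω) - k₁ (X ω)))) * ((h₃ (M ω) (X ω) - g₃ d (M ω) (X ω)) - (h₄ (X ω) - g₄ d' (X ω)))) + (h₄ (X ω) - g₄ d' (X ω)) ∂P) 0 := key.2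
    rw [hzero] at h2
    have hfun : (fun r : ℝ => ∫ ω, ((if D ω = d then (1:ℝ) else 0)
            * ((1 - (g₂ (M ω) (X ω) + r * (h₂ (M ω) (X ω) - g₂ (M ω) (X ω))))
                / ((1 - (g₁ (X ω) + r * (h₁ (X ω) - g₁ (X ω))))
                    * (g₂ (M ω) (X ω) + r * (h₂ (M ω) (X ω) - g₂ (M ω) (X ω)))))
            * ((if Y ω ≤ a then (1:ℝ) else 0)
                - (g₃ d (M ω) (X ω) + r * (h₃ (M ω) (X ω) - g₃ d (M ω) (X ω))))
          + (if D ω = d' then (1:ℝ) else 0)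
              / (1 - (g₁ (X ω) + r * (h₁ (X ω) - g₁ (X ω))))
            * ((g₃ d (M ω) (X ω) + r * (h₃ (M ω) (X ω) - g₃ d (M ω) (X ω)))
                - (g₄ d' (X ω) + r * (h₄ (X ω) - g₄ d' (X ω))))
          + (g₄ d' (X ω) + r * (h₄ (X ω) - g₄ d' (X ω)))) ∂P) = fun r : ℝ => ∫ ω, (if D ω = d then (1:ℝ) else 0) * ((1 - (k₂ (M ω) (X ω) + r * (h₂ (M ω) (X ω) - k₂ (M ω) (X ω)))) / ((1 - (k₁ (X ω) + r * (h₁ (X ω) - k₁ (X ω)))) * (k₂ (M ω) (X ω) + r * (h₂ (M ω) (X ω) - k₂ (M ω) (X ω))))) * ((if Y ω ≤ a then (1:ℝ) else 0) - (g₃ d (M ω) (X ω) + r * (h₃ (M ω) (X ω) - g₃ d (M ω) (X ω)))) + (if D ω = d' then (1:ℝ) else 0) / (1 - (k₁ (X ω) + r * (h₁ (X ω) - k₁ (X ω)))) * ((g₃ d (M ω) (X ω) + r * (h₃ (M ω) (X ω) - g₃ d (M ω) (X ω))) - (g₄ d' (X ω) + r * (h₄ (X ω) - g₄ d' (X ω))))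 + (g₄ d' (X ω) + r * (h₄ (X ω) - g₄ d' (X ω))) ∂P := by
      funext r
      refine integral_congr_ae ?_
      filter_upwards [hk₁ae, hk₂ae] with ω e1 e2
      rw [← e1, ← e2]
    rw [hfun]
    exact h2
  · refine (integral_congr_ae ?_).trans partJ1
    filter_upwards [hk₁ae, hk₂ae] with ω h1 h2
    rw [← h1, ← h2]
  · refine (integral_congr_ae ?_).trans partJ2
    filter_upwards [hk₁ae, hk₂ae] with ω h1 h2
    rw [← h1, ← h2]
  · refine (integral_congr_ae ?_).trans partJ3
    filter_upwards [hk₁ae, hk₂ae] with ω h1 h2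
    rw [← h1, ← h2]
  · refine (integral_congr_ae ?_).trans partJ4
    filter_upwards [hk₁ae] with ω h1
    rw [← h1]
end

section
/- First-order L² stability of the efficient score in the nuisance parameters. Let v̂ = (p̂_δ, q̂_δ, F̂_a, ĝ_a) be measurable plug-in nuisance functions satisfying the same overlap bands as the truth (ε₁ ≤ p̂_δ ≤ 1−ε₁, ε₂ ≤ q̂_δ ≤ 1−ε₂ a.s., 0 ≤ F̂_a, ĝ_a ≤ 1), and suppose each component difference has L²(P)-norm at most δ: ‖p̂_{d'}(X)−p_{d'}(X)‖_{P,2} ≤ δ, ‖q̂_d(M,X)−q_d(M,X)‖_{P,2} ≤ δ, ‖F̂_a(d,M,X)−F_a(d,M,X)‖_{P,2} ≤ δ, ‖ĝ_a(d',X)−g_a(d',X)‖_{P,2} ≤ δ. Then there exists a constant C depending only on ε₁ and ε₂ (and not on δ, a, or the distribution P) such that ‖ψ_{d,d',a}(v̂) − ψ_{d,d',a}(v⁰)‖_{P,2} ≤ C·δ, where ψ_{d,d',a}(v) denotes the efficient score evaluated at nuisance functions v. -/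
open MeasureTheory

universe u v w

private lemma hb_aux (x w c A E : ℝ) (hE : 0 < E) (hc : E ≤ c) (hx : |x| ≤ A) (hw : |w| ≤ 1) :
    |x * w / c| ≤ A / E := by
  rw [abs_div, abs_mul, abs_of_pos (hE.trans_le hc)]
  have hA0 : 0 ≤ A := (abs_nonneg x).trans hx
  have h1 : |x| * |w| ≤ A := by
    calc |x| * |w| ≤ A * 1 := mul_le_mul hx hw (abs_nonneg _) hA0
    _ = A := mul_one A
  exact div_le_div₀ hA0 h1 hE hc

private lemma key_bound (ε₁ ε₂ : ℝ) (hε₁ : 0 < ε₁) (hε₂ : 0 < ε₂)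
    (hε₁' : ε₁ ≤ 1) (hε₂' : ε₂ ≤ 1)
    (p phat q qhat F Fhat g ghat i j y : ℝ)
    (hp : ε₁ ≤ p) (hp1 : p ≤ 1) (hph : ε₁ ≤ phat) (hph1 : phat ≤ 1)
    (hq : ε₂ ≤ q) (hq1 : q ≤ 1) (hqh : ε₂ ≤ qhat) (hqh1 : qhat ≤ 1)
    (hyF : |y - F| ≤ 1) (hyFh : |y - Fhat| ≤ 1)
    (hFg : |F - g| ≤ 1) (hFgh : |Fhat - ghat| ≤ 1)
    (hgg : |ghat - g| ≤ 1)
    (hi : |i| ≤ 1) (hj : |j| ≤ 1) :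
    |(i * (1 - qhat) / (phat * qhat) * (y - Fhat) + j / phat * (Fhat - ghat) + ghat)
      - (i * (1 - q) / (p * q) * (y - F) + j / p * (F - g) + g)|
    ≤ (4 / (ε₁ ^ 2 * ε₂ ^ 2)) * (|phat - p| + |qhat - q| + |Fhat - F| + |ghat - g|) := by
  set E : ℝ := ε₁ ^ 2 * ε₂ ^ 2 with hEdef
  have hE : 0 < E := by positivity
  have h12 : (0:ℝ) < ε₁ * ε₂ := by positivity
  have h121 : ε₁ * ε₂ ≤ 1 := mul_le_one₀ hε₁' hε₂.le hε₂'
  have hEe : E ≤ ε₁ * ε₂ := by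
    calc E = (ε₁ * ε₂) * (ε₁ * ε₂) := by rw [hEdef]; ring
    _ ≤ 1 * (ε₁ * ε₂) := mul_le_mul_of_nonneg_right h121 h12.le
    _ = ε₁ * ε₂ := one_mul _
  have hE1' : E ≤ 1 := hEe.trans h121
  have hpq : ε₁ * ε₂ ≤ p * q := mul_le_mul hp hq hε₂.le (by linarith)
  have hphqh : ε₁ * ε₂ ≤ phat * qhat := mul_le_mul hph hqh hε₂.le (by linarith)
  have hpq0 : (0:ℝ) < p * q := lt_of_lt_of_le (by positivity) hpq
  have hphqh0 : (0:ℝ) < phat * qhat := lt_of_lt_of_le (by positivity) hphqh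
  have hpqE : E ≤ p * q := hEe.trans hpq
  have hphqhE : E ≤ phat * qhat := hEe.trans hphqh
  have hE11 : E ≤ ε₁ * ε₁ := by
    calc E = ε₁ ^ 2 * ε₂ ^ 2 := hEdef
    _ ≤ ε₁ ^ 2 * 1 := mul_le_mul_of_nonneg_left (by nlinarith) (by positivity)
    _ = ε₁ * ε₁ := by ring
  have hpphE : E ≤ phat * p :=
    hE11.trans (mul_le_mul hph hp hε₁.le (by linarith))
  have hpE : E ≤ p := by nlinarith
  -- decomposition
  have hq0 : 0 ≤ q := hε₂.le.trans hq
  have hqh0 : 0 ≤ qhat := hε₂.le.trans hqh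
  -- inner1 split
  have split1 : (1 - qhat) / (phat * qhat) * (y - Fhat) - (1 - q) / (p * q) * (y - F)
      = (q - qhat) * (y - Fhat) / (phat * qhat)
        + (p * q - phat * qhat) * ((1 - q) * (y - Fhat)) / ((phat * qhat) * (p * q))
        + (F - Fhat) * (1 - q) / (p * q) := by
    have hp0 : p ≠ 0 := ne_of_gt (hε₁.trans_le hp)
    have hph0 : phat ≠ 0 := ne_of_gt (hε₁.trans_le hph)
    have hq0' : q ≠ 0 := ne_of_gt (hε₂.trans_le hq)
    have hqh0' : qhat ≠ 0 := ne_of_gt (hε₂.trans_le hqh)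
    field_simp
    ring
  have b1 : |(q - qhat) * (y - Fhat) / (phat * qhat)| ≤ |qhat - q| / E := by
    rw [abs_sub_comm qhat q]
    exact hb_aux _ _ _ _ _ hE hphqhE le_rfl hyFh
  have hx2 : |p * q - phat * qhat| ≤ |phat - p| + |qhat - q| := by
    have hid : p * q - phat * qhat = (p - phat) * q + phat * (q - qhat) := by ring
    rw [hid]
    calc |(p - phat) * q + phat * (q - qhat)|
        ≤ |(p - phat) * q| + |phat * (q - qhat)| := abs_add_le _ _
      _ ≤ |p - phat| + |q - qhat| := by
          rw [abs_mul, abs_mul]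
          have h1 : |(p - phat)| * |q| ≤ |p - phat| * 1 :=
            mul_le_mul_of_nonneg_left (abs_le.mpr ⟨by linarith, hq1⟩) (abs_nonneg _)
          have h2 : |phat| * |q - qhat| ≤ 1 * |q - qhat| :=
            mul_le_mul_of_nonneg_right (abs_le.mpr ⟨by linarith, hph1⟩) (abs_nonneg _)
          linarith
      _ = |phat - p| + |qhat - q| := by rw [abs_sub_comm p phat, abs_sub_comm q qhat]
  have hEE : E ≤ (phat * qhat) * (p * q) := by
    have h := mul_le_mul hphqh hpq h12.le hphqh0.le
    calc E = (ε₁ * ε₂) * (ε₁ * ε₂) := by rw [hEdef]; ring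
    _ ≤ (phat * qhat) * (p * q) := h
  have hw2 : |(1 - q) * (y - Fhat)| ≤ 1 := by
    rw [abs_mul]
    calc |1 - q| * |y - Fhat| ≤ 1 * 1 :=
      mul_le_mul (abs_le.mpr ⟨by linarith, by linarith⟩) hyFh (abs_nonneg _) zero_le_one
    _ = 1 := one_mul 1
  have b2 : |(p * q - phat * qhat) * ((1 - q) * (y - Fhat)) / ((phat * qhat) * (p * q))|
      ≤ (|phat - p| + |qhat - q|) / E :=
    hb_aux _ _ _ _ _ hE hEE hx2 hw2
  have b3 : |(F - Fhat) * (1 - q) / (p * q)| ≤ |Fhat - F| / E := by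
    rw [abs_sub_comm Fhat F]
    exact hb_aux _ _ _ _ _ hE hpqE le_rfl (abs_le.mpr ⟨by linarith, by linarith⟩)
  have binner1 : |(1 - qhat) / (phat * qhat) * (y - Fhat) - (1 - q) / (p * q) * (y - F)|
      ≤ (|qhat - q| + (|phat - p| + |qhat - q|) + |Fhat - F|) / E := by
    rw [split1]
    calc |(q - qhat) * (y - Fhat) / (phat * qhat)
          + (p * q - phat * qhat) * ((1 - q) * (y - Fhat)) / ((phat * qhat) * (p * q))
          + (F - Fhat) * (1 - q) / (p * q)|
        ≤ |(q - qhat) * (y - Fhat) / (phat * qhat)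
          + (p * q - phat * qhat) * ((1 - q) * (y - Fhat)) / ((phat * qhat) * (p * q))|
          + |(F - Fhat) * (1 - q) / (p * q)| := abs_add_le _ _
      _ ≤ |(q - qhat) * (y - Fhat) / (phat * qhat)|
          + |(p * q - phat * qhat) * ((1 - q) * (y - Fhat)) / ((phat * qhat) * (p * q))|
          + |(F - Fhat) * (1 - q) / (p * q)| := by
            have h := abs_add_le ((q - qhat) * (y - Fhat) / (phat * qhat)) ((p * q - phat * qhat) * ((1 - q) * (y - Fhat)) / ((phat * qhat) * (p * q)))
            linarith
      _ ≤ |qhat - q| / E + (|phat - p| + |qhat - q|) / E + |Fhat - F| / E := by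
          linarith
      _ = (|qhat - q| + (|phat - p| + |qhat - q|) + |Fhat - F|) / E := by ring
  -- inner2 split
  have split2 : (Fhat - ghat) / phat - (F - g) / p
      = (p - phat) * (Fhat - ghat) / (phat * p) + ((Fhat - F) - (ghat - g)) * 1 / p := by
    have hp0 : p ≠ 0 := ne_of_gt (hε₁.trans_le hp)
    have hph0 : phat ≠ 0 := ne_of_gt (hε₁.trans_le hph)
    field_simp
    ring
  have c1 : |(p - phat) * (Fhat - ghat) / (phat * p)| ≤ |phat - p| / E := by
    rw [abs_sub_comm phat p]
    exact hb_aux _ _ _ _ _ hE hpphE le_rfl hFgh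
  have c2 : |((Fhat - F) - (ghat - g)) * 1 / p| ≤ (|Fhat - F| + |ghat - g|) / E := by
    refine hb_aux _ _ _ _ _ hE hpE ?_ (by norm_num)
    exact abs_sub _ _
  have binner2 : |(Fhat - ghat) / phat - (F - g) / p|
      ≤ (|phat - p| + (|Fhat - F| + |ghat - g|)) / E := by
    rw [split2]
    calc |(p - phat) * (Fhat - ghat) / (phat * p) + ((Fhat - F) - (ghat - g)) * 1 / p|
        ≤ |(p - phat) * (Fhat - ghat) / (phat * p)| + |((Fhat - F) - (ghat - g)) * 1 / p| :=
          abs_add_le _ _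
      _ ≤ |phat - p| / E + (|Fhat - F| + |ghat - g|) / E := by linarith
      _ = (|phat - p| + (|Fhat - F| + |ghat - g|)) / E := by ring
  -- assemble
  have hdecomp : (i * (1 - qhat) / (phat * qhat) * (y - Fhat) + j / phat * (Fhat - ghat) + ghat)
      - (i * (1 - q) / (p * q) * (y - F) + j / p * (F - g) + g)
      = i * ((1 - qhat) / (phat * qhat) * (y - Fhat) - (1 - q) / (p * q) * (y - F))
        + j * ((Fhat - ghat) / phat - (F - g) / p) + (ghat - g) := by ring
  rw [hdecomp]
  have habs1 : |i * ((1 - qhat) / (phat * qhat) * (y - Fhat) - (1 - q) / (p * q) * (y - F))|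
      ≤ (|qhat - q| + (|phat - p| + |qhat - q|) + |Fhat - F|) / E := by
    rw [abs_mul]
    calc |i| * |(1 - qhat) / (phat * qhat) * (y - Fhat) - (1 - q) / (p * q) * (y - F)|
        ≤ 1 * ((|qhat - q| + (|phat - p| + |qhat - q|) + |Fhat - F|) / E) :=
          mul_le_mul hi binner1 (abs_nonneg _) zero_le_one
      _ = (|qhat - q| + (|phat - p| + |qhat - q|) + |Fhat - F|) / E := one_mul _
  have habs2 : |j * ((Fhat - ghat) / phat - (F - g) / p)|
      ≤ (|phat - p| + (|Fhat - F| + |ghat - g|)) / E := by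
    rw [abs_mul]
    calc |j| * |(Fhat - ghat) / phat - (F - g) / p|
        ≤ 1 * ((|phat - p| + (|Fhat - F| + |ghat - g|)) / E) :=
          mul_le_mul hj binner2 (abs_nonneg _) zero_le_one
      _ = (|phat - p| + (|Fhat - F| + |ghat - g|)) / E := one_mul _
  have htri : |i * ((1 - qhat) / (phat * qhat) * (y - Fhat) - (1 - q) / (p * q) * (y - F))
        + j * ((Fhat - ghat) / phat - (F - g) / p) + (ghat - g)|
      ≤ |i * ((1 - qhat) / (phat * qhat) * (y - Fhat) - (1 - q) / (p * q) * (y - F))|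
        + |j * ((Fhat - ghat) / phat - (F - g) / p)| + |ghat - g| := by
    calc _ ≤ |i * ((1 - qhat) / (phat * qhat) * (y - Fhat) - (1 - q) / (p * q) * (y - F))
          + j * ((Fhat - ghat) / phat - (F - g) / p)| + |ghat - g| := abs_add_le _ _
      _ ≤ _ := by
          have h := abs_add_le (i * ((1 - qhat) / (phat * qhat) * (y - Fhat) - (1 - q) / (p * q) * (y - F))) (j * ((Fhat - ghat) / phat - (F - g) / p))
          linarith
  have hgE : |ghat - g| ≤ |ghat - g| / E := by
    rw [le_div_iff₀ hE]
    exact mul_le_of_le_one_right (abs_nonneg _) hE1'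
  have h1 := abs_nonneg (phat - p)
  have h2 := abs_nonneg (qhat - q)
  have h3 := abs_nonneg (Fhat - F)
  have h4 := abs_nonneg (ghat - g)
  have hnum : (|qhat - q| + (|phat - p| + |qhat - q|) + |Fhat - F|)
      + ((|phat - p| + (|Fhat - F| + |ghat - g|)) + |ghat - g|)
      ≤ 4 * (|phat - p| + |qhat - q| + |Fhat - F| + |ghat - g|) := by linarith
  have hfin : ((|qhat - q| + (|phat - p| + |qhat - q|) + |Fhat - F|)
      + ((|phat - p| + (|Fhat - F| + |ghat - g|)) + |ghat - g|)) / E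
      ≤ (4 * (|phat - p| + |qhat - q| + |Fhat - F| + |ghat - g|)) / E :=
    (div_le_div_iff_of_pos_right hE).mpr hnum
  have heq : (4 * (|phat - p| + |qhat - q| + |Fhat - F| + |ghat - g|)) / E
      = (4 / E) * (|phat - p| + |qhat - q| + |Fhat - F| + |ghat - g|) := by ring
  have hsplit : ((|qhat - q| + (|phat - p| + |qhat - q|) + |Fhat - F|)
      + ((|phat - p| + (|Fhat - F| + |ghat - g|)) + |ghat - g|)) / E
      = (|qhat - q| + (|phat - p| + |qhat - q|) + |Fhat - F|) / E
      + ((|phat - p| + (|Fhat - F| + |ghat - g|)) / E + |ghat - g| / E) := by ring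
  rw [heq] at hfin
  rw [hsplit] at hfin
  linarith

private lemma eLpNorm_scale_abs {α : Type*} [MeasurableSpace α] (P : Measure α) (c : ℝ)
    (hc : 0 ≤ c) (f : α → ℝ) :
    eLpNorm (fun ω => c * |f ω|) 2 P = ENNReal.ofReal c * eLpNorm f 2 P := by
  have h1 : (fun ω => c * |f ω|) = c • (fun ω => ‖f ω‖) := rfl
  rw [h1, eLpNorm_const_smul, eLpNorm_norm, Real.enorm_eq_ofReal hc]

/-- First-order L² stability of the efficient score in the nuisance
parameters: there is a constant `C` depending only on `ε₁, ε₂` (and not on `δ`, `a`, or the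
distribution `P`) such that if each plug-in nuisance component is within `δ` of the truth in
`L²(P)` (and respects the overlap bands), then
`‖ψ_{d,d',a}(v̂) − ψ_{d,d',a}(v⁰)‖_{P,2} ≤ C·δ`. -/
theorem statement_13
    (ε₁ ε₂ : ℝ) (hε₁ : ε₁ ∈ Set.Ioo (0:ℝ) (1/2)) (hε₂ : ε₂ ∈ Set.Ioo (0:ℝ) (1/2)) :
    ∃ C : ℝ, 0 < C ∧
      ∀ (Ω : Type u) (𝓜 : Type v) (𝓧 : Type w)
        [MeasurableSpace Ω] [MeasurableSpace 𝓜] [Countable 𝓜]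
        [MeasurableSingletonClass 𝓜] [MeasurableSpace 𝓧]
        (P : Measure Ω) [IsProbabilityMeasure P]
        (Y : Ω → ℝ) (D : Ω → ℕ) (M : Ω → 𝓜) (X : Ω → 𝓧),
        Measurable Y → Measurable D → Measurable M → Measurable X →
        (∀ ω, D ω ≤ 1) →
        ∀ (a : ℝ) (d d' : ℕ), d ≤ 1 → d' = 1 - d →
        -- true nuisance parameters
        ∀ (p : ℕ → 𝓧 → ℝ) (q : ℕ → 𝓜 → 𝓧 → ℝ) (F : ℕ → 𝓜 → 𝓧 → ℝ) (g : ℕ → 𝓧 → ℝ),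
        Measurable (fun t : ℕ × 𝓧 => p t.1 t.2) →
        Measurable (fun t : ℕ × 𝓜 × 𝓧 => q t.1 t.2.1 t.2.2) →
        Measurable (fun t : ℕ × 𝓜 × 𝓧 => F t.1 t.2.1 t.2.2) →
        Measurable (fun t : ℕ × 𝓧 => g t.1 t.2) →
        (∀ δ ≤ 1, (fun ω => p δ (X ω)) =ᵐ[P]
          P[(fun ω' => if D ω' = δ then (1:ℝ) else 0) |
            MeasurableSpace.comap X inferInstance]) →
        (∀ δ ≤ 1, (fun ω => q δ (M ω) (X ω)) =ᵐ[P]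
          P[(fun ω' => if D ω' = δ then (1:ℝ) else 0) |
            MeasurableSpace.comap (fun ω' => (M ω', X ω')) inferInstance]) →
        ((fun ω => F (D ω) (M ω) (X ω)) =ᵐ[P]
          P[(fun ω' => if Y ω' ≤ a then (1:ℝ) else 0) |
            MeasurableSpace.comap (fun ω' => (D ω', M ω', X ω')) inferInstance]) →
        ((fun ω => g (D ω) (X ω)) =ᵐ[P]
          P[(fun ω' => F d (M ω') (X ω')) |
            MeasurableSpace.comap (fun ω' => (D ω', X ω')) inferInstance]) →
        -- overlap bands for the truth
        (∀ δ ≤ 1, ∀ᵐ ω ∂P, ε₁ ≤ p δ (X ω) ∧ p δ (X ω) ≤ 1 - ε₁) →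
        (∀ δ ≤ 1, ∀ᵐ ω ∂P, ε₂ ≤ q δ (M ω) (X ω) ∧ q δ (M ω) (X ω) ≤ 1 - ε₂) →
        (∀ᵐ ω ∂P, F d (M ω) (X ω) ∈ Set.Icc (0:ℝ) 1 ∧ g d' (X ω) ∈ Set.Icc (0:ℝ) 1) →
        -- plug-in nuisance parameters, with the same overlap bands
        ∀ (phat : ℕ → 𝓧 → ℝ) (qhat : ℕ → 𝓜 → 𝓧 → ℝ)
          (Fhat : ℕ → 𝓜 → 𝓧 → ℝ) (ghat : ℕ → 𝓧 → ℝ),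
        Measurable (fun t : ℕ × 𝓧 => phat t.1 t.2) →
        Measurable (fun t : ℕ × 𝓜 × 𝓧 => qhat t.1 t.2.1 t.2.2) →
        Measurable (fun t : ℕ × 𝓜 × 𝓧 => Fhat t.1 t.2.1 t.2.2) →
        Measurable (fun t : ℕ × 𝓧 => ghat t.1 t.2) →
        (∀ δ ≤ 1, ∀ᵐ ω ∂P, ε₁ ≤ phat δ (X ω) ∧ phat δ (X ω) ≤ 1 - ε₁) →
        (∀ δ ≤ 1, ∀ᵐ ω ∂P, ε₂ ≤ qhat δ (M ω) (X ω) ∧ qhat δ (M ω) (X ω) ≤ 1 - ε₂) →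
        (∀ m x, qhat 0 m x + qhat 1 m x = 1) →
        (∀ᵐ ω ∂P, Fhat d (M ω) (X ω) ∈ Set.Icc (0:ℝ) 1
            ∧ ghat d' (X ω) ∈ Set.Icc (0:ℝ) 1) →
        -- L² accuracy of each component
        ∀ δ : ℝ, 0 ≤ δ →
        eLpNorm (fun ω => phat d' (X ω) - p d' (X ω)) 2 P ≤ ENNReal.ofReal δ →
        eLpNorm (fun ω => qhat d (M ω) (X ω) - q d (M ω) (X ω)) 2 P ≤ ENNReal.ofReal δ →
        eLpNorm (fun ω => Fhat d (M ω) (X ω) - F d (M ω) (X ω)) 2 P ≤ ENNReal.ofReal δ →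
        eLpNorm (fun ω => ghat d' (X ω) - g d' (X ω)) 2 P ≤ ENNReal.ofReal δ →
        eLpNorm (fun ω =>
          ((if D ω = d then (1:ℝ) else 0) * qhat d' (M ω) (X ω)
              / (phat d' (X ω) * qhat d (M ω) (X ω))
              * ((if Y ω ≤ a then (1:ℝ) else 0) - Fhat d (M ω) (X ω))
            + (if D ω = d' then (1:ℝ) else 0) / phat d' (X ω)
              * (Fhat d (M ω) (X ω) - ghat d' (X ω))
            + ghat d' (X ω))
          - ((if D ω = d then (1:ℝ) else 0) * q d' (M ω) (X ω)
              / (p d' (X ω) * q d (M ω) (X ω))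
              * ((if Y ω ≤ a then (1:ℝ) else 0) - F d (M ω) (X ω))
            + (if D ω = d' then (1:ℝ) else 0) / p d' (X ω)
              * (F d (M ω) (X ω) - g d' (X ω))
            + g d' (X ω))) 2 P ≤ ENNReal.ofReal (C * δ) := by
  have hε₁0 : (0:ℝ) < ε₁ := hε₁.1
  have hε₂0 : (0:ℝ) < ε₂ := hε₂.1
  have hε₁1 : ε₁ ≤ 1 := by linarith [hε₁.2]
  have hε₂1 : ε₂ ≤ 1 := by linarith [hε₂.2]
  refine ⟨(4 / (ε₁ ^ 2 * ε₂ ^ 2)) * 4, by positivity, ?_⟩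
  set K : ℝ := 4 / (ε₁ ^ 2 * ε₂ ^ 2) with hKdef
  have hK0 : 0 ≤ K := by positivity
  intro Ω 𝓜 𝓧 _ _ _ _ _ P _ Y D M X hY hD hM hX hD1 a d d' hd hd'
  intro p q F g hpm hqm hFm hgm hpc hqc hFc hgc hpband hqband hFgband
  intro phat qhat Fhat ghat hphm hqhm hFhm hghm hphband hqhband hqhsum hFghband
  intro δ hδ h1 h2 h3 h4
  have hd'le : d' ≤ 1 := by omega
  have hdd : (d = 0 ∧ d' = 1) ∨ (d = 1 ∧ d' = 0) := by omega
  -- the true q sums to one a.e.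
  have hm : MeasurableSpace.comap (fun ω' => (M ω', X ω')) inferInstance ≤ _ :=
    (hM.prodMk hX).comap_le
  have hint : ∀ k : ℕ, Integrable (fun ω => if D ω = k then (1:ℝ) else 0) P := by
    intro k
    have heq : (fun ω => if D ω = k then (1:ℝ) else 0)
        = (D ⁻¹' {k}).indicator (fun _ => (1:ℝ)) := by
      funext ω
      by_cases h : D ω = k <;>
        simp [Set.indicator_apply, Set.mem_preimage, Set.mem_singleton_iff, h]
    rw [heq]
    exact (integrable_const (1:ℝ)).indicator (hD (measurableSet_singleton k))
  have hfun : (fun ω => if D ω = 0 then (1:ℝ) else 0) + (fun ω => if D ω = 1 then (1:ℝ) else 0)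
      = (fun _ => (1:ℝ)) := by
    funext ω
    show (if D ω = 0 then (1:ℝ) else 0) + (if D ω = 1 then (1:ℝ) else 0) = 1
    rcases Nat.le_one_iff_eq_zero_or_eq_one.mp (hD1 ω) with h | h <;> rw [h] <;> norm_num
  have hA : (P[(fun ω' => if D ω' = 0 then (1:ℝ) else 0) |
        MeasurableSpace.comap (fun ω' => (M ω', X ω')) inferInstance]
      + P[(fun ω' => if D ω' = 1 then (1:ℝ) else 0) |
        MeasurableSpace.comap (fun ω' => (M ω', X ω')) inferInstance]) =ᵐ[P]
      (fun _ => (1:ℝ)) := by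
    refine (condExp_add (hint 0) (hint 1) _).symm.trans ?_
    rw [hfun]
    exact Filter.EventuallyEq.of_eq (condExp_const (μ := P) hm (1:ℝ))
  have hkey : ∀ᵐ ω ∂P, q 0 (M ω) (X ω) + q 1 (M ω) (X ω) = 1 := by
    filter_upwards [hqc 0 (by norm_num), hqc 1 le_rfl, hA] with ω h0 h1 hA'
    rw [h0, h1]
    exact hA'
  have hq' : ∀ᵐ ω ∂P, q d' (M ω) (X ω) = 1 - q d (M ω) (X ω) := by
    filter_upwards [hkey] with ω h
    rcases hdd with ⟨e1, e2⟩ | ⟨e1, e2⟩ <;> rw [e1, e2] <;> linarith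
  have hqh' : ∀ ω, qhat d' (M ω) (X ω) = 1 - qhat d (M ω) (X ω) := by
    intro ω
    have := hqhsum (M ω) (X ω)
    rcases hdd with ⟨e1, e2⟩ | ⟨e1, e2⟩ <;> rw [e1, e2] <;> linarith
  -- pointwise bound
  have hmono : eLpNorm (fun ω =>
      ((if D ω = d then (1:ℝ) else 0) * qhat d' (M ω) (X ω)
          / (phat d' (X ω) * qhat d (M ω) (X ω))
          * ((if Y ω ≤ a then (1:ℝ) else 0) - Fhat d (M ω) (X ω))
        + (if D ω = d' then (1:ℝ) else 0) / phat d' (X ω)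
          * (Fhat d (M ω) (X ω) - ghat d' (X ω))
        + ghat d' (X ω))
      - ((if D ω = d then (1:ℝ) else 0) * q d' (M ω) (X ω)
          / (p d' (X ω) * q d (M ω) (X ω))
          * ((if Y ω ≤ a then (1:ℝ) else 0) - F d (M ω) (X ω))
        + (if D ω = d' then (1:ℝ) else 0) / p d' (X ω)
          * (F d (M ω) (X ω) - g d' (X ω))
        + g d' (X ω))) 2 P
      ≤ eLpNorm (fun ω =>
          K * |phat d' (X ω) - p d' (X ω)|
          + K * |qhat d (M ω) (X ω) - q d (M ω) (X ω)|
          + K * |Fhat d (M ω) (X ω) - F d (M ω) (X ω)|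
          + K * |ghat d' (X ω) - g d' (X ω)|) 2 P := by
    refine eLpNorm_mono_ae ?_
    filter_upwards [hq', hpband d' hd'le, hqband d hd, hFgband,
      hphband d' hd'le, hqhband d hd, hFghband] with ω hq'ω hpω hqω hFgω hphω hqhω hFghω
    rw [Real.norm_eq_abs, Real.norm_eq_abs]
    have habs_rhs : 0 ≤ K * |phat d' (X ω) - p d' (X ω)|
        + K * |qhat d (M ω) (X ω) - q d (M ω) (X ω)|
        + K * |Fhat d (M ω) (X ω) - F d (M ω) (X ω)|
        + K * |ghat d' (X ω) - g d' (X ω)| := by positivity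
    rw [abs_of_nonneg habs_rhs, hq'ω, hqh' ω]
    have hy01 : (0:ℝ) ≤ (if Y ω ≤ a then (1:ℝ) else 0)
        ∧ (if Y ω ≤ a then (1:ℝ) else 0) ≤ 1 := by split_ifs <;> norm_num
    have hi01 : |(if D ω = d then (1:ℝ) else 0)| ≤ 1 := by split_ifs <;> norm_num
    have hj01 : |(if D ω = d' then (1:ℝ) else 0)| ≤ 1 := by split_ifs <;> norm_num
    obtain ⟨⟨hF0, hF1⟩, ⟨hg0, hg1⟩⟩ := hFgω
    obtain ⟨⟨hFh0, hFh1⟩, ⟨hgh0, hgh1⟩⟩ := hFghω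
    have hb := key_bound ε₁ ε₂ hε₁0 hε₂0 hε₁1 hε₂1
      (p d' (X ω)) (phat d' (X ω)) (q d (M ω) (X ω)) (qhat d (M ω) (X ω))
      (F d (M ω) (X ω)) (Fhat d (M ω) (X ω)) (g d' (X ω)) (ghat d' (X ω))
      (if D ω = d then (1:ℝ) else 0) (if D ω = d' then (1:ℝ) else 0)
      (if Y ω ≤ a then (1:ℝ) else 0)
      hpω.1 (by linarith [hpω.2]) hphω.1 (by linarith [hphω.2])
      hqω.1 (by linarith [hqω.2]) hqhω.1 (by linarith [hqhω.2])
      (abs_le.mpr ⟨by linarith [hy01.1], by linarith [hy01.2]⟩)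
      (abs_le.mpr ⟨by linarith [hy01.1], by linarith [hy01.2]⟩)
      (abs_le.mpr ⟨by linarith, by linarith⟩)
      (abs_le.mpr ⟨by linarith, by linarith⟩)
      (abs_le.mpr ⟨by linarith, by linarith⟩)
      hi01 hj01
    calc _ ≤ (4 / (ε₁ ^ 2 * ε₂ ^ 2)) * (|phat d' (X ω) - p d' (X ω)|
          + |qhat d (M ω) (X ω) - q d (M ω) (X ω)|
          + |Fhat d (M ω) (X ω) - F d (M ω) (X ω)|
          + |ghat d' (X ω) - g d' (X ω)|) := hb
      _ = K * |phat d' (X ω) - p d' (X ω)|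
          + K * |qhat d (M ω) (X ω) - q d (M ω) (X ω)|
          + K * |Fhat d (M ω) (X ω) - F d (M ω) (X ω)|
          + K * |ghat d' (X ω) - g d' (X ω)| := by rw [hKdef]; ring
  -- measurability of the four differences
  have hf1m : Measurable (fun ω => phat d' (X ω) - p d' (X ω)) :=
    (hphm.comp (measurable_const.prodMk hX)).sub (hpm.comp (measurable_const.prodMk hX))
  have hf2m : Measurable (fun ω => qhat d (M ω) (X ω) - q d (M ω) (X ω)) :=
    (hqhm.comp (measurable_const.prodMk (hM.prodMk hX))).sub
      (hqm.comp (measurable_const.prodMk (hM.prodMk hX)))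
  have hf3m : Measurable (fun ω => Fhat d (M ω) (X ω) - F d (M ω) (X ω)) :=
    (hFhm.comp (measurable_const.prodMk (hM.prodMk hX))).sub
      (hFm.comp (measurable_const.prodMk (hM.prodMk hX)))
  have hf4m : Measurable (fun ω => ghat d' (X ω) - g d' (X ω)) :=
    (hghm.comp (measurable_const.prodMk hX)).sub (hgm.comp (measurable_const.prodMk hX))
  have hS1m : AEStronglyMeasurable (fun ω => K * |phat d' (X ω) - p d' (X ω)|) P :=
    (hf1m.abs.const_mul K).aestronglyMeasurable
  have hS2m : AEStronglyMeasurable (fun ω => K * |qhat d (M ω) (X ω) - q d (M ω) (X ω)|) P :=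
    (hf2m.abs.const_mul K).aestronglyMeasurable
  have hS3m : AEStronglyMeasurable (fun ω => K * |Fhat d (M ω) (X ω) - F d (M ω) (X ω)|) P :=
    (hf3m.abs.const_mul K).aestronglyMeasurable
  have hS4m : AEStronglyMeasurable (fun ω => K * |ghat d' (X ω) - g d' (X ω)|) P :=
    (hf4m.abs.const_mul K).aestronglyMeasurable
  -- norm bounds for each summand
  have hKδ : (0:ℝ) ≤ K * δ := mul_nonneg hK0 hδ
  have hS1 : eLpNorm (fun ω => K * |phat d' (X ω) - p d' (X ω)|) 2 P
      ≤ ENNReal.ofReal (K * δ) := by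
    rw [eLpNorm_scale_abs P K hK0, ENNReal.ofReal_mul hK0]
    exact mul_le_mul_right h1 _
  have hS2 : eLpNorm (fun ω => K * |qhat d (M ω) (X ω) - q d (M ω) (X ω)|) 2 P
      ≤ ENNReal.ofReal (K * δ) := by
    rw [eLpNorm_scale_abs P K hK0, ENNReal.ofReal_mul hK0]
    exact mul_le_mul_right h2 _
  have hS3 : eLpNorm (fun ω => K * |Fhat d (M ω) (X ω) - F d (M ω) (X ω)|) 2 P
      ≤ ENNReal.ofReal (K * δ) := by
    rw [eLpNorm_scale_abs P K hK0, ENNReal.ofReal_mul hK0]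
    exact mul_le_mul_right h3 _
  have hS4 : eLpNorm (fun ω => K * |ghat d' (X ω) - g d' (X ω)|) 2 P
      ≤ ENNReal.ofReal (K * δ) := by
    rw [eLpNorm_scale_abs P K hK0, ENNReal.ofReal_mul hK0]
    exact mul_le_mul_right h4 _
  -- triangle inequality
  have htri : eLpNorm (fun ω =>
      K * |phat d' (X ω) - p d' (X ω)|
      + K * |qhat d (M ω) (X ω) - q d (M ω) (X ω)|
      + K * |Fhat d (M ω) (X ω) - F d (M ω) (X ω)|
      + K * |ghat d' (X ω) - g d' (X ω)|) 2 P
      ≤ ENNReal.ofReal (K * δ) + ENNReal.ofReal (K * δ)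
        + ENNReal.ofReal (K * δ) + ENNReal.ofReal (K * δ) := by
    calc eLpNorm (fun ω =>
        K * |phat d' (X ω) - p d' (X ω)|
        + K * |qhat d (M ω) (X ω) - q d (M ω) (X ω)|
        + K * |Fhat d (M ω) (X ω) - F d (M ω) (X ω)|
        + K * |ghat d' (X ω) - g d' (X ω)|) 2 P
        ≤ eLpNorm (fun ω =>
            K * |phat d' (X ω) - p d' (X ω)|
            + K * |qhat d (M ω) (X ω) - q d (M ω) (X ω)|
            + K * |Fhat d (M ω) (X ω) - F d (M ω) (X ω)|) 2 P
          + eLpNorm (fun ω => K * |ghat d' (X ω) - g d' (X ω)|) 2 P :=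
        eLpNorm_add_le ((hS1m.add hS2m).add hS3m) hS4m one_le_two
      _ ≤ (eLpNorm (fun ω =>
            K * |phat d' (X ω) - p d' (X ω)|
            + K * |qhat d (M ω) (X ω) - q d (M ω) (X ω)|) 2 P
          + eLpNorm (fun ω => K * |Fhat d (M ω) (X ω) - F d (M ω) (X ω)|) 2 P)
          + eLpNorm (fun ω => K * |ghat d' (X ω) - g d' (X ω)|) 2 P :=
        add_le_add_left (eLpNorm_add_le (hS1m.add hS2m) hS3m one_le_two) _
      _ ≤ ((eLpNorm (fun ω => K * |phat d' (X ω) - p d' (X ω)|) 2 P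
          + eLpNorm (fun ω => K * |qhat d (M ω) (X ω) - q d (M ω) (X ω)|) 2 P)
          + eLpNorm (fun ω => K * |Fhat d (M ω) (X ω) - F d (M ω) (X ω)|) 2 P)
          + eLpNorm (fun ω => K * |ghat d' (X ω) - g d' (X ω)|) 2 P := by
        exact add_le_add_left (add_le_add_left
          (eLpNorm_add_le hS1m hS2m one_le_two) _) _
      _ ≤ ENNReal.ofReal (K * δ) + ENNReal.ofReal (K * δ)
          + ENNReal.ofReal (K * δ) + ENNReal.ofReal (K * δ) := by
        exact add_le_add (add_le_add (add_le_add hS1 hS2) hS3) hS4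
  refine hmono.trans (htri.trans ?_)
  have hCδ : K * 4 * δ = K * δ + K * δ + K * δ + K * δ := by ring
  rw [hCδ, ENNReal.ofReal_add (by linarith) hKδ, ENNReal.ofReal_add (by linarith) hKδ,
    ENNReal.ofReal_add hKδ hKδ]
end

section
/- Smoothness of the efficient score in the threshold a (case d ≠ d'): for all thresholds a, ā ∈ ℝ, ‖ψ_{d,d',a} − ψ_{d,d',ā}‖_{P,2} ≤ ( 2(1−ε₂)/(ε₁ε₂) + 1/ε₁ + (1+ε₁)/ε₁ ) · ‖Y_a − Y_ā‖_{P,2}, where ψ_{d,d',a} is the efficient score at the true nuisance parameters evaluated at threshold a (with F_a and g_a replaced by F_ā and g_ā in ψ_{d,d',ā}). -/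
open MeasureTheory
open scoped ENNReal

section Aux

variable {Ω : Type*} {m0 : MeasurableSpace Ω} {P : Measure Ω} [IsProbabilityMeasure P]
  {m : MeasurableSpace Ω}

lemma integrable_of_ae_bdd {f : Ω → ℝ} (hf : AEStronglyMeasurable[m0] f P) {c : ℝ}
    (hb : ∀ᵐ ω ∂P, |f ω| ≤ c) : Integrable f P :=
  memLp_one_iff_integrable.mp <|
    MemLp.of_bound hf c (by simpa [Real.norm_eq_abs] using hb)

lemma condExp_ae_bdd (hm : m ≤ m0) {f : Ω → ℝ} (hfi : Integrable f P) {c : ℝ}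
    (hb : ∀ᵐ ω ∂P, |f ω| ≤ c) : ∀ᵐ ω ∂P, |(P[f|m]) ω| ≤ c := by
  have h1 : P[f|m] ≤ᵐ[P] P[(fun _ => c)|m] :=
    condExp_mono hfi (integrable_const c) (hb.mono fun ω h => (abs_le.mp h).2)
  have h2 : P[(fun _ => (-c : ℝ))|m] ≤ᵐ[P] P[f|m] :=
    condExp_mono (integrable_const _) hfi (hb.mono fun ω h => (abs_le.mp h).1)
  have hc1 : P[(fun _ => c)|m] = fun _ => c := condExp_const hm c
  have hc2 : P[(fun _ => (-c : ℝ))|m] = fun _ => (-c : ℝ) := condExp_const hm (-c)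
  rw [hc1] at h1; rw [hc2] at h2
  filter_upwards [h1, h2] with ω h1 h2
  exact abs_le.mpr ⟨h2, h1⟩

/-- pull-out: integrating a bounded `m`-measurable weight against `f` or its conditional
expectation gives the same value. -/
lemma integral_weight_condExp (hm : m ≤ m0) {w f : Ω → ℝ} (hw : StronglyMeasurable[m] w)
    {c : ℝ} (hwb : ∀ᵐ ω ∂P, |w ω| ≤ c) (hfi : Integrable f P) :
    ∫ ω, w ω * f ω ∂P = ∫ ω, w ω * (P[f|m]) ω ∂P := by
  have h := condExp_stronglyMeasurable_mul_of_bound hm hw hfi c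
    (by simpa [Real.norm_eq_abs] using hwb)
  have h1 : ∫ ω, w ω * f ω ∂P = ∫ ω, (P[w * f|m]) ω ∂P := (integral_condExp hm).symm
  rw [h1, integral_congr_ae h]
  rfl

end Aux

section Aux2

variable {Ω : Type*} {m0 : MeasurableSpace Ω} {P : Measure Ω} [IsProbabilityMeasure P]
  {m : MeasurableSpace Ω}

lemma weighted_sq_decomp (hm : m ≤ m0) {w f : Ω → ℝ} (hw : StronglyMeasurable[m] w)
    {cw cf : ℝ} (hw0 : ∀ᵐ ω ∂P, 0 ≤ w ω) (hwc : ∀ᵐ ω ∂P, w ω ≤ cw)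
    (hfm : AEStronglyMeasurable[m0] f P) (hfb : ∀ᵐ ω ∂P, |f ω| ≤ cf) :
    (∫ ω, w ω * (f ω - (P[f|m]) ω)^2 ∂P ≤ ∫ ω, w ω * f ω^2 ∂P) ∧
    (∫ ω, w ω * ((P[f|m]) ω)^2 ∂P ≤ ∫ ω, w ω * f ω^2 ∂P) := by
  set G := P[f|m] with hGdef
  have hwb : ∀ᵐ ω ∂P, |w ω| ≤ cw := by
    filter_upwards [hw0, hwc] with ω h0 hc; rwa [abs_of_nonneg h0]
  have hfi : Integrable f P := integrable_of_ae_bdd hfm hfb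
  have hGb : ∀ᵐ ω ∂P, |G ω| ≤ cf := condExp_ae_bdd hm hfi hfb
  have hGsm : StronglyMeasurable[m0] G := stronglyMeasurable_condExp.mono hm
  have hwsm : AEStronglyMeasurable[m0] w P := (hw.mono hm).aestronglyMeasurable
  -- integrability of all the pieces
  have hint : ∀ (u : Ω → ℝ), AEStronglyMeasurable[m0] u P → (∀ᵐ ω ∂P, |u ω| ≤ cf) →
      ∀ (v : Ω → ℝ), AEStronglyMeasurable[m0] v P → (∀ᵐ ω ∂P, |v ω| ≤ cf) →
      Integrable (fun ω => w ω * (u ω * v ω)) P := by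
    intro u hu hub v hv hvb
    refine integrable_of_ae_bdd (hwsm.mul (hu.mul hv)) (c := cw * (cf * cf)) ?_
    filter_upwards [hwb, hub, hvb] with ω h1 h2 h3
    rw [abs_mul, abs_mul]
    have h4 : (0:ℝ) ≤ cf := le_trans (abs_nonneg _) h2
    exact mul_le_mul h1 (mul_le_mul h2 h3 (abs_nonneg _) h4) (by positivity) (le_trans (abs_nonneg _) h1)
  have hff : Integrable (fun ω => w ω * (f ω * f ω)) P := hint f hfm hfb f hfm hfb
  have hfG : Integrable (fun ω => w ω * (f ω * G ω)) P :=
    hint f hfm hfb G hGsm.aestronglyMeasurable hGb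
  have hGG : Integrable (fun ω => w ω * (G ω * G ω)) P :=
    hint G hGsm.aestronglyMeasurable hGb G hGsm.aestronglyMeasurable hGb
  -- key step: ∫ w f G = ∫ w G G
  have hkey : ∫ ω, w ω * (f ω * G ω) ∂P = ∫ ω, w ω * (G ω * G ω) ∂P := by
    have h := integral_weight_condExp (P := P) hm (w := fun ω => w ω * G ω)
      (hw.mul stronglyMeasurable_condExp) (c := cw * cf)
      (by filter_upwards [hwb, hGb] with ω h1 h2
          rw [abs_mul]
          exact mul_le_mul h1 h2 (abs_nonneg _) (le_trans (abs_nonneg _) h1)) hfi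
    calc ∫ ω, w ω * (f ω * G ω) ∂P = ∫ ω, (w ω * G ω) * f ω ∂P := by
          apply integral_congr_ae; filter_upwards with ω; ring
      _ = ∫ ω, (w ω * G ω) * G ω ∂P := h
      _ = ∫ ω, w ω * (G ω * G ω) ∂P := by
          apply integral_congr_ae; filter_upwards with ω; ring
  -- decomposition
  have hdecomp : ∫ ω, w ω * (f ω - G ω)^2 ∂P
      = ∫ ω, w ω * f ω^2 ∂P - ∫ ω, w ω * (G ω * G ω) ∂P := by
    have e1 : (fun ω => w ω * (f ω - G ω)^2)
        = fun ω => (w ω * (f ω * f ω) - 2 * (w ω * (f ω * G ω))) + w ω * (G ω * G ω) := by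
      funext ω; ring
    have h1 : Integrable (fun ω => w ω * (f ω * f ω) - 2 * (w ω * (f ω * G ω))) P :=
      hff.sub (hfG.const_mul 2)
    have h2 : Integrable (fun ω => 2 * (w ω * (f ω * G ω))) P := hfG.const_mul 2
    rw [e1, integral_add h1 hGG, integral_sub hff h2, integral_const_mul, hkey]
    have e2 : ∫ ω, w ω * f ω ^ 2 ∂P = ∫ ω, w ω * (f ω * f ω) ∂P := by
      apply integral_congr_ae; filter_upwards with ω; ring
    rw [e2]; ring
  have hsqnn : (0:ℝ) ≤ ∫ ω, w ω * (f ω - G ω)^2 ∂P :=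
    integral_nonneg_of_ae (by
      filter_upwards [hw0] with ω h
      simp only [Pi.zero_apply]
      positivity)
  have hGGnn : (0:ℝ) ≤ ∫ ω, w ω * (G ω * G ω) ∂P :=
    integral_nonneg_of_ae (by
      filter_upwards [hw0] with ω h
      simp only [Pi.zero_apply]
      exact mul_nonneg h (mul_self_nonneg _))
  constructor
  · rw [hdecomp]; linarith
  · have e3 : ∫ ω, w ω * (G ω)^2 ∂P = ∫ ω, w ω * (G ω * G ω) ∂P := by
      apply integral_congr_ae; filter_upwards with ω; ring
    rw [e3]; linarith [hdecomp, hsqnn]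

end Aux2

section Aux3

variable {Ω : Type*} {m0 : MeasurableSpace Ω} {P : Measure Ω} [IsProbabilityMeasure P]
  {m : MeasurableSpace Ω}

/-- change of measure: if `ρ` is a version of `P[ι|m]` bounded below by `ε`, then for
`m`-measurable nonnegative bounded `φ`, `ε ∫ φ ≤ ∫ φ ι`. -/
lemma mul_integral_le_integral_mul (hm : m ≤ m0) {φ ι ρ : Ω → ℝ}
    (hφ : StronglyMeasurable[m] φ) {cφ : ℝ} (hφ0 : ∀ᵐ ω ∂P, 0 ≤ φ ω)
    (hφb : ∀ᵐ ω ∂P, φ ω ≤ cφ) (hι : Integrable ι P) {cι : ℝ} (hιb : ∀ᵐ ω ∂P, |ι ω| ≤ cι)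
    (hρ : ρ =ᵐ[P] P[ι|m]) {ε : ℝ} (hρε : ∀ᵐ ω ∂P, ε ≤ ρ ω) :
    ε * ∫ ω, φ ω ∂P ≤ ∫ ω, φ ω * ι ω ∂P := by
  have hφabs : ∀ᵐ ω ∂P, |φ ω| ≤ cφ := by
    filter_upwards [hφ0, hφb] with ω h0 hc; rwa [abs_of_nonneg h0]
  have h1 : ∫ ω, φ ω * ι ω ∂P = ∫ ω, φ ω * (P[ι|m]) ω ∂P :=
    integral_weight_condExp hm hφ hφabs hι
  have h2 : ∫ ω, φ ω * (P[ι|m]) ω ∂P = ∫ ω, φ ω * ρ ω ∂P := by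
    apply integral_congr_ae; filter_upwards [hρ] with ω h; rw [h]
  have hρb : ∀ᵐ ω ∂P, |ρ ω| ≤ cι := by
    filter_upwards [condExp_ae_bdd hm hι hιb, hρ] with ω h1 h2; rwa [h2]
  have hφsm : AEStronglyMeasurable[m0] φ P := (hφ.mono hm).aestronglyMeasurable
  have hρsm : AEStronglyMeasurable[m0] ρ P :=
    ((stronglyMeasurable_condExp.mono hm).aestronglyMeasurable (μ := P)).congr hρ.symm
  have hφι : Integrable (fun ω => φ ω * ρ ω) P := by
    refine integrable_of_ae_bdd (hφsm.mul hρsm) (c := cφ * cι) ?_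
    filter_upwards [hφabs, hρb] with ω ha hb
    rw [abs_mul]
    exact mul_le_mul ha hb (abs_nonneg _) (le_trans (abs_nonneg _) ha)
  have hεφ : Integrable (fun ω => ε * φ ω) P :=
    (integrable_of_ae_bdd hφsm hφabs).const_mul ε
  have h3 : ∫ ω, ε * φ ω ∂P ≤ ∫ ω, φ ω * ρ ω ∂P := by
    apply integral_mono_ae hεφ hφι
    filter_upwards [hφ0, hρε] with ω h0 hε'
    calc ε * φ ω ≤ ρ ω * φ ω := mul_le_mul_of_nonneg_right hε' h0
      _ = φ ω * ρ ω := mul_comm _ _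
  rw [h1, h2]
  calc ε * ∫ ω, φ ω ∂P = ∫ ω, ε * φ ω ∂P := (integral_const_mul ε φ).symm
    _ ≤ _ := h3

/-- transfer of null sets through a conditional probability bounded below. -/
lemma null_of_null_on_event (hm : m ≤ m0) {ι ρ : Ω → ℝ} {S : Set Ω}
    (hS : MeasurableSet[m] S) (hι : Integrable ι P) {cι : ℝ} (hιb : ∀ᵐ ω ∂P, |ι ω| ≤ cι)
    (hρ : ρ =ᵐ[P] P[ι|m]) {ε : ℝ} (hε : 0 < ε) (hρε : ∀ᵐ ω ∂P, ε ≤ ρ ω)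
    (hzero : ∀ᵐ ω ∂P, ω ∈ S → ι ω = 0) : P S = 0 := by
  set φ : Ω → ℝ := S.indicator (fun _ => (1:ℝ)) with hφdef
  have hφm : StronglyMeasurable[m] φ := stronglyMeasurable_const.indicator hS
  have hφ0 : ∀ᵐ ω ∂P, 0 ≤ φ ω := Filter.Eventually.of_forall fun ω => Set.indicator_nonneg (fun _ _ => zero_le_one) ω
  have hφb : ∀ᵐ ω ∂P, φ ω ≤ 1 := Filter.Eventually.of_forall fun ω => by
    by_cases h : ω ∈ S <;> simp [hφdef, h]
  have key := mul_integral_le_integral_mul hm hφm hφ0 hφb hι hιb hρ hρε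
  have hz : ∫ ω, φ ω * ι ω ∂P = 0 := by
    have : (fun ω => φ ω * ι ω) =ᵐ[P] (fun _ => (0:ℝ)) := by
      filter_upwards [hzero] with ω h
      by_cases hω : ω ∈ S
      · simp [hφdef, hω, h hω]
      · simp [hφdef, hω]
    rw [integral_congr_ae this, integral_zero]
  have hφint : ∫ ω, φ ω ∂P = (P S).toReal := @integral_indicator_one Ω m0 P S (hm S hS)
  rw [hz, hφint] at key
  have hnn : 0 ≤ (P S).toReal := ENNReal.toReal_nonneg
  have h0 : (P S).toReal = 0 := by nlinarith
  exact ((ENNReal.toReal_eq_zero_iff _).mp h0).resolve_right (measure_ne_top P S)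

end Aux3

section Aux4

variable {Ω : Type*} {m0 : MeasurableSpace Ω} {P : Measure Ω} [IsProbabilityMeasure P]

lemma eLpNorm_le_of_integral_sq_le {f g : Ω → ℝ} (hf : MemLp f 2 P) (hg : MemLp g 2 P)
    {c : ℝ} (hc : 0 ≤ c) (h : ∫ ω, f ω ^ 2 ∂P ≤ c ^ 2 * ∫ ω, g ω ^ 2 ∂P) :
    eLpNorm f 2 P ≤ ENNReal.ofReal c * eLpNorm g 2 P := by
  have hnorm : ∀ x : ℝ, ‖x‖ ^ ((2:ℝ≥0∞).toReal) = x ^ 2 := fun x => by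
    rw [ENNReal.toReal_ofNat, show ((2:ℝ)) = ((2:ℕ):ℝ) by norm_num, Real.rpow_natCast]
    simp [Real.norm_eq_abs, sq_abs]
  rw [hf.eLpNorm_eq_integral_rpow_norm two_ne_zero ENNReal.ofNat_ne_top,
    hg.eLpNorm_eq_integral_rpow_norm two_ne_zero ENNReal.ofNat_ne_top,
    ← ENNReal.ofReal_mul hc]
  apply ENNReal.ofReal_le_ofReal
  simp_rw [hnorm]
  have hA : (0:ℝ) ≤ ∫ ω, f ω ^ 2 ∂P := integral_nonneg fun ω => sq_nonneg _
  have hB : (0:ℝ) ≤ ∫ ω, g ω ^ 2 ∂P := integral_nonneg fun ω => sq_nonneg _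
  have hinv : ((2:ℝ≥0∞).toReal)⁻¹ = (2:ℝ)⁻¹ := by rw [ENNReal.toReal_ofNat]
  rw [hinv]
  calc (∫ ω, f ω ^ 2 ∂P) ^ ((2:ℝ)⁻¹)
      ≤ (c ^ 2 * ∫ ω, g ω ^ 2 ∂P) ^ ((2:ℝ)⁻¹) :=
        Real.rpow_le_rpow hA h (by norm_num)
    _ = (c ^ 2) ^ ((2:ℝ)⁻¹) * (∫ ω, g ω ^ 2 ∂P) ^ ((2:ℝ)⁻¹) :=
        Real.mul_rpow (sq_nonneg c) hB
    _ = c * (∫ ω, g ω ^ 2 ∂P) ^ ((2:ℝ)⁻¹) := by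
        rw [← Real.rpow_natCast c 2, ← Real.rpow_mul hc]
        norm_num

end Aux4

set_option maxHeartbeats 2000000 in
/-- Smoothness of the efficient score in the threshold `a` (case `d ≠ d'`):
for all thresholds `a, ā ∈ ℝ`,
`‖ψ_{d,d',a} − ψ_{d,d',ā}‖_{P,2} ≤ (2(1−ε₂)/(ε₁ε₂) + 1/ε₁ + (1+ε₁)/ε₁)·‖Y_a − Y_ā‖_{P,2}`. -/
theorem statement_15
    {Ω 𝓜 𝓧 : Type*} [MeasurableSpace Ω]
    [MeasurableSpace 𝓜] [Countable 𝓜] [MeasurableSingletonClass 𝓜] [MeasurableSpace 𝓧]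
    (P : Measure Ω) [IsProbabilityMeasure P]
    (Y : Ω → ℝ) (D : Ω → ℕ) (M : Ω → 𝓜) (X : Ω → 𝓧)
    (hY : Measurable Y) (hD : Measurable D) (hM : Measurable M) (hX : Measurable X)
    (hD01 : ∀ ω, D ω ≤ 1)
    (d d' : ℕ) (hd : d ≤ 1) (hd'def : d' = 1 - d)
    -- true nuisance parameters (the outcome models indexed by the threshold)
    (p : ℕ → 𝓧 → ℝ) (q : ℕ → 𝓜 → 𝓧 → ℝ)
    (F : ℝ → ℕ → 𝓜 → 𝓧 → ℝ) (g : ℝ → ℕ → 𝓧 → ℝ)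
    (hpmeas : Measurable (fun t : ℕ × 𝓧 => p t.1 t.2))
    (hqmeas : Measurable (fun t : ℕ × 𝓜 × 𝓧 => q t.1 t.2.1 t.2.2))
    (hFmeas : ∀ a : ℝ, Measurable (fun t : ℕ × 𝓜 × 𝓧 => F a t.1 t.2.1 t.2.2))
    (hgmeas : ∀ a : ℝ, Measurable (fun t : ℕ × 𝓧 => g a t.1 t.2))
    (hpver : ∀ δ ≤ 1, (fun ω => p δ (X ω)) =ᵐ[P]
      P[(fun ω' => if D ω' = δ then (1:ℝ) else 0) | MeasurableSpace.comap X inferInstance])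
    (hqver : ∀ δ ≤ 1, (fun ω => q δ (M ω) (X ω)) =ᵐ[P]
      P[(fun ω' => if D ω' = δ then (1:ℝ) else 0) |
        MeasurableSpace.comap (fun ω' => (M ω', X ω')) inferInstance])
    (hFver : ∀ a : ℝ, (fun ω => F a (D ω) (M ω) (X ω)) =ᵐ[P]
      P[(fun ω' => if Y ω' ≤ a then (1:ℝ) else 0) |
        MeasurableSpace.comap (fun ω' => (D ω', M ω', X ω')) inferInstance])
    (hgver : ∀ a : ℝ, (fun ω => g a (D ω) (X ω)) =ᵐ[P]
      P[(fun ω' => F a d (M ω') (X ω')) |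
        MeasurableSpace.comap (fun ω' => (D ω', X ω')) inferInstance])
    -- overlap
    (ε₁ ε₂ : ℝ) (hε₁ : ε₁ ∈ Set.Ioo (0:ℝ) (1/2)) (hε₂ : ε₂ ∈ Set.Ioo (0:ℝ) (1/2))
    (hoverp : ∀ δ ≤ 1, ∀ᵐ ω ∂P, ε₁ ≤ p δ (X ω) ∧ p δ (X ω) ≤ 1 - ε₁)
    (hoverq : ∀ δ ≤ 1, ∀ᵐ ω ∂P, ε₂ ≤ q δ (M ω) (X ω) ∧ q δ (M ω) (X ω) ≤ 1 - ε₂)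
    (a abar : ℝ) :
    eLpNorm (fun ω =>
      ((if D ω = d then (1:ℝ) else 0) * q d' (M ω) (X ω)
          / (p d' (X ω) * q d (M ω) (X ω))
          * ((if Y ω ≤ a then (1:ℝ) else 0) - F a d (M ω) (X ω))
        + (if D ω = d' then (1:ℝ) else 0) / p d' (X ω)
          * (F a d (M ω) (X ω) - g a d' (X ω))
        + g a d' (X ω))
      - ((if D ω = d then (1:ℝ) else 0) * q d' (M ω) (X ω)
          / (p d' (X ω) * q d (M ω) (X ω))
          * ((if Y ω ≤ abar then (1:ℝ) else 0) - F abar d (M ω) (X ω))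
        + (if D ω = d' then (1:ℝ) else 0) / p d' (X ω)
          * (F abar d (M ω) (X ω) - g abar d' (X ω))
        + g abar d' (X ω))) 2 P
      ≤ ENNReal.ofReal (2 * (1 - ε₂) / (ε₁ * ε₂) + 1 / ε₁ + (1 + ε₁) / ε₁)
        * eLpNorm (fun ω =>
            (if Y ω ≤ a then (1:ℝ) else 0) - (if Y ω ≤ abar then (1:ℝ) else 0)) 2 P := by
  obtain ⟨hε₁0, hε₁h⟩ := hε₁
  obtain ⟨hε₂0, hε₂h⟩ := hε₂
  have hd' : d' ≤ 1 := by omega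
  have hdd' : d ≠ d' := by omega
  -- the functions
  set Ya : Ω → ℝ := fun ω => if Y ω ≤ a then (1:ℝ) else 0 with hYadef
  set Yb : Ω → ℝ := fun ω => if Y ω ≤ abar then (1:ℝ) else 0 with hYbdef
  set ΔY : Ω → ℝ := fun ω => Ya ω - Yb ω with hΔYdef
  set Fa : Ω → ℝ := fun ω => F a d (M ω) (X ω) with hFadef
  set Fb : Ω → ℝ := fun ω => F abar d (M ω) (X ω) with hFbdef
  set ΔF : Ω → ℝ := fun ω => Fa ω - Fb ω with hΔFdef
  set FDa : Ω → ℝ := fun ω => F a (D ω) (M ω) (X ω) with hFDadef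
  set FDb : Ω → ℝ := fun ω => F abar (D ω) (M ω) (X ω) with hFDbdef
  set ΔFD : Ω → ℝ := fun ω => FDa ω - FDb ω with hΔFDdef
  set ga : Ω → ℝ := fun ω => g a d' (X ω) with hgadef
  set gb : Ω → ℝ := fun ω => g abar d' (X ω) with hgbdef
  set Δg : Ω → ℝ := fun ω => ga ω - gb ω with hΔgdef
  set gDa : Ω → ℝ := fun ω => g a (D ω) (X ω) with hgDadef
  set gDb : Ω → ℝ := fun ω => g abar (D ω) (X ω) with hgDbdef
  set ΔgD : Ω → ℝ := fun ω => gDa ω - gDb ω with hΔgDdef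
  set id' : Ω → ℝ := fun ω => if D ω = d' then (1:ℝ) else 0 with hid'def
  set idd : Ω → ℝ := fun ω => if D ω = d then (1:ℝ) else 0 with hiddef
  set qd : Ω → ℝ := fun ω => q d (M ω) (X ω) with hqddef
  set qd' : Ω → ℝ := fun ω => q d' (M ω) (X ω) with hqd'def
  set pd' : Ω → ℝ := fun ω => p d' (X ω) with hpd'def
  set W1 : Ω → ℝ := fun ω => idd ω * qd' ω / (pd' ω * qd ω) with hW1def
  set W2 : Ω → ℝ := fun ω => id' ω / pd' ω with hW2def
  -- notation for the σ-algebras (explicit to avoid instance pollution)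
  have hm1 : MeasurableSpace.comap (fun ω' : Ω => (D ω', M ω', X ω')) inferInstance
      ≤ ‹MeasurableSpace Ω› := (hD.prodMk (hM.prodMk hX)).comap_le
  have hm2 : MeasurableSpace.comap (fun ω' : Ω => (D ω', X ω')) inferInstance
      ≤ ‹MeasurableSpace Ω› := (hD.prodMk hX).comap_le
  have hm3 : MeasurableSpace.comap (fun ω' : Ω => (M ω', X ω')) inferInstance
      ≤ ‹MeasurableSpace Ω› := (hM.prodMk hX).comap_le
  have hm4 : MeasurableSpace.comap (X : Ω → 𝓧) inferInstance
      ≤ ‹MeasurableSpace Ω› := hX.comap_le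
  -- ambient measurability
  have hYam : Measurable Ya := Measurable.ite (hY measurableSet_Iic) measurable_const measurable_const
  have hYbm : Measurable Yb := Measurable.ite (hY measurableSet_Iic) measurable_const measurable_const
  have hΔYm : Measurable ΔY := hYam.sub hYbm
  -- m-measurability of the nuisance functions
  have hFa3 : Measurable[(MeasurableSpace.comap (fun ω' : Ω => (M ω', X ω')) inferInstance)] Fa :=
    ((hFmeas a).comp (measurable_const.prodMk measurable_id)).comp (comap_measurable _)
  have hFb3 : Measurable[(MeasurableSpace.comap (fun ω' : Ω => (M ω', X ω')) inferInstance)] Fb :=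
    ((hFmeas abar).comp (measurable_const.prodMk measurable_id)).comp (comap_measurable _)
  have hΔF3 : Measurable[(MeasurableSpace.comap (fun ω' : Ω => (M ω', X ω')) inferInstance)] ΔF := hFa3.sub hFb3
  have hga4 : Measurable[(MeasurableSpace.comap (X : Ω → 𝓧) inferInstance)] ga :=
    ((hgmeas a).comp (measurable_const.prodMk measurable_id)).comp (comap_measurable _)
  have hgb4 : Measurable[(MeasurableSpace.comap (X : Ω → 𝓧) inferInstance)] gb :=
    ((hgmeas abar).comp (measurable_const.prodMk measurable_id)).comp (comap_measurable _)
  have hΔg4 : Measurable[(MeasurableSpace.comap (X : Ω → 𝓧) inferInstance)] Δg := hga4.sub hgb4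
  have hidd1 : Measurable[(MeasurableSpace.comap (fun ω' : Ω => (D ω', M ω', X ω')) inferInstance)] idd := by
    have h : Measurable (fun t : ℕ × 𝓜 × 𝓧 => if t.1 = d then (1:ℝ) else 0) :=
      Measurable.ite (measurable_fst (measurableSet_singleton d)) measurable_const
        measurable_const
    exact h.comp (comap_measurable _)
  have hid'2 : Measurable[(MeasurableSpace.comap (fun ω' : Ω => (D ω', X ω')) inferInstance)] id' := by
    have h : Measurable (fun t : ℕ × 𝓧 => if t.1 = d' then (1:ℝ) else 0) :=
      Measurable.ite (measurable_fst (measurableSet_singleton d')) measurable_const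
        measurable_const
    exact h.comp (comap_measurable _)
  have hW1m : Measurable[(MeasurableSpace.comap (fun ω' : Ω => (D ω', M ω', X ω')) inferInstance)] W1 := by
    have h : Measurable (fun t : ℕ × 𝓜 × 𝓧 =>
        (if t.1 = d then (1:ℝ) else 0) * q d' t.2.1 t.2.2 / (p d' t.2.2 * q d t.2.1 t.2.2)) := by
      refine Measurable.div ?_ ?_
      · exact (Measurable.ite (measurable_fst (measurableSet_singleton d)) measurable_const
          measurable_const).mul (hqmeas.comp (measurable_const.prodMk measurable_snd))
      · exact (hpmeas.comp (measurable_const.prodMk (measurable_snd.comp measurable_snd))).mul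
          (hqmeas.comp (measurable_const.prodMk measurable_snd))
    exact h.comp (comap_measurable _)
  have hW2m : Measurable[(MeasurableSpace.comap (fun ω' : Ω => (D ω', X ω')) inferInstance)] W2 := by
    have h : Measurable (fun t : ℕ × 𝓧 =>
        (if t.1 = d' then (1:ℝ) else 0) / p d' t.2) := by
      refine Measurable.div ?_ ?_
      · exact Measurable.ite (measurable_fst (measurableSet_singleton d')) measurable_const
          measurable_const
      · exact hpmeas.comp (measurable_const.prodMk measurable_snd)
    exact h.comp (comap_measurable _)
  -- basic bounds and integrability
  have hYa_b : ∀ᵐ ω ∂P, |Ya ω| ≤ 1 := Filter.Eventually.of_forall fun ω => by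
    by_cases h : Y ω ≤ a <;> simp [hYadef, h]
  have hYb_b : ∀ᵐ ω ∂P, |Yb ω| ≤ 1 := Filter.Eventually.of_forall fun ω => by
    by_cases h : Y ω ≤ abar <;> simp [hYbdef, h]
  have hΔY_b : ∀ᵐ ω ∂P, |ΔY ω| ≤ 1 := Filter.Eventually.of_forall fun ω => by
    by_cases h1 : Y ω ≤ a <;> by_cases h2 : Y ω ≤ abar <;>
      simp [hΔYdef, hYadef, hYbdef, h1, h2]
  have hYai : Integrable Ya P := integrable_of_ae_bdd hYam.aestronglyMeasurable hYa_b
  have hYbi : Integrable Yb P := integrable_of_ae_bdd hYbm.aestronglyMeasurable hYb_b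
  have hΔYi : Integrable ΔY P := integrable_of_ae_bdd hΔYm.aestronglyMeasurable hΔY_b
  have hii : Integrable idd P := integrable_of_ae_bdd
    ((Measurable.ite (hD (measurableSet_singleton d)) measurable_const
      measurable_const).aestronglyMeasurable) (c := 1)
    (Filter.Eventually.of_forall fun ω => by by_cases h : D ω = d <;> simp [hiddef, h])
  have hiib : ∀ᵐ ω ∂P, |idd ω| ≤ 1 := Filter.Eventually.of_forall fun ω => by
    by_cases h : D ω = d <;> simp [hiddef, h]
  have hii' : Integrable id' P := integrable_of_ae_bdd
    ((Measurable.ite (hD (measurableSet_singleton d')) measurable_const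
      measurable_const).aestronglyMeasurable) (c := 1)
    (Filter.Eventually.of_forall fun ω => by by_cases h : D ω = d' <;> simp [hid'def, h])
  have hii'b : ∀ᵐ ω ∂P, |id' ω| ≤ 1 := Filter.Eventually.of_forall fun ω => by
    by_cases h : D ω = d' <;> simp [hid'def, h]
  -- versions
  have hfa : FDa =ᵐ[P] P[Ya| (MeasurableSpace.comap (fun ω' : Ω => (D ω', M ω', X ω')) inferInstance)] := hFver a
  have hfb : FDb =ᵐ[P] P[Yb| (MeasurableSpace.comap (fun ω' : Ω => (D ω', M ω', X ω')) inferInstance)] := hFver abar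
  have hΔFDver : ΔFD =ᵐ[P] P[ΔY| (MeasurableSpace.comap (fun ω' : Ω => (D ω', M ω', X ω')) inferInstance)] := by
    have e : P[ΔY| (MeasurableSpace.comap (fun ω' : Ω => (D ω', M ω', X ω')) inferInstance)] =ᵐ[P] fun ω => (P[Ya| (MeasurableSpace.comap (fun ω' : Ω => (D ω', M ω', X ω')) inferInstance)]) ω - (P[Yb| (MeasurableSpace.comap (fun ω' : Ω => (D ω', M ω', X ω')) inferInstance)]) ω := by
      have h0 : ΔY = Ya - Yb := rfl
      rw [h0]
      exact condExp_sub hYai hYbi _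
    filter_upwards [hfa, hfb, e] with ω h1 h2 h3
    show FDa ω - FDb ω = _
    rw [h1, h2, h3]
  have hFDa_b : ∀ᵐ ω ∂P, |FDa ω| ≤ 1 := by
    filter_upwards [hfa, condExp_ae_bdd hm1 hYai hYa_b] with ω h1 h2
    rw [h1]; exact h2
  have hFDb_b : ∀ᵐ ω ∂P, |FDb ω| ≤ 1 := by
    filter_upwards [hfb, condExp_ae_bdd hm1 hYbi hYb_b] with ω h1 h2
    rw [h1]; exact h2
  have hqve : qd =ᵐ[P] P[idd| (MeasurableSpace.comap (fun ω' : Ω => (M ω', X ω')) inferInstance)] := hqver d hd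
  have hρε₂ : ∀ᵐ ω ∂P, ε₂ ≤ qd ω := (hoverq d hd).mono fun ω h => h.1
  have hpve : pd' =ᵐ[P] P[id'| (MeasurableSpace.comap (X : Ω → 𝓧) inferInstance)] := hpver d' hd'
  have hρε₁ : ∀ᵐ ω ∂P, ε₁ ≤ pd' ω := (hoverp d' hd').mono fun ω h => h.1
  -- a.e. boundedness of Fa, Fb via change of measure
  have hFbd : ∀ (Fc : Ω → ℝ) (FDc : Ω → ℝ), Measurable[(MeasurableSpace.comap (fun ω' : Ω => (M ω', X ω')) inferInstance)] Fc →
      (∀ᵐ ω ∂P, |FDc ω| ≤ 1) → (∀ ω, D ω = d → FDc ω = Fc ω) → ∀ᵐ ω ∂P, |Fc ω| ≤ 1 := by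
    intro Fc FDc hFc3 hFDc_b hagree
    have hS : MeasurableSet[(MeasurableSpace.comap (fun ω' : Ω => (M ω', X ω')) inferInstance)] {ω | 1 < |Fc ω|} :=
      (measurable_abs.comp hFc3) measurableSet_Ioi
    have h0 : P {ω | 1 < |Fc ω|} = 0 := by
      refine null_of_null_on_event hm3 hS hii hiib hqve hε₂0 hρε₂ ?_
      filter_upwards [hFDc_b] with ω h1 hmem
      by_cases hDω : D ω = d
      · exfalso
        rw [hagree ω hDω] at h1
        exact absurd hmem (not_lt.mpr h1)
      · simp [hiddef, hDω]
    exact (ae_iff).mpr (by simpa [not_le] using h0)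
  have hFa_b : ∀ᵐ ω ∂P, |Fa ω| ≤ 1 :=
    hFbd Fa FDa hFa3 hFDa_b (fun ω h => by simp [hFDadef, hFadef, h])
  have hFb_b : ∀ᵐ ω ∂P, |Fb ω| ≤ 1 :=
    hFbd Fb FDb hFb3 hFDb_b (fun ω h => by simp [hFDbdef, hFbdef, h])
  have hΔF_b : ∀ᵐ ω ∂P, |ΔF ω| ≤ 2 := by
    filter_upwards [hFa_b, hFb_b] with ω h1 h2
    calc |ΔF ω| ≤ |Fa ω| + |Fb ω| := abs_sub _ _
      _ ≤ 2 := by linarith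
  have hFam : Measurable Fa := hFa3.mono hm3 le_rfl
  have hFbm : Measurable Fb := hFb3.mono hm3 le_rfl
  have hΔFm : Measurable ΔF := hFam.sub hFbm
  have hFai : Integrable Fa P := integrable_of_ae_bdd hFam.aestronglyMeasurable hFa_b
  have hFbi : Integrable Fb P := integrable_of_ae_bdd hFbm.aestronglyMeasurable hFb_b
  have hΔFi : Integrable ΔF P := integrable_of_ae_bdd hΔFm.aestronglyMeasurable hΔF_b
  -- versions for g
  have hgva : gDa =ᵐ[P] P[Fa| (MeasurableSpace.comap (fun ω' : Ω => (D ω', X ω')) inferInstance)] := hgver a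
  have hgvb : gDb =ᵐ[P] P[Fb| (MeasurableSpace.comap (fun ω' : Ω => (D ω', X ω')) inferInstance)] := hgver abar
  have hΔgDver : ΔgD =ᵐ[P] P[ΔF| (MeasurableSpace.comap (fun ω' : Ω => (D ω', X ω')) inferInstance)] := by
    have e : P[ΔF| (MeasurableSpace.comap (fun ω' : Ω => (D ω', X ω')) inferInstance)] =ᵐ[P] fun ω => (P[Fa| (MeasurableSpace.comap (fun ω' : Ω => (D ω', X ω')) inferInstance)]) ω - (P[Fb| (MeasurableSpace.comap (fun ω' : Ω => (D ω', X ω')) inferInstance)]) ω := by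
      have h0 : ΔF = Fa - Fb := rfl
      rw [h0]
      exact condExp_sub hFai hFbi _
    filter_upwards [hgva, hgvb, e] with ω h1 h2 h3
    show gDa ω - gDb ω = _
    rw [h1, h2, h3]
  have hgDa_b : ∀ᵐ ω ∂P, |gDa ω| ≤ 1 := by
    filter_upwards [hgva, condExp_ae_bdd hm2 hFai hFa_b] with ω h1 h2
    rw [h1]; exact h2
  have hgDb_b : ∀ᵐ ω ∂P, |gDb ω| ≤ 1 := by
    filter_upwards [hgvb, condExp_ae_bdd hm2 hFbi hFb_b] with ω h1 h2
    rw [h1]; exact h2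
  have hgbd : ∀ (gc : Ω → ℝ) (gDc : Ω → ℝ), Measurable[(MeasurableSpace.comap (X : Ω → 𝓧) inferInstance)] gc →
      (∀ᵐ ω ∂P, |gDc ω| ≤ 1) → (∀ ω, D ω = d' → gDc ω = gc ω) → ∀ᵐ ω ∂P, |gc ω| ≤ 1 := by
    intro gc gDc hgc4 hgDc_b hagree
    have hS : MeasurableSet[(MeasurableSpace.comap (X : Ω → 𝓧) inferInstance)] {ω | 1 < |gc ω|} :=
      (measurable_abs.comp hgc4) measurableSet_Ioi
    have h0 : P {ω | 1 < |gc ω|} = 0 := by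
      refine null_of_null_on_event hm4 hS hii' hii'b hpve hε₁0 hρε₁ ?_
      filter_upwards [hgDc_b] with ω h1 hmem
      by_cases hDω : D ω = d'
      · exfalso
        rw [hagree ω hDω] at h1
        exact absurd hmem (not_lt.mpr h1)
      · simp [hid'def, hDω]
    exact (ae_iff).mpr (by simpa [not_le] using h0)
  have hga_b : ∀ᵐ ω ∂P, |ga ω| ≤ 1 :=
    hgbd ga gDa hga4 hgDa_b (fun ω h => by simp [hgDadef, hgadef, h])
  have hgb_b : ∀ᵐ ω ∂P, |gb ω| ≤ 1 :=
    hgbd gb gDb hgb4 hgDb_b (fun ω h => by simp [hgDbdef, hgbdef, h])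
  have hΔg_b : ∀ᵐ ω ∂P, |Δg ω| ≤ 2 := by
    filter_upwards [hga_b, hgb_b] with ω h1 h2
    calc |Δg ω| ≤ |ga ω| + |gb ω| := abs_sub _ _
      _ ≤ 2 := by linarith
  have hgam : Measurable ga := hga4.mono hm4 le_rfl
  have hgbm : Measurable gb := hgb4.mono hm4 le_rfl
  have hΔgm : Measurable Δg := hgam.sub hgbm
  -- weight bounds
  have hW1b : ∀ᵐ ω ∂P, 0 ≤ W1 ω ∧ W1 ω ≤ (1 - ε₂) / (ε₁ * ε₂) := by
    filter_upwards [hoverp d' hd', hoverq d hd, hoverq d' hd'] with ω hp hq hq'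
    by_cases hDω : D ω = d
    · simp only [hW1def, hiddef, if_pos hDω, one_mul]
      constructor
      · exact div_nonneg (le_trans hε₂0.le hq'.1) (by nlinarith)
      · exact div_le_div₀ (by linarith) hq'.2 (by nlinarith)
          (mul_le_mul hp.1 hq.1 hε₂0.le (by linarith))
    · simp only [hW1def, hiddef, if_neg hDω, zero_mul, zero_div]
      exact ⟨le_refl 0, div_nonneg (by linarith) (by positivity)⟩
  have hW2b : ∀ᵐ ω ∂P, 0 ≤ W2 ω ∧ W2 ω ≤ 1 / ε₁ := by
    filter_upwards [hoverp d' hd'] with ω hp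
    by_cases hDω : D ω = d'
    · simp only [hW2def, hid'def, if_pos hDω]
      exact ⟨div_nonneg zero_le_one (by linarith),
        one_div_le_one_div_of_le hε₁0 hp.1⟩
    · simp only [hW2def, hid'def, if_neg hDω, zero_div]
      exact ⟨le_refl 0, by positivity⟩
  -- the three pieces
  set T1 : Ω → ℝ := fun ω => W1 ω * (ΔY ω - ΔFD ω) with hT1def
  set T2 : Ω → ℝ := fun ω => W2 ω * (ΔF ω - ΔgD ω) with hT2def
  have hFDam : Measurable FDa := (hFmeas a).comp (hD.prodMk (hM.prodMk hX))
  have hFDbm : Measurable FDb := (hFmeas abar).comp (hD.prodMk (hM.prodMk hX))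
  have hΔFDm : Measurable ΔFD := hFDam.sub hFDbm
  have hgDam : Measurable gDa := (hgmeas a).comp (hD.prodMk hX)
  have hgDbm : Measurable gDb := (hgmeas abar).comp (hD.prodMk hX)
  have hΔgDm : Measurable ΔgD := hgDam.sub hgDbm
  have hW1am : Measurable W1 := hW1m.mono hm1 le_rfl
  have hW2am : Measurable W2 := hW2m.mono hm2 le_rfl
  have hT1m : Measurable T1 := hW1am.mul (hΔYm.sub hΔFDm)
  have hT2m : Measurable T2 := hW2am.mul (hΔFm.sub hΔgDm)
  have hΔFD_b : ∀ᵐ ω ∂P, |ΔFD ω| ≤ 2 := by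
    filter_upwards [hFDa_b, hFDb_b] with ω h1 h2
    calc |ΔFD ω| ≤ |FDa ω| + |FDb ω| := abs_sub _ _
      _ ≤ 2 := by linarith
  have hΔgD_b : ∀ᵐ ω ∂P, |ΔgD ω| ≤ 2 := by
    filter_upwards [hgDa_b, hgDb_b] with ω h1 h2
    calc |ΔgD ω| ≤ |gDa ω| + |gDb ω| := abs_sub _ _
      _ ≤ 2 := by linarith
  have habs4 : ∀ x : ℝ, |x| ≤ 2 → |x ^ 2| ≤ 4 := fun x hx => by
    rw [abs_pow]; nlinarith [abs_nonneg x]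
  -- first piece : ∫ T1² ≤ C₁² ∫ ΔY²
  have hC₁0 : (0:ℝ) ≤ (1 - ε₂) / (ε₁ * ε₂) := div_nonneg (by linarith) (by positivity)
  have hI1 : ∫ ω, T1 ω ^ 2 ∂P ≤ ((1 - ε₂) / (ε₁ * ε₂)) ^ 2 * ∫ ω, ΔY ω ^ 2 ∂P := by
    have e1 : ∫ ω, T1 ω ^ 2 ∂P = ∫ ω, W1 ω ^ 2 * (ΔY ω - ΔFD ω) ^ 2 ∂P := by
      apply integral_congr_ae; filter_upwards with ω
      simp only [hT1def]; ring
    have e2 : ∫ ω, W1 ω ^ 2 * (ΔY ω - ΔFD ω) ^ 2 ∂P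
        = ∫ ω, W1 ω ^ 2 * (ΔY ω - (P[ΔY| (MeasurableSpace.comap (fun ω' : Ω => (D ω', M ω', X ω')) inferInstance)]) ω) ^ 2 ∂P := by
      apply integral_congr_ae; filter_upwards [hΔFDver] with ω h; rw [h]
    have e3 := (weighted_sq_decomp (P := P) hm1 (w := fun ω => W1 ω ^ 2) (f := ΔY)
      ((hW1m.pow_const 2).stronglyMeasurable)
      (cw := ((1 - ε₂) / (ε₁ * ε₂)) ^ 2) (cf := 1)
      (hW1b.mono fun ω h => sq_nonneg _)
      (hW1b.mono fun ω h => by nlinarith [h.1, h.2])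
      hΔYm.aestronglyMeasurable hΔY_b).1
    have e4 : ∫ ω, W1 ω ^ 2 * ΔY ω ^ 2 ∂P
        ≤ ∫ ω, ((1 - ε₂) / (ε₁ * ε₂)) ^ 2 * ΔY ω ^ 2 ∂P := by
      apply integral_mono_ae
      · refine integrable_of_ae_bdd
          (((hW1am.pow_const 2).mul (hΔYm.pow_const 2)).aestronglyMeasurable)
          (c := ((1 - ε₂) / (ε₁ * ε₂)) ^ 2) ?_
        filter_upwards [hW1b, hΔY_b] with ω h1 h2
        rw [abs_mul, abs_pow, abs_pow]
        calc |W1 ω| ^ 2 * |ΔY ω| ^ 2 ≤ ((1 - ε₂) / (ε₁ * ε₂)) ^ 2 * 1 ^ 2 := by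
              apply mul_le_mul (pow_le_pow_left₀ (abs_nonneg _) ?_ 2)
                (pow_le_pow_left₀ (abs_nonneg _) h2 2) (by positivity) (by positivity)
              rw [abs_of_nonneg h1.1]; exact h1.2
          _ = ((1 - ε₂) / (ε₁ * ε₂)) ^ 2 := by ring
      · exact (integrable_of_ae_bdd (hΔYm.pow_const 2).aestronglyMeasurable (c := 1)
          (hΔY_b.mono fun ω h => by rw [abs_pow]; nlinarith [abs_nonneg (ΔY ω)])).const_mul _
      · filter_upwards [hW1b, hΔY_b] with ω h1 h2
        have : W1 ω ^ 2 ≤ ((1 - ε₂) / (ε₁ * ε₂)) ^ 2 := by nlinarith [h1.1, h1.2]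
        exact mul_le_mul_of_nonneg_right this (sq_nonneg _)
    rw [e1, e2]
    calc ∫ ω, W1 ω ^ 2 * (ΔY ω - (P[ΔY| (MeasurableSpace.comap (fun ω' : Ω => (D ω', M ω', X ω')) inferInstance)]) ω) ^ 2 ∂P
        ≤ ∫ ω, W1 ω ^ 2 * ΔY ω ^ 2 ∂P := e3
      _ ≤ ∫ ω, ((1 - ε₂) / (ε₁ * ε₂)) ^ 2 * ΔY ω ^ 2 ∂P := e4
      _ = ((1 - ε₂) / (ε₁ * ε₂)) ^ 2 * ∫ ω, ΔY ω ^ 2 ∂P := integral_const_mul _ _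
  -- ∫ ΔF² ≤ ε₂⁻¹ ∫ ΔY²
  have hIF : ∫ ω, ΔF ω ^ 2 ∂P ≤ ε₂⁻¹ * ∫ ω, ΔY ω ^ 2 ∂P := by
    have ha := mul_integral_le_integral_mul (P := P) hm3 (φ := fun ω => ΔF ω ^ 2)
      ((hΔF3.pow_const 2).stronglyMeasurable) (cφ := 4)
      (Filter.Eventually.of_forall fun ω => sq_nonneg _)
      (hΔF_b.mono fun ω h => by show ΔF ω ^ 2 ≤ 4; rw [← sq_abs]; nlinarith [abs_nonneg (ΔF ω)])
      hii hiib hqve hρε₂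
    have hb : ∫ ω, ΔF ω ^ 2 * idd ω ∂P = ∫ ω, idd ω * ΔFD ω ^ 2 ∂P := by
      apply integral_congr_ae; filter_upwards with ω
      by_cases hDω : D ω = d
      · simp only [hiddef, if_pos hDω, mul_one, one_mul, hΔFdef, hΔFDdef, hFadef, hFbdef,
          hFDadef, hFDbdef, hDω]
      · simp [hiddef, hDω]
    have hc1 : ∫ ω, idd ω * ΔFD ω ^ 2 ∂P = ∫ ω, idd ω * ((P[ΔY| (MeasurableSpace.comap (fun ω' : Ω => (D ω', M ω', X ω')) inferInstance)]) ω) ^ 2 ∂P := by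
      apply integral_congr_ae; filter_upwards [hΔFDver] with ω h; rw [h]
    have hc2 := (weighted_sq_decomp (P := P) hm1 (w := idd) (f := ΔY)
      hidd1.stronglyMeasurable (cw := 1) (cf := 1)
      (Filter.Eventually.of_forall fun ω => by by_cases h : D ω = d <;> simp [hiddef, h])
      (Filter.Eventually.of_forall fun ω => by by_cases h : D ω = d <;> simp [hiddef, h])
      hΔYm.aestronglyMeasurable hΔY_b).2
    have hd1 : ∫ ω, idd ω * ΔY ω ^ 2 ∂P ≤ ∫ ω, ΔY ω ^ 2 ∂P := by
      apply integral_mono_ae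
      · refine integrable_of_ae_bdd
          ((((Measurable.ite (hD (measurableSet_singleton d)) measurable_const
            measurable_const)).mul (hΔYm.pow_const 2)).aestronglyMeasurable) (c := 1) ?_
        filter_upwards [hΔY_b] with ω h2
        rw [abs_mul]
        by_cases h : D ω = d <;>
          simp [hiddef, h] <;> nlinarith [abs_nonneg (ΔY ω), sq_abs (ΔY ω), abs_nonneg (ΔY ω * ΔY ω)]
      · exact integrable_of_ae_bdd (hΔYm.pow_const 2).aestronglyMeasurable (c := 1)
          (hΔY_b.mono fun ω h => by rw [abs_pow]; nlinarith [abs_nonneg (ΔY ω)])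
      · filter_upwards with ω
        by_cases h : D ω = d <;> simp [hiddef, h, sq_nonneg (ΔY ω)]
    have : ε₂ * ∫ ω, ΔF ω ^ 2 ∂P ≤ ∫ ω, ΔY ω ^ 2 ∂P := by
      calc ε₂ * ∫ ω, ΔF ω ^ 2 ∂P ≤ ∫ ω, ΔF ω ^ 2 * idd ω ∂P := ha
        _ = ∫ ω, idd ω * ((P[ΔY| (MeasurableSpace.comap (fun ω' : Ω => (D ω', M ω', X ω')) inferInstance)]) ω) ^ 2 ∂P := by rw [hb, hc1]
        _ ≤ ∫ ω, idd ω * ΔY ω ^ 2 ∂P := hc2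
        _ ≤ ∫ ω, ΔY ω ^ 2 ∂P := hd1
    calc ∫ ω, ΔF ω ^ 2 ∂P = ε₂⁻¹ * (ε₂ * ∫ ω, ΔF ω ^ 2 ∂P) := by
          field_simp
      _ ≤ ε₂⁻¹ * ∫ ω, ΔY ω ^ 2 ∂P := by
          exact mul_le_mul_of_nonneg_left this (by positivity)
  -- second piece
  have hI2 : ∫ ω, T2 ω ^ 2 ∂P ≤ (1 / ε₁) ^ 2 * ∫ ω, ΔF ω ^ 2 ∂P := by
    have e1 : ∫ ω, T2 ω ^ 2 ∂P = ∫ ω, W2 ω ^ 2 * (ΔF ω - ΔgD ω) ^ 2 ∂P := by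
      apply integral_congr_ae; filter_upwards with ω
      simp only [hT2def]; ring
    have e2 : ∫ ω, W2 ω ^ 2 * (ΔF ω - ΔgD ω) ^ 2 ∂P
        = ∫ ω, W2 ω ^ 2 * (ΔF ω - (P[ΔF| (MeasurableSpace.comap (fun ω' : Ω => (D ω', X ω')) inferInstance)]) ω) ^ 2 ∂P := by
      apply integral_congr_ae; filter_upwards [hΔgDver] with ω h; rw [h]
    have e3 := (weighted_sq_decomp (P := P) hm2 (w := fun ω => W2 ω ^ 2) (f := ΔF)
      ((hW2m.pow_const 2).stronglyMeasurable)
      (cw := (1 / ε₁) ^ 2) (cf := 2)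
      (hW2b.mono fun ω h => sq_nonneg _)
      (hW2b.mono fun ω h => by nlinarith [h.1, h.2])
      hΔFm.aestronglyMeasurable hΔF_b).1
    have e4 : ∫ ω, W2 ω ^ 2 * ΔF ω ^ 2 ∂P ≤ ∫ ω, (1 / ε₁) ^ 2 * ΔF ω ^ 2 ∂P := by
      apply integral_mono_ae
      · refine integrable_of_ae_bdd
          (((hW2am.pow_const 2).mul (hΔFm.pow_const 2)).aestronglyMeasurable)
          (c := (1 / ε₁) ^ 2 * 4) ?_
        filter_upwards [hW2b, hΔF_b] with ω h1 h2
        rw [abs_mul]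
        apply mul_le_mul ?_ (habs4 _ h2) (abs_nonneg _) (by positivity)
        rw [abs_pow]
        exact pow_le_pow_left₀ (abs_nonneg _) (by rw [abs_of_nonneg h1.1]; exact h1.2) 2
      · exact (integrable_of_ae_bdd (hΔFm.pow_const 2).aestronglyMeasurable (c := 4)
          (hΔF_b.mono fun ω h => habs4 _ h)).const_mul _
      · filter_upwards [hW2b] with ω h1
        have : W2 ω ^ 2 ≤ (1 / ε₁) ^ 2 := by nlinarith [h1.1, h1.2]
        exact mul_le_mul_of_nonneg_right this (sq_nonneg _)
    rw [e1, e2]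
    calc ∫ ω, W2 ω ^ 2 * (ΔF ω - (P[ΔF| (MeasurableSpace.comap (fun ω' : Ω => (D ω', X ω')) inferInstance)]) ω) ^ 2 ∂P
        ≤ ∫ ω, W2 ω ^ 2 * ΔF ω ^ 2 ∂P := e3
      _ ≤ ∫ ω, (1 / ε₁) ^ 2 * ΔF ω ^ 2 ∂P := e4
      _ = (1 / ε₁) ^ 2 * ∫ ω, ΔF ω ^ 2 ∂P := integral_const_mul _ _
  -- third piece
  have hI4 : ∫ ω, Δg ω ^ 2 ∂P ≤ ε₁⁻¹ * ∫ ω, ΔF ω ^ 2 ∂P := by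
    have ha := mul_integral_le_integral_mul (P := P) hm4 (φ := fun ω => Δg ω ^ 2)
      ((hΔg4.pow_const 2).stronglyMeasurable) (cφ := 4)
      (Filter.Eventually.of_forall fun ω => sq_nonneg _)
      (hΔg_b.mono fun ω h => by show Δg ω ^ 2 ≤ 4; rw [← sq_abs]; nlinarith [abs_nonneg (Δg ω)])
      hii' hii'b hpve hρε₁
    have hb : ∫ ω, Δg ω ^ 2 * id' ω ∂P = ∫ ω, id' ω * ΔgD ω ^ 2 ∂P := by
      apply integral_congr_ae; filter_upwards with ω
      by_cases hDω : D ω = d'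
      · simp only [hid'def, if_pos hDω, mul_one, one_mul, hΔgdef, hΔgDdef, hgadef, hgbdef,
          hgDadef, hgDbdef, hDω]
      · simp [hid'def, hDω]
    have hc1 : ∫ ω, id' ω * ΔgD ω ^ 2 ∂P = ∫ ω, id' ω * ((P[ΔF| (MeasurableSpace.comap (fun ω' : Ω => (D ω', X ω')) inferInstance)]) ω) ^ 2 ∂P := by
      apply integral_congr_ae; filter_upwards [hΔgDver] with ω h; rw [h]
    have hc2 := (weighted_sq_decomp (P := P) hm2 (w := id') (f := ΔF)
      hid'2.stronglyMeasurable (cw := 1) (cf := 2)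
      (Filter.Eventually.of_forall fun ω => by by_cases h : D ω = d' <;> simp [hid'def, h])
      (Filter.Eventually.of_forall fun ω => by by_cases h : D ω = d' <;> simp [hid'def, h])
      hΔFm.aestronglyMeasurable hΔF_b).2
    have hd1 : ∫ ω, id' ω * ΔF ω ^ 2 ∂P ≤ ∫ ω, ΔF ω ^ 2 ∂P := by
      apply integral_mono_ae
      · refine integrable_of_ae_bdd
          ((((Measurable.ite (hD (measurableSet_singleton d')) measurable_const
            measurable_const)).mul (hΔFm.pow_const 2)).aestronglyMeasurable) (c := 4) ?_
        filter_upwards [hΔF_b] with ω h2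
        rw [abs_mul]
        by_cases h : D ω = d'
        · simp only [hid'def, if_pos h, abs_one, one_mul]
          exact habs4 _ h2
        · simp [hid'def, h]
      · exact integrable_of_ae_bdd (hΔFm.pow_const 2).aestronglyMeasurable (c := 4)
          (hΔF_b.mono fun ω h => habs4 _ h)
      · filter_upwards with ω
        by_cases h : D ω = d' <;> simp [hid'def, h, sq_nonneg (ΔF ω)]
    have hkey : ε₁ * ∫ ω, Δg ω ^ 2 ∂P ≤ ∫ ω, ΔF ω ^ 2 ∂P := by
      calc ε₁ * ∫ ω, Δg ω ^ 2 ∂P ≤ ∫ ω, Δg ω ^ 2 * id' ω ∂P := ha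
        _ = ∫ ω, id' ω * ((P[ΔF| (MeasurableSpace.comap (fun ω' : Ω => (D ω', X ω')) inferInstance)]) ω) ^ 2 ∂P := by rw [hb, hc1]
        _ ≤ ∫ ω, id' ω * ΔF ω ^ 2 ∂P := hc2
        _ ≤ ∫ ω, ΔF ω ^ 2 ∂P := hd1
    calc ∫ ω, Δg ω ^ 2 ∂P = ε₁⁻¹ * (ε₁ * ∫ ω, Δg ω ^ 2 ∂P) := by field_simp
      _ ≤ ε₁⁻¹ * ∫ ω, ΔF ω ^ 2 ∂P := mul_le_mul_of_nonneg_left hkey (by positivity)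
  -- MemLp facts
  have hMΔY : MemLp ΔY 2 P := MemLp.of_bound hΔYm.aestronglyMeasurable 1
    (by simpa [Real.norm_eq_abs] using hΔY_b)
  have hMT1 : MemLp T1 2 P := by
    refine MemLp.of_bound hT1m.aestronglyMeasurable ((1 - ε₂) / (ε₁ * ε₂) * 3) ?_
    filter_upwards [hW1b, hΔY_b, hΔFD_b] with ω h1 h2 h3
    rw [Real.norm_eq_abs, hT1def]
    calc |W1 ω * (ΔY ω - ΔFD ω)| = |W1 ω| * |ΔY ω - ΔFD ω| := abs_mul _ _
      _ ≤ (1 - ε₂) / (ε₁ * ε₂) * 3 := by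
          apply mul_le_mul (by rw [abs_of_nonneg h1.1]; exact h1.2) ?_ (abs_nonneg _) hC₁0
          calc |ΔY ω - ΔFD ω| ≤ |ΔY ω| + |ΔFD ω| := abs_sub _ _
            _ ≤ 3 := by linarith
  have hMT2 : MemLp T2 2 P := by
    refine MemLp.of_bound hT2m.aestronglyMeasurable (1 / ε₁ * 4) ?_
    filter_upwards [hW2b, hΔF_b, hΔgD_b] with ω h1 h2 h3
    rw [Real.norm_eq_abs, hT2def]
    calc |W2 ω * (ΔF ω - ΔgD ω)| = |W2 ω| * |ΔF ω - ΔgD ω| := abs_mul _ _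
      _ ≤ 1 / ε₁ * 4 := by
          apply mul_le_mul (by rw [abs_of_nonneg h1.1]; exact h1.2) ?_ (abs_nonneg _)
            (by positivity)
          calc |ΔF ω - ΔgD ω| ≤ |ΔF ω| + |ΔgD ω| := abs_sub _ _
            _ ≤ 4 := by linarith
  have hMT3 : MemLp Δg 2 P := MemLp.of_bound hΔgm.aestronglyMeasurable 2
    (by simpa [Real.norm_eq_abs] using hΔg_b)
  -- individual norm bounds
  have hN1 : eLpNorm T1 2 P ≤ ENNReal.ofReal ((1 - ε₂) / (ε₁ * ε₂)) * eLpNorm ΔY 2 P :=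
    eLpNorm_le_of_integral_sq_le hMT1 hMΔY hC₁0 hI1
  have hsqε₂ : Real.sqrt ε₂ ^ 2 = ε₂ := Real.sq_sqrt hε₂0.le
  have hsqε₂0 : 0 < Real.sqrt ε₂ := Real.sqrt_pos.mpr hε₂0
  have hsqε₁₂ : Real.sqrt (ε₁ * ε₂) ^ 2 = ε₁ * ε₂ := Real.sq_sqrt (by positivity)
  have hsqε₁₂0 : 0 < Real.sqrt (ε₁ * ε₂) := Real.sqrt_pos.mpr (by positivity)
  have hN2 : eLpNorm T2 2 P
      ≤ ENNReal.ofReal (1 / (ε₁ * Real.sqrt ε₂)) * eLpNorm ΔY 2 P := by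
    refine eLpNorm_le_of_integral_sq_le hMT2 hMΔY (by positivity) ?_
    have e : (1 / (ε₁ * Real.sqrt ε₂)) ^ 2 = (1 / ε₁) ^ 2 * ε₂⁻¹ := by
      rw [div_pow, mul_pow, hsqε₂, div_pow]
      field_simp
    rw [e, mul_assoc]
    calc ∫ ω, T2 ω ^ 2 ∂P ≤ (1 / ε₁) ^ 2 * ∫ ω, ΔF ω ^ 2 ∂P := hI2
      _ ≤ (1 / ε₁) ^ 2 * (ε₂⁻¹ * ∫ ω, ΔY ω ^ 2 ∂P) :=
        mul_le_mul_of_nonneg_left hIF (by positivity)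
  have hN3 : eLpNorm Δg 2 P
      ≤ ENNReal.ofReal (1 / Real.sqrt (ε₁ * ε₂)) * eLpNorm ΔY 2 P := by
    refine eLpNorm_le_of_integral_sq_le hMT3 hMΔY (by positivity) ?_
    have e : (1 / Real.sqrt (ε₁ * ε₂)) ^ 2 = ε₁⁻¹ * ε₂⁻¹ := by
      rw [div_pow, hsqε₁₂]
      field_simp
    rw [e, mul_assoc]
    calc ∫ ω, Δg ω ^ 2 ∂P ≤ ε₁⁻¹ * ∫ ω, ΔF ω ^ 2 ∂P := hI4
      _ ≤ ε₁⁻¹ * (ε₂⁻¹ * ∫ ω, ΔY ω ^ 2 ∂P) :=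
        mul_le_mul_of_nonneg_left hIF (by positivity)
  -- decomposition of the score difference
  have hfun : (fun ω =>
      ((if D ω = d then (1:ℝ) else 0) * q d' (M ω) (X ω)
          / (p d' (X ω) * q d (M ω) (X ω))
          * ((if Y ω ≤ a then (1:ℝ) else 0) - F a d (M ω) (X ω))
        + (if D ω = d' then (1:ℝ) else 0) / p d' (X ω)
          * (F a d (M ω) (X ω) - g a d' (X ω))
        + g a d' (X ω))
      - ((if D ω = d then (1:ℝ) else 0) * q d' (M ω) (X ω)
          / (p d' (X ω) * q d (M ω) (X ω))
          * ((if Y ω ≤ abar then (1:ℝ) else 0) - F abar d (M ω) (X ω))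
        + (if D ω = d' then (1:ℝ) else 0) / p d' (X ω)
          * (F abar d (M ω) (X ω) - g abar d' (X ω))
        + g abar d' (X ω))) = fun ω => T1 ω + (T2 ω + Δg ω) := by
    funext ω
    simp only [hT1def, hT2def, hW1def, hW2def, hΔYdef, hYadef, hYbdef, hΔFdef, hFadef,
      hFbdef, hΔFDdef, hFDadef, hFDbdef, hΔgdef, hgadef, hgbdef, hΔgDdef, hgDadef,
      hgDbdef, hiddef, hid'def, hqddef, hqd'def, hpd'def]
    have hDle := hD01 ω
    by_cases h1 : D ω = d
    · have h2 : D ω ≠ d' := by omega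
      rw [if_pos h1, if_neg h2, h1]
      ring
    · have h2 : D ω = d' := by omega
      rw [if_neg h1, if_pos h2, h2]
      ring
  rw [hfun]
  have hsum : eLpNorm (fun ω => T1 ω + (T2 ω + Δg ω)) 2 P
      ≤ eLpNorm T1 2 P + (eLpNorm T2 2 P + eLpNorm Δg 2 P) := by
    have e1 : (fun ω => T1 ω + (T2 ω + Δg ω)) = T1 + fun ω => T2 ω + Δg ω := rfl
    have e2 : (fun ω => T2 ω + Δg ω) = T2 + Δg := rfl
    calc eLpNorm (fun ω => T1 ω + (T2 ω + Δg ω)) 2 P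
        ≤ eLpNorm T1 2 P + eLpNorm (fun ω => T2 ω + Δg ω) 2 P := by
          rw [e1]
          exact eLpNorm_add_le hT1m.aestronglyMeasurable
            ((hT2m.add hΔgm).aestronglyMeasurable) one_le_two
      _ ≤ eLpNorm T1 2 P + (eLpNorm T2 2 P + eLpNorm Δg 2 P) := by
          gcongr
          rw [e2]
          exact eLpNorm_add_le hT2m.aestronglyMeasurable hΔgm.aestronglyMeasurable one_le_two
  have harith : (1 - ε₂) / (ε₁ * ε₂) + (1 / (ε₁ * Real.sqrt ε₂) + 1 / Real.sqrt (ε₁ * ε₂))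
      ≤ 2 * (1 - ε₂) / (ε₁ * ε₂) + 1 / ε₁ + (1 + ε₁) / ε₁ := by
    set s := Real.sqrt ε₂ with hsdef
    set t := Real.sqrt (ε₁ * ε₂) with htdef
    have hts : t ≤ s := by
      rw [hsdef, htdef]
      exact Real.sqrt_le_sqrt (by nlinarith)
    have hc₂ : 1 / (ε₁ * s) = s / (ε₁ * ε₂) := by
      rw [div_eq_div_iff (by positivity) (by positivity)]
      nlinarith [hsqε₂]
    have hc₃ : 1 / t = t / (ε₁ * ε₂) := by
      rw [div_eq_div_iff (by positivity) (by positivity)]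
      nlinarith [hsqε₁₂]
    have hnum : (1 - ε₂) + (s + t) ≤ 2 * (1 - ε₂) + ε₂ + (1 + ε₁) * ε₂ := by
      nlinarith [sq_nonneg (1 - s), hsqε₂, hts, mul_pos hε₁0 hε₂0]
    calc (1 - ε₂) / (ε₁ * ε₂) + (1 / (ε₁ * s) + 1 / t)
        = ((1 - ε₂) + (s + t)) / (ε₁ * ε₂) := by rw [hc₂, hc₃]; ring
      _ ≤ (2 * (1 - ε₂) + ε₂ + (1 + ε₁) * ε₂) / (ε₁ * ε₂) :=
          (div_le_div_iff_of_pos_right (by positivity)).mpr hnum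
      _ = 2 * (1 - ε₂) / (ε₁ * ε₂) + 1 / ε₁ + (1 + ε₁) / ε₁ := by
          field_simp
  calc eLpNorm (fun ω => T1 ω + (T2 ω + Δg ω)) 2 P
      ≤ eLpNorm T1 2 P + (eLpNorm T2 2 P + eLpNorm Δg 2 P) := hsum
    _ ≤ ENNReal.ofReal ((1 - ε₂) / (ε₁ * ε₂)) * eLpNorm ΔY 2 P
        + (ENNReal.ofReal (1 / (ε₁ * Real.sqrt ε₂)) * eLpNorm ΔY 2 P
          + ENNReal.ofReal (1 / Real.sqrt (ε₁ * ε₂)) * eLpNorm ΔY 2 P) :=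
        add_le_add hN1 (add_le_add hN2 hN3)
    _ = ENNReal.ofReal ((1 - ε₂) / (ε₁ * ε₂)
          + (1 / (ε₁ * Real.sqrt ε₂) + 1 / Real.sqrt (ε₁ * ε₂))) * eLpNorm ΔY 2 P := by
        rw [ENNReal.ofReal_add hC₁0 (by positivity), ENNReal.ofReal_add (by positivity)
          (by positivity), add_mul, add_mul]
    _ ≤ ENNReal.ofReal (2 * (1 - ε₂) / (ε₁ * ε₂) + 1 / ε₁ + (1 + ε₁) / ε₁)
          * eLpNorm ΔY 2 P :=
        mul_le_mul_left (ENNReal.ofReal_le_ofReal harith) _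
end
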